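/- arXiv:1608.08282 — 14 statements merged into one kernel-verified Lean document; each statement's English description precedes it below -/
import Mathlib

section
/- Let k be a field, V a k-vector space, and T a linear transformation of V. Then T is triangularizable if and only if for every finite-dimensional subspace W of V there is a nonconstant polynomial p(x) ∈ k[x] that factors into linear terms in k[x] such that p(T) annihilates W (i.e., p(T)(w) = 0 for all w ∈ W). -/
universe u v w

open Polynomial


section Fwd
variable {k : Type u} {V : Type v} [Field k] [AddCommGroup V] [Module k V]

lemma aeval_eq_zero_of_dvd {T : Module.End k V} {p P : k[X]} (h : p ∣ P) {x : V}
    (hx : aeval T p x = 0) : aeval T P x = 0 := by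
  obtain ⟨c, rfl⟩ := h
  rw [mul_comm, map_mul, Module.End.mul_apply, hx, map_zero]

/-- The set of vectors annihilated by some nonzero split polynomial, as a submodule. -/
def annSub (T : Module.End k V) : Submodule k V where
  carrier := {x | ∃ p : k[X], p ≠ 0 ∧ p.Splits ∧ (aeval T p) x = 0}
  zero_mem' := ⟨1, one_ne_zero, Splits.one, by simp⟩
  add_mem' := by
    rintro x y ⟨p, hp0, hps, hpx⟩ ⟨q, hq0, hqs, hqy⟩
    refine ⟨p * q, mul_ne_zero hp0 hq0, Splits.mul hps hqs, ?_⟩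
    rw [map_add, aeval_eq_zero_of_dvd (dvd_mul_right p q) hpx,
      aeval_eq_zero_of_dvd (dvd_mul_left q p) hqy, add_zero]
  smul_mem' := by
    rintro c x ⟨p, hp0, hps, hpx⟩
    exact ⟨p, hp0, hps, by rw [map_smul, hpx, smul_zero]⟩

lemma forward_mem_annSub {T : Module.End k V}
    (h : ∃ (ι : Type w) (r : ι → ι → Prop) (b : Module.Basis ι k V),
      IsWellOrder ι r ∧ ∀ i, T (b i) ∈ Submodule.span k (⇑b '' {j | r j i ∨ j = i}))
    (v : V) : v ∈ annSub T := by
  classical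
  obtain ⟨ι, r, b, hwo, hb⟩ := h
  haveI := hwo
  have key : ∀ i, b i ∈ annSub T := by
    intro i
    induction i using IsWellFounded.induction r with
    | _ i ih =>
      set c := b.repr (T (b i)) i with hc
      have h1 : T (b i) - c • b i ∈ Submodule.span k (⇑b '' {j | r j i}) := by
        rw [Module.Basis.mem_span_image]
        intro j hj
        simp only [Finset.mem_coe, Finsupp.mem_support_iff, map_sub, map_smul,
          Module.Basis.repr_self, Finsupp.sub_apply, Finsupp.smul_apply, Finsupp.single_apply] at hj
        rcases eq_or_ne j i with rfl | hne
        · simp [hc] at hj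
        · have hj' : b.repr (T (b i)) j ≠ 0 := by
            rwa [if_neg (fun h => hne h.symm), smul_zero, sub_zero] at hj
          have := (Module.Basis.mem_span_image b).mp (hb i) (Finsupp.mem_support_iff.mpr hj')
          rcases this with h | h
          · exact h
          · exact absurd h hne
      have h2 : Submodule.span k (⇑b '' {j | r j i}) ≤ annSub T := by
        rw [Submodule.span_le]
        rintro _ ⟨j, hj, rfl⟩
        exact ih j hj
      obtain ⟨q, hq0, hqs, hq⟩ := h2 h1
      refine ⟨(X - C c) * q, mul_ne_zero (X_sub_C_ne_zero c) hq0,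
        Splits.mul (Splits.X_sub_C _) hqs, ?_⟩
      rw [mul_comm, map_mul, Module.End.mul_apply]
      have : (aeval T (X - C c)) (b i) = T (b i) - c • b i := by
        rw [map_sub, aeval_X, aeval_C, LinearMap.sub_apply, Module.algebraMap_end_apply]
      rw [this, hq]
  have : Submodule.span k (Set.range ⇑b) ≤ annSub T := by
    rw [Submodule.span_le]
    rintro _ ⟨i, rfl⟩
    exact key i
  exact this (by rw [b.span_eq]; trivial)

end Fwd

section Eig
variable {k : Type u} {V : Type v} [Field k] [AddCommGroup V] [Module k V] (T : Module.End k V)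

lemma exists_preimage_maxGen {lam μ : k} (h : μ ≠ lam) {w : V}
    (hw : w ∈ T.maxGenEigenspace lam) :
    ∃ u ∈ T.maxGenEigenspace lam, (T - μ • (1 : Module.End k V)) u = w := by
  obtain ⟨n, hn⟩ := (Module.End.mem_maxGenEigenspace T lam w).mp hw
  set N : Module.End k V := T - lam • 1 with hN
  set c : k := μ - lam with hcdef
  have hc : c ≠ 0 := sub_ne_zero.mpr h
  set u : V := ∑ j ∈ Finset.range n, c⁻¹ ^ (j + 1) • (N ^ j) w with hu
  have hmem : u ∈ T.maxGenEigenspace lam := by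
    rw [Module.End.mem_maxGenEigenspace]
    refine ⟨n, ?_⟩
    rw [hu, map_sum]
    refine Finset.sum_eq_zero fun j _ => ?_
    rw [map_smul]
    have : ((T - lam • 1) ^ n) ((N ^ j) w) = (N ^ j) ((N ^ n) w) := by
      rw [← hN, ← Module.End.mul_apply, ← Module.End.mul_apply, ← pow_add, ← pow_add, add_comm]
    rw [this, hn, map_zero, smul_zero]
  refine ⟨-u, neg_mem hmem, ?_⟩
  have hTmu : T - μ • (1 : Module.End k V) = N - c • 1 := by
    rw [hN, hcdef, sub_smul]; abel
  have key : (c • (1 : Module.End k V) - N) u = w := by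
    have hterm : ∀ j, (c • (1 : Module.End k V) - N) (c⁻¹ ^ (j + 1) • (N ^ j) w)
        = c⁻¹ ^ j • (N ^ j) w - c⁻¹ ^ (j + 1) • (N ^ (j + 1)) w := by
      intro j
      rw [LinearMap.sub_apply, LinearMap.smul_apply, Module.End.one_apply, smul_smul]
      congr 1
      · congr 1
        rw [pow_succ, mul_comm (c⁻¹ ^ j) c⁻¹, ← mul_assoc, mul_inv_cancel₀ hc, one_mul]
      · rw [map_smul, ← Module.End.mul_apply, ← pow_succ']
    rw [hu, map_sum, Finset.sum_congr rfl fun j _ => hterm j,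
      Finset.sum_range_sub' (fun j => c⁻¹ ^ j • (N ^ j) w), hn, smul_zero, sub_zero,
      pow_zero, pow_zero, one_smul, Module.End.one_apply]
  rw [hTmu, map_neg, ← neg_sub (c • (1 : Module.End k V)) N, LinearMap.neg_apply, neg_neg, key]

lemma mem_iSup_maxGen_step {μ : k} {x : V}
    (h : (T - μ • (1 : Module.End k V)) x ∈ ⨆ lam, T.maxGenEigenspace lam) :
    x ∈ ⨆ lam, T.maxGenEigenspace lam := by
  classical
  rw [Submodule.mem_iSup_iff_exists_finsupp] at h
  obtain ⟨f, hf, hsum⟩ := h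
  have hch : ∀ lam ∈ f.support.erase μ,
      ∃ u ∈ T.maxGenEigenspace lam, (T - μ • (1 : Module.End k V)) u = f lam := by
    intro lam hlam
    exact exists_preimage_maxGen T (Ne.symm (Finset.ne_of_mem_erase hlam)) (hf lam)
  choose! g hg1 hg2 using hch
  set x' : V := x - ∑ lam ∈ f.support.erase μ, g lam with hx'
  have hsum' : ∑ lam ∈ f.support, f lam = (T - μ • (1 : Module.End k V)) x := by
    rw [← hsum]; rfl
  have h1 : (T - μ • (1 : Module.End k V)) x' = f μ := by
    rw [hx', map_sub, map_sum, Finset.sum_congr rfl hg2]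
    by_cases hμ : μ ∈ f.support
    · rw [← Finset.add_sum_erase _ _ hμ] at hsum'
      rw [← hsum']; abel
    · rw [Finset.erase_eq_of_notMem hμ, hsum', sub_self, Finsupp.notMem_support_iff.mp hμ]
  have h2 : x' ∈ T.maxGenEigenspace μ := by
    obtain ⟨m, hm⟩ := (Module.End.mem_maxGenEigenspace T μ (f μ)).mp (hf μ)
    rw [Module.End.mem_maxGenEigenspace]
    exact ⟨m + 1, by rw [pow_succ, Module.End.mul_apply, h1, hm]⟩
  have : x = x' + ∑ lam ∈ f.support.erase μ, g lam := by rw [hx']; abel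
  rw [this]
  refine Submodule.add_mem _ (Submodule.mem_iSup_of_mem μ h2) (Submodule.sum_mem _ ?_)
  intro lam hlam
  exact Submodule.mem_iSup_of_mem lam (hg1 lam hlam)

lemma mem_iSup_maxGen_of_aeval_eq_zero :
    ∀ (n : ℕ) (p : k[X]), p.natDegree = n → p ≠ 0 → p.Splits →
      ∀ x : V, aeval T p x = 0 → x ∈ ⨆ lam, T.maxGenEigenspace lam := by
  intro n
  induction n using Nat.strong_induction_on with
  | _ n ih =>
    intro p hdeg hp0 hsplit x hx
    rcases eq_or_ne n 0 with rfl | hn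
    · have hp : p = C (p.coeff 0) := (Polynomial.eq_C_of_natDegree_eq_zero hdeg)
      have hc0 : p.coeff 0 ≠ 0 := fun h => hp0 (by rw [hp, h, map_zero])
      rw [hp, aeval_C, Module.algebraMap_end_apply] at hx
      rw [(smul_eq_zero.mp hx).resolve_left hc0]
      exact Submodule.zero_mem _
    · have hdeg0 : p.degree ≠ 0 := fun hq =>
        hn (by rw [← hdeg]; exact Polynomial.natDegree_eq_zero_iff_degree_le_zero.mpr hq.le)
      obtain ⟨μ, hroot⟩ := Polynomial.Splits.exists_eval_eq_zero hsplit hdeg0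
      have hdvd : X - C μ ∣ p := Polynomial.dvd_iff_isRoot.mpr (by simpa using hroot)
      obtain ⟨q, hq⟩ := hdvd
      have hq0 : q ≠ 0 := fun h => hp0 (by rw [hq, h, mul_zero])
      have hqs : q.Splits :=
        Polynomial.Splits.of_dvd hsplit hp0 (Dvd.intro_left _ hq.symm)
      have hqdeg : q.natDegree < n := by
        have : p.natDegree = 1 + q.natDegree := by
          rw [hq, Polynomial.natDegree_mul (X_sub_C_ne_zero μ) hq0, Polynomial.natDegree_X_sub_C]
        omega
      have hXC : aeval T (X - C μ) = T - μ • (1 : Module.End k V) := by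
        rw [map_sub, aeval_X, aeval_C, Module.algebraMap_end_eq_smul_id]; rfl
      have hw : aeval T q ((T - μ • (1 : Module.End k V)) x) = 0 := by
        rw [← hXC, ← Module.End.mul_apply, ← map_mul, mul_comm, ← hq, hx]
      exact mem_iSup_maxGen_step T (ih q.natDegree hqdeg q rfl hq0 hqs _ hw)

end Eig
open Polynomial

section Helpers
variable {k : Type u} {V : Type v} [Field k] [AddCommGroup V] [Module k V]

lemma exists_compl_between {A B : Submodule k V} (h : A ≤ B) :
    ∃ C : Submodule k V, C ≤ B ∧ A ⊓ C = ⊥ ∧ A ⊔ C = B := by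
  obtain ⟨C', hC'⟩ := Submodule.exists_isCompl (A.comap B.subtype)
  refine ⟨C'.map B.subtype, Submodule.map_subtype_le B C', ?_, ?_⟩
  · have : A = (A.comap B.subtype).map B.subtype := by
      rw [Submodule.map_comap_subtype, inf_eq_right.mpr h]
    rw [this, ← Submodule.map_inf _ (Submodule.injective_subtype B), hC'.inf_eq_bot,
      Submodule.map_bot]
  · have : A = (A.comap B.subtype).map B.subtype := by
      rw [Submodule.map_comap_subtype, inf_eq_right.mpr h]
    rw [this, ← Submodule.map_sup, hC'.sup_eq_top, Submodule.map_top, Submodule.range_subtype]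

lemma sigmaLex_wellFounded {ι : Type*} {α : ι → Type*} {r : ι → ι → Prop}
    {s : ∀ i, α i → α i → Prop} (hr : WellFounded r) (hs : ∀ i, WellFounded (s i)) :
    WellFounded (Sigma.Lex r s) := by
  have hwf : WellFounded (Function.onFun (PSigma.Lex r s) fun x : Σ i, α i => (⟨x.1, x.2⟩ : Σ' i, α i)) :=
    (WellFounded.psigma_lex hr hs).onFun
  refine Subrelation.wf ?_ hwf
  rintro a b (⟨a', b', hab⟩ | ⟨a', b', hab⟩)
  · exact PSigma.Lex.left _ _ hab
  · exact PSigma.Lex.right _ hab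

lemma sigmaLex_isWellOrder {ι : Type*} {α : ι → Type*} (r : ι → ι → Prop)
    (s : ∀ i, α i → α i → Prop) [IsWellOrder ι r] [∀ i, IsWellOrder (α i) (s i)] :
    IsWellOrder (Σ i, α i) (Sigma.Lex r s) := by
  haveI : IsWellFounded (Σ i, α i) (Sigma.Lex r s) :=
    ⟨sigmaLex_wellFounded (IsWellFounded.wf) fun i => IsWellFounded.wf⟩
  constructor

/-- transporting a triangular basis along reindexing to get an index type in the right
universe -/
lemma triangularizable_of_basis {T : Module.End k V} {ι : Type w} (r : ι → ι → Prop)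
    (b : Module.Basis ι k V) (hwo : IsWellOrder ι r)
    (hb : ∀ i, T (b i) ∈ Submodule.span k (⇑b '' {j | r j i ∨ j = i})) :
    ∃ (ι' : Type v) (r' : ι' → ι' → Prop) (b' : Module.Basis ι' k V),
      IsWellOrder ι' r' ∧ ∀ i, T (b' i) ∈ Submodule.span k (⇑b' '' {j | r' j i ∨ j = i}) := by
  haveI := hwo
  let e : ι ≃ Set.range ⇑b := Equiv.ofInjective ⇑b b.injective
  let r' : Set.range ⇑b → Set.range ⇑b → Prop := fun x y => r (e.symm x) (e.symm y)
  refine ⟨Set.range ⇑b, r', b.reindex e, ?_, ?_⟩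
  · exact RelEmbedding.isWellOrder ⟨e.symm.toEmbedding, Iff.rfl⟩
  · intro i
    rw [Module.Basis.reindex_apply]
    refine Submodule.span_mono ?_ (hb (e.symm i))
    rintro _ ⟨j, hj, rfl⟩
    refine ⟨e j, ?_, ?_⟩
    · rcases hj with hj | hj
      · left; show r (e.symm (e j)) (e.symm i); rwa [e.symm_apply_apply]
      · right; rw [hj]; simp
    · rw [Module.Basis.reindex_apply, e.symm_apply_apply]

end Helpers
section Conv
variable {k : Type u} {V : Type v} [Field k] [AddCommGroup V] [Module k V] (T : Module.End k V)

lemma converse_triangularizable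
    (htop : (⨆ μ : k, T.maxGenEigenspace μ) = ⊤) :
    ∃ (ι' : Type v) (r' : ι' → ι' → Prop) (b' : Module.Basis ι' k V),
      IsWellOrder ι' r' ∧ ∀ i, T (b' i) ∈ Submodule.span k (⇑b' '' {j | r' j i ∨ j = i}) := by
  classical
  set Kk : k → ℕ → Submodule k V := fun μ n => LinearMap.ker ((T - μ • (1:Module.End k V))^n)
    with hKk
  have hKmono : ∀ (μ : k) {m n : ℕ}, m ≤ n → Kk μ m ≤ Kk μ n := by
    intro μ m n hmn x hx
    obtain ⟨d, rfl⟩ := Nat.exists_eq_add_of_le hmn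
    simp only [hKk, LinearMap.mem_ker] at hx ⊢
    rw [add_comm, pow_add, Module.End.mul_apply, hx, map_zero]
  have hK0 : ∀ μ, Kk μ 0 = ⊥ := by intro μ; simp [hKk, Module.End.one_eq_id]
  have hKsup : ∀ μ, (⨆ n, Kk μ n) = T.maxGenEigenspace μ := by
    intro μ
    ext x
    have hdir : Directed (· ≤ ·) (Kk μ) :=
      Monotone.directed_le fun m n hmn => hKmono μ hmn
    rw [Submodule.mem_iSup_of_directed _ hdir, Module.End.mem_maxGenEigenspace]
    simp only [hKk, LinearMap.mem_ker]
  have hDex : ∀ μ n, ∃ C : Submodule k V,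
      C ≤ Kk μ (n+1) ∧ Kk μ n ⊓ C = ⊥ ∧ Kk μ n ⊔ C = Kk μ (n+1) :=
    fun μ n => exists_compl_between (hKmono μ (Nat.le_succ n))
  choose D hD1 hD2 hD3 using hDex
  set Ba : ∀ (μ : k) (n : ℕ), Module.Basis (Module.Basis.ofVectorSpaceIndex k ↥(D μ n)) k ↥(D μ n) :=
    fun μ n => Module.Basis.ofVectorSpace k ↥(D μ n) with hBa
  set f : ∀ μ : k, (Σ n : ℕ, Module.Basis.ofVectorSpaceIndex k ↥(D μ n)) → V :=
    fun μ x => ↑(Ba μ x.1 x.2) with hf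
  set vv : (Σ μ : k, Σ n : ℕ, Module.Basis.ofVectorSpaceIndex k ↥(D μ n)) → V :=
    fun a => f a.1 a.2 with hvv
  have hDspan : ∀ μ n, Submodule.span k
      (Set.range fun i : Module.Basis.ofVectorSpaceIndex k ↥(D μ n) => ((Ba μ n i : V))) = D μ n := by
    intro μ n
    have h1 : (Set.range fun i : Module.Basis.ofVectorSpaceIndex k ↥(D μ n) => ((Ba μ n i : V)))
        = (D μ n).subtype '' Set.range (Ba μ n) := by
      rw [← Set.range_comp]; rfl
    rw [h1, Submodule.span_image, Module.Basis.span_eq, Submodule.map_top, Submodule.range_subtype]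
  have hKQ : ∀ μ n (Q : Submodule k V), (∀ m, m < n → D μ m ≤ Q) → Kk μ n ≤ Q := by
    intro μ n
    induction n with
    | zero => intro Q _; rw [hK0]; exact bot_le
    | succ n ih =>
      intro Q hQ
      rw [← hD3 μ n]
      exact sup_le (ih Q fun m hm => hQ m (hm.trans (Nat.lt_succ_self n)))
        (hQ n (Nat.lt_succ_self n))
  have hdisj : ∀ (μ : k) (N n : ℕ) (t : Set ℕ), t.Finite → (∀ m ∈ t, m < N) → n < N → n ∉ t →
      Disjoint (D μ n) (⨆ m ∈ t, D μ m) := by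
    intro μ N
    induction N with
    | zero => intro n t _ _ h; omega
    | succ N ih =>
      intro n t ht hmt hn hnt
      by_cases hNt : N ∈ t
      · have hnN : n ≠ N := fun h => hnt (h ▸ hNt)
        have hn' : n < N := lt_of_le_of_ne (Nat.lt_succ_iff.mp hn) hnN
        set X := ⨆ m ∈ (t \ {N} : Set ℕ), D μ m with hX
        have hXle : X ≤ Kk μ N := by
          refine iSup₂_le fun m hm => (hD1 μ m).trans (hKmono μ ?_)
          have h1 := hmt m hm.1
          have h2 : m ≠ N := hm.2
          omega
        have hrw : (⨆ m ∈ t, D μ m) = D μ N ⊔ X := by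
          conv_lhs => rw [show t = insert N (t \ {N}) by
            rw [Set.insert_diff_singleton, Set.insert_eq_of_mem hNt]]
          rw [iSup_insert]
        rw [hrw, disjoint_iff]
        have hstep : D μ n ⊓ (D μ N ⊔ X) ≤ D μ n ⊓ X := by
          refine le_inf inf_le_left ?_
          calc D μ n ⊓ (D μ N ⊔ X) ≤ Kk μ N ⊓ (D μ N ⊔ X) :=
                inf_le_inf_right _ ((hD1 μ n).trans (hKmono μ (by omega)))
            _ = (X ⊔ D μ N) ⊓ Kk μ N := by rw [inf_comm, sup_comm]
            _ = X ⊔ (D μ N ⊓ Kk μ N) := sup_inf_assoc_of_le _ hXle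
            _ = X := by rw [inf_comm (D μ N), hD2 μ N, sup_bot_eq]
        have hIH : Disjoint (D μ n) X :=
          ih n (t \ {N}) (ht.subset Set.diff_subset)
            (fun m hm => by
              have h1 := hmt m hm.1
              have h2 : m ≠ N := hm.2
              omega)
            hn' (fun h => hnt h.1)
        exact le_bot_iff.mp (hstep.trans hIH.le_bot)
      · by_cases hnN : n = N
        · have hle : (⨆ m ∈ t, D μ m) ≤ Kk μ n := by
            refine iSup₂_le fun m hm => (hD1 μ m).trans (hKmono μ ?_)
            have h1 := hmt m hm
            have h2 : m ≠ N := fun h => hNt (h ▸ hm)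
            omega
          exact Disjoint.mono_right hle (disjoint_iff.mpr (hD2 μ n)).symm
        · exact ih n t ht
            (fun m hm => lt_of_le_of_ne (Nat.lt_succ_iff.mp (hmt m hm)) (fun h => hNt (h ▸ hm)))
            (lt_of_le_of_ne (Nat.lt_succ_iff.mp hn) hnN) hnt
  have hfspan : ∀ μ, Submodule.span k (Set.range (f μ)) = T.maxGenEigenspace μ := by
    intro μ
    apply le_antisymm
    · rw [Submodule.span_le]
      rintro _ ⟨⟨n, i⟩, rfl⟩
      have hm : f μ ⟨n, i⟩ ∈ D μ n := (Ba μ n i).2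
      exact ((hD1 μ n).trans ((hKsup μ) ▸ le_iSup (Kk μ) (n+1))) hm
    · rw [← hKsup μ]
      refine iSup_le fun n => hKQ μ n _ fun m hm => ?_
      rw [← hDspan μ m, Submodule.span_le]
      rintro _ ⟨i, rfl⟩
      exact Submodule.subset_span ⟨⟨m, i⟩, rfl⟩
  have hinner : ∀ μ, LinearIndependent k (f μ) := by
    intro μ
    refine linearIndependent_iUnion_finite
      (f := fun (n : ℕ) (i : Module.Basis.ofVectorSpaceIndex k ↥(D μ n)) => ((Ba μ n i : V))) ?_ ?_
    · intro n
      exact (Ba μ n).linearIndependent.map' (D μ n).subtype (Submodule.ker_subtype _)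
    · intro n t htfin hnt
      rw [hDspan μ n]
      have e2 : (⨆ m ∈ t, Submodule.span k
          (Set.range fun i : Module.Basis.ofVectorSpaceIndex k ↥(D μ m) => ((Ba μ m i : V))))
          = ⨆ m ∈ t, D μ m :=
        iSup_congr fun m => iSup_congr fun _ => hDspan μ m
      rw [e2]
      obtain ⟨N0, hN0⟩ := htfin.bddAbove
      exact hdisj μ (max N0 n + 1) n t htfin
        (fun m hm => by have := hN0 hm; omega) (by omega) hnt
  have hli : LinearIndependent k vv := linearIndependent_iUnion_finite (f := f) hinner (by
    intro μ t htfin hμt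
    rw [hfspan μ]
    have e2 : (⨆ ν ∈ t, Submodule.span k (Set.range (f ν))) = ⨆ ν ∈ t, T.maxGenEigenspace ν :=
      iSup_congr fun ν => iSup_congr fun _ => hfspan ν
    rw [e2]
    refine Disjoint.mono_right ?_ (T.independent_maxGenEigenspace μ)
    exact iSup₂_le fun ν hν =>
      le_iSup₂ (f := fun (ν : k) (_ : ν ≠ μ) => T.maxGenEigenspace ν) ν (fun h => hμt (h ▸ hν)))
  have hspanv : ⊤ ≤ Submodule.span k (Set.range vv) := by
    rw [← htop]
    refine iSup_le fun μ => ?_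
    rw [← hfspan μ]
    refine Submodule.span_le.mpr ?_
    rintro _ ⟨x, rfl⟩
    exact Submodule.subset_span ⟨⟨μ, x⟩, rfl⟩
  set b := Module.Basis.mk hli hspanv with hb
  set r : (Σ μ : k, Σ n : ℕ, Module.Basis.ofVectorSpaceIndex k ↥(D μ n)) →
      (Σ μ : k, Σ n : ℕ, Module.Basis.ofVectorSpaceIndex k ↥(D μ n)) → Prop :=
    Sigma.Lex WellOrderingRel
      (fun μ => Sigma.Lex (· < ·) (fun n => @WellOrderingRel (Module.Basis.ofVectorSpaceIndex k ↥(D μ n))))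
    with hr
  haveI hinner_wo : ∀ μ : k, IsWellOrder (Σ n : ℕ, Module.Basis.ofVectorSpaceIndex k ↥(D μ n))
      (Sigma.Lex (· < ·) (fun n => @WellOrderingRel (Module.Basis.ofVectorSpaceIndex k ↥(D μ n)))) :=
    fun μ => sigmaLex_isWellOrder _ _
  have hwo : IsWellOrder _ r := sigmaLex_isWellOrder _ _
  refine triangularizable_of_basis r b hwo ?_
  rintro ⟨μ, n, x⟩
  have hbe : ∀ a, b a = vv a := fun a => Module.Basis.mk_apply hli hspanv a
  have hmem : vv ⟨μ, n, x⟩ ∈ D μ n := (Ba μ n x).2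
  have h1 : T (vv ⟨μ, n, x⟩) - μ • vv ⟨μ, n, x⟩ ∈ Kk μ n := by
    have h2 : vv ⟨μ, n, x⟩ ∈ Kk μ (n+1) := hD1 μ n hmem
    simp only [hKk, LinearMap.mem_ker] at h2 ⊢
    have heq : T (vv ⟨μ, n, x⟩) - μ • vv ⟨μ, n, x⟩
        = (T - μ • (1:Module.End k V)) (vv ⟨μ, n, x⟩) := by
      simp [LinearMap.sub_apply]
    rw [heq, ← Module.End.mul_apply, ← pow_succ, h2]
  have h2 : Kk μ n ≤ Submodule.span k (⇑b '' {j | r j ⟨μ, n, x⟩}) := by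
    refine hKQ μ n _ fun m hm => ?_
    rw [← hDspan μ m, Submodule.span_le]
    rintro _ ⟨i, rfl⟩
    refine Submodule.subset_span ⟨⟨μ, m, i⟩, ?_, ?_⟩
    · exact Sigma.Lex.right _ _ (Sigma.Lex.left _ _ hm)
    · rw [hbe]
  have h3 : T (b ⟨μ, n, x⟩) = (T (vv ⟨μ, n, x⟩) - μ • vv ⟨μ, n, x⟩) + μ • b ⟨μ, n, x⟩ := by
    rw [hbe]; abel
  rw [h3]
  refine Submodule.add_mem _ ?_ ?_
  · exact Submodule.span_mono (Set.image_mono fun j hj => Or.inl hj) (h2 h1)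
  · exact Submodule.smul_mem _ _ (Submodule.subset_span ⟨⟨μ, n, x⟩, Or.inr rfl, rfl⟩)

end Conv

/-- A linear transformation `T` is *triangularizable* if `V` has a basis `b` indexed by a
well-ordered set (with strict order `r`) such that `T (b i)` lies in the span of
`{b j : j ≤ i}` for every index `i`. -/
def Triangularizable {k : Type u} {V : Type v} [Field k] [AddCommGroup V] [Module k V]
    (T : Module.End k V) : Prop :=
  ∃ (ι : Type v) (r : ι → ι → Prop) (b : Module.Basis ι k V),
    IsWellOrder ι r ∧ ∀ i, T (b i) ∈ Submodule.span k (⇑b '' {j | r j i ∨ j = i})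

/-- `T` is triangularizable iff every finite-dimensional subspace `W` of `V` is annihilated
by `p(T)` for some nonconstant polynomial `p` that factors into linear terms in `k[x]`. -/
theorem triangularizable_iff_forall_finiteDimensional_annihilated
    {k : Type u} {V : Type v} [Field k] [AddCommGroup V] [Module k V]
    (T : Module.End k V) :
    Triangularizable T ↔
      ∀ W : Submodule k V, FiniteDimensional k W →
        ∃ p : k[X], p.natDegree ≠ 0 ∧ p.Splits ∧
          ∀ w ∈ W, (aeval T p) w = 0 := by
  constructor
  · intro htri W hW
    classical
    have hall : ∀ x : V, x ∈ annSub T := forward_mem_annSub htri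
    obtain ⟨s, hs⟩ := (Submodule.fg_iff_finiteDimensional W).mpr hW
    choose P hP0 hPs hPann using hall
    refine ⟨X * ∏ w ∈ s, P w, ?_, ?_, ?_⟩
    · have hprod0 : (∏ w ∈ s, P w) ≠ 0 := Finset.prod_ne_zero_iff.mpr fun w _ => hP0 w
      rw [Polynomial.natDegree_mul X_ne_zero hprod0, natDegree_X]
      omega
    · exact Splits.mul (Splits.X) (Splits.prod fun w _ => hPs w)
    · intro w hw
      have hker : W ≤ LinearMap.ker (aeval T (∏ w ∈ s, P w)) := by
        rw [← hs, Submodule.span_le]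
        intro x hx
        rw [SetLike.mem_coe, LinearMap.mem_ker]
        exact aeval_eq_zero_of_dvd (Finset.dvd_prod_of_mem P (Finset.mem_coe.mp hx)) (hPann x)
      rw [map_mul, Module.End.mul_apply, LinearMap.mem_ker.mp (hker hw), map_zero]
  · intro hyp
    have htop : (⨆ μ : k, T.maxGenEigenspace μ) = ⊤ := by
      rw [eq_top_iff]
      intro x _
      have hWfd : FiniteDimensional k ↥(Submodule.span k ({x} : Set V)) :=
        FiniteDimensional.span_of_finite k (Set.finite_singleton x)
      obtain ⟨p, hdeg, hsplit, hann⟩ := hyp (Submodule.span k {x}) hWfd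
      exact mem_iSup_maxGen_of_aeval_eq_zero T p.natDegree p rfl
        (fun h0 => hdeg (by rw [h0, natDegree_zero]))
        hsplit x (hann x (Submodule.mem_span_singleton_self x))
    obtain ⟨ι', r', b', hwo, hb⟩ := converse_triangularizable T htop
    exact ⟨ι', r', b', hwo, hb⟩
end

section
/- Let k be a field, V a k-vector space, and T a linear transformation of V. Then T is triangularizable if and only if there exists a set X of T-invariant subspaces of V that is well-ordered by set inclusion and that is maximal as a well-ordered set of subspaces of V, i.e., every subspace W of V such that X ∪ {W} is well-ordered by inclusion already belongs to X. -/
universe u v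

open Polynomial

/-- A set of subspaces of `V` is well-ordered by inclusion if inclusion is a total order on it
in which every nonempty subset has a least element. -/
def WellOrderedByInclusion {k : Type u} {V : Type v} [Field k] [AddCommGroup V] [Module k V]
    (X : Set (Submodule k V)) : Prop :=
  (∀ A ∈ X, ∀ B ∈ X, A ≤ B ∨ B ≤ A) ∧
    ∀ Y ⊆ X, Y.Nonempty → ∃ A ∈ Y, ∀ B ∈ Y, A ≤ B

/-- If `W` is comparable with everything in a set `X` that is well-ordered by inclusion, then
`insert W X` is also well-ordered by inclusion. -/
lemma insert_wellOrderedByInclusion {k : Type u} {V : Type v} [Field k] [AddCommGroup V]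
    [Module k V] {X : Set (Submodule k V)} (hX : WellOrderedByInclusion X)
    (W : Submodule k V) (hcomp : ∀ B ∈ X, W ≤ B ∨ B ≤ W) :
    WellOrderedByInclusion (insert W X) := by
  obtain ⟨htot, hwo⟩ := hX
  constructor
  · rintro A hA B hB
    rcases hA with rfl | hA
    · rcases hB with rfl | hB
      · exact Or.inl le_rfl
      · exact hcomp B hB
    · rcases hB with rfl | hB
      · exact (hcomp A hA).symm
      · exact htot A hA B hB
  · intro Y hY hYne
    by_cases hY' : (Y \ {W}).Nonempty
    · have hY'X : Y \ {W} ⊆ X := by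
        rintro x ⟨hxY, hxW⟩
        rcases hY hxY with rfl | hx
        · exact absurd rfl hxW
        · exact hx
      obtain ⟨A, hAY', hAle⟩ := hwo _ hY'X hY'
      rcases hcomp A (hY'X hAY') with h | h
      · by_cases hWY : W ∈ Y
        · refine ⟨W, hWY, ?_⟩
          intro B hB
          by_cases hBW : B = W
          · exact hBW ▸ le_rfl
          · exact h.trans (hAle B ⟨hB, hBW⟩)
        · refine ⟨A, hAY'.1, ?_⟩
          intro B hB
          have hBW : B ≠ W := fun he => hWY (he ▸ hB)
          exact hAle B ⟨hB, hBW⟩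
      · refine ⟨A, hAY'.1, ?_⟩
        intro B hB
        by_cases hBW : B = W
        · exact hBW ▸ h
        · exact hAle B ⟨hB, hBW⟩
    · obtain ⟨x, hx⟩ := hYne
      have hxW : x = W := by
        by_contra h
        exact hY' ⟨x, hx, h⟩
      refine ⟨x, hx, ?_⟩
      intro B hB
      have hBW : B = W := by
        by_contra h
        exact hY' ⟨B, hB, h⟩
      rw [hxW, hBW]

/-- `T` is triangularizable iff there is a set of `T`-invariant subspaces of `V` that is
well-ordered by inclusion and maximal as a well-ordered set of subspaces of `V`. -/
theorem triangularizable_iff_exists_maximal_wellOrdered_invariant_set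
    {k : Type u} {V : Type v} [Field k] [AddCommGroup V] [Module k V]
    (T : Module.End k V) :
    Triangularizable T ↔
      ∃ X : Set (Submodule k V),
        (∀ A ∈ X, ∀ v ∈ A, T v ∈ A) ∧ WellOrderedByInclusion X ∧
          ∀ W : Submodule k V, WellOrderedByInclusion (insert W X) → W ∈ X := by
  constructor
  · -- forward direction
    rintro ⟨ι, r, b, hwor, htri⟩
    haveI := hwor
    set L : Set (Set ι) := {S | ∀ ⦃i j : ι⦄, r j i → i ∈ S → j ∈ S} with hL
    refine ⟨(fun S => Submodule.span k (⇑b '' S)) '' L, ?_, ⟨?_, ?_⟩, ?_⟩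
    · -- invariance
      rintro _ ⟨S, hS, rfl⟩ x hx
      have hmap : Submodule.map T (Submodule.span k (⇑b '' S)) ≤ Submodule.span k (⇑b '' S) := by
        rw [Submodule.map_span, Submodule.span_le]
        rintro _ ⟨_, ⟨i, hiS, rfl⟩, rfl⟩
        have hsub : {j | r j i ∨ j = i} ⊆ S := by
          rintro j (hj | rfl)
          · exact hS hj hiS
          · exact hiS
        exact Submodule.span_mono (Set.image_mono hsub) (htri i)
      exact hmap ⟨x, hx, rfl⟩
    · -- totality
      rintro _ ⟨S₁, hS₁, rfl⟩ _ ⟨S₂, hS₂, rfl⟩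
      have h : S₁ ⊆ S₂ ∨ S₂ ⊆ S₁ := by
        by_cases h : S₁ ⊆ S₂
        · exact Or.inl h
        · right
          obtain ⟨i, hi1, hi2⟩ := Set.not_subset.mp h
          intro j hj
          rcases trichotomous_of r j i with h' | h' | h'
          · exact hS₁ h' hi1
          · exact absurd (h' ▸ hj) hi2
          · exact absurd (hS₂ h' hj) hi2
      rcases h with h | h
      · exact Or.inl (Submodule.span_mono (Set.image_mono h))
      · exact Or.inr (Submodule.span_mono (Set.image_mono h))
    · -- well-ordering
      intro Y hYX hYne
      set 𝒮 : Set (Set ι) := {S | S ∈ L ∧ Submodule.span k (⇑b '' S) ∈ Y} with h𝒮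
      by_cases hD : (⋃ S ∈ 𝒮, Sᶜ).Nonempty
      · have hi₀mem := (IsWellFounded.wf (r := r)).min_mem _ hD
        set i₀ := (IsWellFounded.wf (r := r)).min _ hD with hi₀
        rw [Set.mem_iUnion₂] at hi₀mem
        obtain ⟨S₀, hS₀𝒮, hi₀S₀⟩ := hi₀mem
        have hleast : ∀ S ∈ 𝒮, S₀ ⊆ S := by
          intro S hS j hj
          by_contra hjS
          have hjD : j ∈ ⋃ S ∈ 𝒮, Sᶜ := Set.mem_iUnion₂.mpr ⟨S, hS, hjS⟩
          have hrji : r j i₀ := by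
            rcases trichotomous_of r j i₀ with h | h | h
            · exact h
            · exact absurd (h ▸ hj) hi₀S₀
            · exact absurd (hS₀𝒮.1 h hj) hi₀S₀
          exact (IsWellFounded.wf (r := r)).not_lt_min _ hjD hrji
        refine ⟨Submodule.span k (⇑b '' S₀), hS₀𝒮.2, ?_⟩
        rintro B hB
        obtain ⟨S, hS, rfl⟩ := hYX hB
        exact Submodule.span_mono (Set.image_mono (hleast S ⟨hS, hB⟩))
      · obtain ⟨W, hW⟩ := hYne
        obtain ⟨S₀, hS₀, rfl⟩ := hYX hW
        refine ⟨Submodule.span k (⇑b '' S₀), hW, ?_⟩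
        intro B hB
        obtain ⟨S, hS, rfl⟩ := hYX hB
        have hsub : S₀ ⊆ S := by
          intro j _
          by_contra hjS
          exact hD ⟨j, Set.mem_iUnion₂.mpr ⟨S, ⟨hS, hB⟩, hjS⟩⟩
        exact Submodule.span_mono (Set.image_mono hsub)
    · -- maximality
      intro W hWins
      set S₀ : Set ι := {i | Submodule.span k (⇑b '' {j | r j i ∨ j = i}) ≤ W} with hS₀def
      have hS₀L : S₀ ∈ L := by
        intro i j hji hi
        refine le_trans (Submodule.span_mono (Set.image_mono ?_)) hi
        rintro x (hx | rfl)
        · exact Or.inl (IsTrans.trans _ _ _ hx hji)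
        · exact Or.inl hji
      have hS₀W : Submodule.span k (⇑b '' S₀) ≤ W := by
        rw [Submodule.span_le]
        rintro _ ⟨i, hiS, rfl⟩
        exact hiS (Submodule.subset_span ⟨i, Or.inr rfl, rfl⟩)
      rcases eq_or_lt_of_le hS₀W with heq | hlt
      · exact ⟨S₀, hS₀L, heq⟩
      · by_cases hSu : S₀ = Set.univ
        · exfalso
          have : Submodule.span k (⇑b '' S₀) = ⊤ := by
            rw [hSu, Set.image_univ, b.span_eq]
          exact not_top_lt (this ▸ hlt)
        · have hc : S₀ᶜ.Nonempty := Set.nonempty_compl.mpr hSu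
          have hi₀c := (IsWellFounded.wf (r := r)).min_mem _ hc
          set i₀ := (IsWellFounded.wf (r := r)).min _ hc with hi₀
          have hmin : ∀ j, r j i₀ → j ∈ S₀ := by
            intro j hj
            by_contra hjS
            exact (IsWellFounded.wf (r := r)).not_lt_min _ hjS hj
          have hS₁L : insert i₀ S₀ ∈ L := by
            intro i j hji hi
            rcases hi with rfl | hi
            · exact Set.mem_insert_iff.mpr (Or.inr (hmin j hji))
            · exact Set.mem_insert_iff.mpr (Or.inr (hS₀L hji hi))
          have hcomp := hWins.1 W (Set.mem_insert _ _)
            (Submodule.span k (⇑b '' insert i₀ S₀))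
            (Set.mem_insert_of_mem _ ⟨insert i₀ S₀, hS₁L, rfl⟩)
          rcases hcomp with h | h
          · -- W ≤ span (insert)
            obtain ⟨x, hxW, hxS₀⟩ := SetLike.exists_of_lt hlt
            have hx1 : x ∈ Submodule.span k (⇑b '' insert i₀ S₀) := h hxW
            rw [Set.image_insert_eq, Submodule.span_insert] at hx1
            obtain ⟨z, hz, y, hy, rfl⟩ := Submodule.mem_sup.mp hx1
            obtain ⟨c, rfl⟩ := Submodule.mem_span_singleton.mp hz
            have hc : c ≠ 0 := by
              rintro rfl
              rw [zero_smul, zero_add] at hxS₀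
              exact hxS₀ hy
            have hbi₀ : b i₀ ∈ W := by
              have hyW : y ∈ W := hS₀W hy
              have : c • b i₀ ∈ W := by
                have := W.sub_mem hxW hyW
                simpa using this
              have := W.smul_mem c⁻¹ this
              rwa [inv_smul_smul₀ hc] at this
            have hle' : Submodule.span k (⇑b '' insert i₀ S₀) ≤ W := by
              rw [Submodule.span_le]
              rintro _ ⟨i, hi, rfl⟩
              rcases hi with rfl | hi
              · exact hbi₀
              · exact hS₀W (Submodule.subset_span ⟨i, hi, rfl⟩)
            exact ⟨insert i₀ S₀, hS₁L, (le_antisymm hle' h)⟩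
          · -- span (insert) ≤ W gives i₀ ∈ S₀, contradiction
            exfalso
            apply hi₀c
            show i₀ ∈ S₀
            refine le_trans (Submodule.span_mono (Set.image_mono ?_)) h
            rintro x (hx | rfl)
            · exact Set.mem_insert_iff.mpr (Or.inr (hmin x hx))
            · exact Set.mem_insert _ _
  · -- backward direction
    rintro ⟨X, hinv, ⟨htot, hwo⟩, hmax⟩
    have htop : (⊤ : Submodule k V) ∈ X := by
      apply hmax
      exact insert_wellOrderedByInclusion ⟨htot, hwo⟩ ⊤ (fun B _ => Or.inr le_top)
    have hsupX : ∀ Y ⊆ X, sSup Y ∈ X := by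
      intro Y hYX
      apply hmax
      apply insert_wellOrderedByInclusion ⟨htot, hwo⟩
      intro B hB
      by_cases h : ∀ C ∈ Y, C ≤ B
      · exact Or.inl (sSup_le h)
      · push_neg at h
        obtain ⟨C, hCY, hCB⟩ := h
        rcases htot B hB C (hYX hCY) with h' | h'
        · exact Or.inr (h'.trans (le_sSup hCY))
        · exact absurd h' hCB
    have hsucc : ∀ A : {A : Submodule k V // A ∈ X ∧ A ≠ ⊤},
        ∃ B, B ∈ X ∧ A.1 < B ∧ ∀ C ∈ X, A.1 < C → B ≤ C := by
      intro A
      obtain ⟨B, hBmem, hBle⟩ := hwo {B | B ∈ X ∧ ¬ B ≤ A.1} (fun B hB => hB.1)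
        ⟨⊤, htop, fun h => A.2.2 (top_le_iff.mp h)⟩
      refine ⟨B, hBmem.1, ?_, ?_⟩
      · rcases htot A.1 A.2.1 B hBmem.1 with h | h
        · exact lt_of_le_of_ne h (fun he => hBmem.2 he.ge)
        · exact absurd h hBmem.2
      · intro C hC hAC
        exact hBle C ⟨hC, fun h => hAC.not_ge h⟩
    choose succ hsX hslt hsle using hsucc
    have hv : ∀ A : {A : Submodule k V // A ∈ X ∧ A ≠ ⊤}, ∃ x, x ∈ succ A ∧ x ∉ A.1 :=
      fun A => SetLike.exists_of_lt (hslt A)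
    choose v hv1 hv2 using hv
    have hseq : ∀ A, succ A = A.1 ⊔ Submodule.span k {v A} := by
      intro A
      have hWle : A.1 ⊔ Submodule.span k {v A} ≤ succ A :=
        sup_le (hslt A).le (Submodule.span_le.mpr (Set.singleton_subset_iff.mpr (hv1 A)))
      have hAW : A.1 ≤ A.1 ⊔ Submodule.span k {v A} := le_sup_left
      have hWX : A.1 ⊔ Submodule.span k {v A} ∈ X := by
        apply hmax
        apply insert_wellOrderedByInclusion ⟨htot, hwo⟩
        intro B hB
        rcases htot B hB A.1 A.2.1 with h | h
        · exact Or.inr (h.trans hAW)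
        · rcases h.lt_or_eq with h' | h'
          · exact Or.inl (hWle.trans (hsle A B hB h'))
          · exact Or.inr (h' ▸ hAW)
      have hvW : v A ∈ A.1 ⊔ Submodule.span k {v A} :=
        Submodule.mem_sup_right (Submodule.mem_span_singleton_self _)
      have hAltW : A.1 < A.1 ⊔ Submodule.span k {v A} :=
        lt_of_le_of_ne hAW (fun he => hv2 A (he ▸ hvW))
      exact le_antisymm (hsle A _ hWX hAltW) hWle
    have key : ∀ B ∈ X, B ≤ Submodule.span k
        (v '' {j : {A : Submodule k V // A ∈ X ∧ A ≠ ⊤} | j.1 < B}) := by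
      by_contra hk
      push_neg at hk
      obtain ⟨B₁, hB₁X, hB₁⟩ := hk
      obtain ⟨B₀, hB₀S, hB₀min⟩ := hwo
        {B | B ∈ X ∧ ¬ B ≤ Submodule.span k (v '' {j | j.1 < B})}
        (fun B hB => hB.1) ⟨B₁, hB₁X, hB₁⟩
      have IH : ∀ C ∈ X, C < B₀ → C ≤ Submodule.span k (v '' {j | j.1 < C}) := by
        intro C hC hltC
        by_contra hC'
        exact hltC.not_ge (hB₀min C ⟨hC, hC'⟩)
      have hSX : sSup {C | C ∈ X ∧ C < B₀} ∈ X := hsupX _ (fun C hC => hC.1)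
      have hSle : sSup {C | C ∈ X ∧ C < B₀} ≤ B₀ := sSup_le (fun C hC => hC.2.le)
      rcases eq_or_lt_of_le hSle with heq | hlt
      · have h1 : sSup {C | C ∈ X ∧ C < B₀} ≤ Submodule.span k (v '' {j | j.1 < B₀}) :=
          sSup_le fun C hC => (IH C hC.1 hC.2).trans
            (Submodule.span_mono (Set.image_mono fun j hj => hj.trans hC.2))
        exact hB₀S.2 (heq.ge.trans h1)
      · set A : {A : Submodule k V // A ∈ X ∧ A ≠ ⊤} := ⟨_, hSX, hlt.ne_top⟩ with hA
        have h1 : succ A ≤ B₀ := hsle A B₀ hB₀S.1 hlt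
        have h2 : B₀ ≤ succ A := by
          by_contra h
          have hlt' : succ A < B₀ := lt_of_le_of_ne h1 (fun he => h he.ge)
          have : succ A ≤ sSup {C | C ∈ X ∧ C < B₀} := le_sSup ⟨hsX A, hlt'⟩
          exact (hslt A).not_ge this
        have e : B₀ = A.1 ⊔ Submodule.span k {v A} := (le_antisymm h2 h1).trans (hseq A)
        refine hB₀S.2 (e.le.trans (sup_le ?_ ?_))
        · exact (IH _ hSX hlt).trans
            (Submodule.span_mono (Set.image_mono fun j hj => hj.trans hlt))
        · exact Submodule.span_le.mpr
            (Set.singleton_subset_iff.mpr (Submodule.subset_span ⟨A, hlt, rfl⟩))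
    have hli : LinearIndependent k v := by
      classical
      rw [linearIndependent_iff']
      intro s g hsum i hi
      by_contra hgi
      set t := s.filter (fun j => g j ≠ 0) with ht
      have hit : i ∈ t := Finset.mem_filter.mpr ⟨hi, hgi⟩
      have hsum' : ∑ j ∈ t, g j • v j = 0 := by
        rw [ht, Finset.sum_filter_of_ne]
        · exact hsum
        · intro x _ hx
          intro hgx
          exact hx (by rw [hgx, zero_smul])
      obtain ⟨m, hmt, hmmax⟩ := Set.Finite.exists_maximalFor
        (fun a : {A : Submodule k V // A ∈ X ∧ A ≠ ⊤} => a.1) ↑t t.finite_toSet ⟨i, hit⟩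
      have hblt : ∀ c ∈ t, c ≠ m → c.1 < m.1 := by
        intro c hc hcm
        rcases htot c.1 c.2.1 m.1 m.2.1 with h | h
        · exact lt_of_le_of_ne h (fun he => hcm (Subtype.ext he))
        · exact absurd (Subtype.ext (le_antisymm h (hmmax hc h))) (Ne.symm hcm)
      have hmt' : m ∈ t := Finset.mem_coe.mp hmt
      have hsplit : g m • v m + ∑ c ∈ t.erase m, g c • v c = 0 := by
        rw [Finset.add_sum_erase t (fun c => g c • v c) hmt']
        exact hsum'
      have hrest : ∑ c ∈ t.erase m, g c • v c ∈ m.1 := by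
        refine Submodule.sum_mem _ fun c hc => Submodule.smul_mem _ _ ?_
        exact hsle c m.1 m.2.1
          (hblt c (Finset.mem_of_mem_erase hc) (Finset.ne_of_mem_erase hc)) (hv1 c)
      have hgm : g m ≠ 0 := (Finset.mem_filter.mp hmt').2
      have hvm : v m ∈ m.1 := by
        have h1 : g m • v m = -∑ c ∈ t.erase m, g c • v c :=
          eq_neg_of_add_eq_zero_left hsplit
        have h2 : g m • v m ∈ m.1 := h1 ▸ neg_mem hrest
        have h3 := m.1.smul_mem (g m)⁻¹ h2
        rwa [inv_smul_smul₀ hgm] at h3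
      exact hv2 m hvm
    have hsp : ⊤ ≤ Submodule.span k (Set.range v) := by
      refine le_trans (key ⊤ htop) (Submodule.span_mono ?_)
      rintro x ⟨j, _, rfl⟩
      exact ⟨j, rfl⟩
    haveI : IsTrichotomous {A : Submodule k V // A ∈ X ∧ A ≠ ⊤}
        (fun a b => a.1 < b.1) := by
      constructor
      intro a b' hab hba
      rcases htot a.1 a.2.1 b'.1 b'.2.1 with h | h
      · rcases h.lt_or_eq with h' | h'
        · exact absurd h' hab
        · exact Subtype.ext h'
      · rcases h.lt_or_eq with h' | h'
        · exact absurd h' hba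
        · exact Subtype.ext h'.symm
    haveI : IsTrans {A : Submodule k V // A ∈ X ∧ A ≠ ⊤}
        (fun a b => a.1 < b.1) := ⟨fun _ _ _ h1 h2 => h1.trans h2⟩
    haveI : IsWellFounded {A : Submodule k V // A ∈ X ∧ A ≠ ⊤}
        (fun a b => a.1 < b.1) := by
      constructor
      rw [WellFounded.wellFounded_iff_has_min]
      intro s hs
      obtain ⟨x, hx⟩ := hs
      obtain ⟨B, hBmem, hBle⟩ := hwo (Subtype.val '' s)
        (by rintro _ ⟨a, _, rfl⟩; exact a.2.1) ⟨x.1, x, hx, rfl⟩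
      obtain ⟨a, has, rfl⟩ := hBmem
      exact ⟨a, has, fun y hy hlt => hlt.not_ge (hBle y.1 ⟨y, hy, rfl⟩)⟩
    refine ⟨{A : Submodule k V // A ∈ X ∧ A ≠ ⊤}, fun a b => a.1 < b.1,
      Module.Basis.mk hli hsp, ⟨⟩, ?_⟩
    intro i
    rw [Module.Basis.coe_mk]
    have h1 : T (v i) ∈ succ i := hinv _ (hsX i) _ (hv1 i)
    have h2 : succ i ≤ Submodule.span k (v '' {j | j.1 < i.1 ∨ j = i}) := by
      rw [hseq i]
      apply sup_le
      · exact (key i.1 i.2.1).trans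
          (Submodule.span_mono (Set.image_mono fun j hj => Or.inl hj))
      · exact Submodule.span_le.mpr
          (Set.singleton_subset_iff.mpr (Submodule.subset_span ⟨i, Or.inr rfl, rfl⟩))
    exact h2 h1
end

section
/- Let k be a field, V a k-vector space, and T a linear transformation of V. Then T is triangularizable if and only if V is the internal direct sum, over a ∈ k, of the generalized eigenspaces ⋃_{i=1}^∞ ker((T − aI)^i) (where I denotes the identity transformation); that is, these subspaces are independent and their sum is all of V. -/
universe u v

open Polynomial

section AuxTriang

variable {k : Type u} {V : Type v} [Field k] [AddCommGroup V] [Module k V]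

lemma genEig_sup_eq (T : Module.End k V) (a : k) :
    (⨆ i : ℕ, LinearMap.ker ((T - a • (1 : Module.End k V)) ^ (i + 1))) =
      T.maxGenEigenspace a := by
  rw [← Module.End.iSup_genEigenspace_eq]
  apply le_antisymm
  · exact iSup_le fun i => by
      rw [← Module.End.genEigenspace_nat]
      exact le_iSup (fun j : ℕ => T.genEigenspace a j) (i + 1)
  · exact iSup_le fun i => by
      rw [Module.End.genEigenspace_nat]
      exact le_trans ((T - a • 1).iterateKer.monotone (Nat.le_succ i))
        (le_iSup (fun j : ℕ => LinearMap.ker ((T - a • (1 : Module.End k V)) ^ (j + 1))) i)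

lemma aux_solve (T : Module.End k V) {a c : k} (h : c ≠ a) :
    ∀ (n : ℕ) (e : V), ((T - c • (1 : Module.End k V)) ^ n) e = 0 →
      ∃ w : V, ((T - c • (1 : Module.End k V)) ^ n) w = 0 ∧ (T - a • (1 : Module.End k V)) w = e := by
  set N := T - c • (1 : Module.End k V) with hN
  have hd : c - a ≠ 0 := sub_ne_zero.mpr h
  have hTa : ∀ x : V, (T - a • (1 : Module.End k V)) x = N x + (c - a) • x := by
    intro x
    have : T - a • (1 : Module.End k V) = N + (c - a) • (1 : Module.End k V) := by
      rw [hN, sub_smul]; abel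
    rw [this]
    simp [add_smul]
  intro n
  induction n with
  | zero =>
    intro e he
    simp only [pow_zero, Module.End.one_apply] at he
    exact ⟨0, by simp, by simp [he]⟩
  | succ n ih =>
    intro e he
    have he' : (N ^ n) (-((c - a)⁻¹ • (N e))) = 0 := by
      have : (N ^ (n + 1)) e = (N ^ n) (N e) := by
        rw [pow_succ]; simp
      rw [map_neg, map_smul, ← this, he, smul_zero, neg_zero]
    obtain ⟨w₁, hw₁ker, hw₁⟩ := ih _ he'
    refine ⟨(c - a)⁻¹ • e + w₁, ?_, ?_⟩
    · rw [map_add, map_smul, he, smul_zero, zero_add]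
      have : (N ^ (n + 1)) w₁ = N ((N ^ n) w₁) := by
        rw [pow_succ']; simp
      rw [this, hw₁ker, map_zero]
    · rw [map_add, hw₁, hTa, map_smul, smul_smul, mul_inv_cancel₀ hd, one_smul]
      abel

lemma aux_key (T : Module.End k V) (a : k) (v : V)
    (hv : (T - a • (1 : Module.End k V)) v ∈ ⨆ c : k, T.maxGenEigenspace c) :
    v ∈ ⨆ c : k, T.maxGenEigenspace c := by
  have main : ∀ e : V, e ∈ (⨆ c : k, T.maxGenEigenspace c) →
      ∃ w, w ∈ (⨆ c : k, T.maxGenEigenspace c) ∧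
        e - (T - a • (1 : Module.End k V)) w ∈ T.maxGenEigenspace a := by
    intro e he
    refine Submodule.iSup_induction (motive := fun e => ∃ w,
      w ∈ (⨆ c : k, T.maxGenEigenspace c) ∧
        e - (T - a • (1 : Module.End k V)) w ∈ T.maxGenEigenspace a) _ he ?_ ?_ ?_
    · intro c x hx
      by_cases hca : c = a
      · exact ⟨0, Submodule.zero_mem _, by simpa [hca] using hx⟩
      · obtain ⟨n, hn⟩ := (Module.End.mem_maxGenEigenspace T c x).mp hx
        obtain ⟨w, hwker, hw⟩ := aux_solve T hca n x hn
        refine ⟨w, Submodule.mem_iSup_of_mem c ?_, by simp [hw]⟩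
        exact (Module.End.mem_maxGenEigenspace T c w).mpr ⟨n, hwker⟩
    · exact ⟨0, Submodule.zero_mem _, by simp⟩
    · rintro x y ⟨w₁, hw₁, hx⟩ ⟨w₂, hw₂, hy⟩
      refine ⟨w₁ + w₂, Submodule.add_mem _ hw₁ hw₂, ?_⟩
      have : x + y - (T - a • (1 : Module.End k V)) (w₁ + w₂)
          = (x - (T - a • (1 : Module.End k V)) w₁) + (y - (T - a • (1 : Module.End k V)) w₂) := by
        rw [map_add]; abel
      rw [this]
      exact Submodule.add_mem _ hx hy
  obtain ⟨w, hw, hmem⟩ := main _ hv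
  obtain ⟨n, hn⟩ := (Module.End.mem_maxGenEigenspace T a _).mp hmem
  have : v - w ∈ T.maxGenEigenspace a := by
    refine (Module.End.mem_maxGenEigenspace T a _).mpr ⟨n + 1, ?_⟩
    have h2 : ((T - a • (1 : Module.End k V)) ^ (n+1)) (v - w)
        = ((T - a • (1 : Module.End k V)) ^ n) ((T - a • (1 : Module.End k V)) (v - w)) := by
      rw [pow_succ]; rfl
    rw [h2, map_sub, hn]
  have hvw : v - w ∈ ⨆ c : k, T.maxGenEigenspace c := Submodule.mem_iSup_of_mem a this
  simpa using Submodule.add_mem _ hvw hw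

lemma aux_forward (T : Module.End k V) (h : Triangularizable T) :
    (⨆ c : k, T.maxGenEigenspace c) = ⊤ := by
  obtain ⟨ι, r, b, hwo, htri⟩ := h
  have key : ∀ i : ι, b i ∈ ⨆ c : k, T.maxGenEigenspace c := by
    have hwf : WellFounded r := hwo.toIsWellFounded.wf
    intro i
    induction i using hwf.induction with
    | _ i IH =>
    have himg : ⇑b '' {j | r j i ∨ j = i} = (⇑b '' {j | r j i}) ∪ {b i} := by
      have : {j | r j i ∨ j = i} = {j | r j i} ∪ {i} := rfl
      rw [this, Set.image_union, Set.image_singleton]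
    have hmem := htri i
    rw [himg, Submodule.span_union] at hmem
    obtain ⟨u, hu, z, hz, huz⟩ := Submodule.mem_sup.mp hmem
    obtain ⟨c, rfl⟩ := Submodule.mem_span_singleton.mp hz
    have hspan : Submodule.span k (⇑b '' {j | r j i}) ≤ ⨆ c : k, T.maxGenEigenspace c := by
      rw [Submodule.span_le]
      rintro - ⟨j, hj, rfl⟩
      exact IH j hj
    have hu' : (T - c • (1 : Module.End k V)) (b i) ∈ ⨆ c : k, T.maxGenEigenspace c := by
      have : (T - c • (1 : Module.End k V)) (b i) = u := by
        simp only [LinearMap.sub_apply, LinearMap.smul_apply, Module.End.one_apply]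
        rw [← huz]; abel
      rw [this]
      exact hspan hu
    exact aux_key T c (b i) hu'
  rw [eq_top_iff, ← b.span_eq, Submodule.span_le]
  rintro - ⟨i, rfl⟩
  exact key i

/-- For each scalar `a`, there is a linearly independent subset `S` of the generalized
eigenspace at `a`, adapted to the kernel filtration. -/
lemma aux_adapted (T : Module.End k V) (a : k) :
    ∃ S : Set V,
      LinearIndependent k ((↑) : S → V) ∧
      (∀ x ∈ S, ∃ n : ℕ, x ∈ LinearMap.ker ((T - a • (1 : Module.End k V)) ^ (n + 1))) ∧
      (∀ n : ℕ, (LinearMap.ker ((T - a • (1 : Module.End k V)) ^ (n + 1)) : Set V) ⊆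
        ↑(Submodule.span k (S ∩ ↑(LinearMap.ker ((T - a • (1 : Module.End k V)) ^ (n + 1)))))) := by
  set K : ℕ → Submodule k V := fun n => LinearMap.ker ((T - a • (1 : Module.End k V)) ^ (n + 1))
    with hK
  have hmono : ∀ n, (K n : Set V) ⊆ (K (n + 1) : Set V) := by
    intro n
    exact fun x hx => (T - a • (1 : Module.End k V)).iterateKer.monotone (Nat.le_succ (n + 1)) hx
  set P : ℕ → Set V → Prop := fun n s =>
    LinearIndependent k ((↑) : s → V) ∧ s ⊆ (K n : Set V) ∧
      (K n : Set V) ⊆ ↑(Submodule.span k s) with hP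
  have step : ∀ n (s : Set V), P n s → ∃ t : Set V, P (n + 1) t ∧ s ⊆ t := by
    intro n s hs
    obtain ⟨t, htK, hst, hspan, hli⟩ :=
      exists_linearIndepOn_id_extension hs.1 (hs.2.1.trans (hmono n))
    exact ⟨t, ⟨hli, htK, hspan⟩, hst⟩
  have base : ∃ s, P 0 s := by
    obtain ⟨t, htK, -, hspan, hli⟩ :=
      exists_linearIndepOn_id_extension (linearIndependent_empty k V)
        (Set.empty_subset (K 0 : Set V))
    exact ⟨t, hli, htK, hspan⟩
  choose f hf1 hf2 using step
  let B : (n : ℕ) → {s : Set V // P n s} := fun n =>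
    Nat.rec (motive := fun m => {s : Set V // P m s})
      ⟨Classical.choose base, Classical.choose_spec base⟩
      (fun n prev => ⟨f n prev.1 prev.2, hf1 n prev.1 prev.2⟩) n
  have hchain : ∀ n, ((B n : Set V)) ⊆ (B (n + 1) : Set V) := fun n =>
    hf2 n (B n).1 (B n).2
  have hmonoB : Monotone fun n => (B n : Set V) := monotone_nat_of_le_succ hchain
  refine ⟨⋃ n, (B n : Set V), ?_, ?_, ?_⟩
  · apply linearIndepOn_iUnion_of_directed (v := id) hmonoB.directed_le
    exact fun n => (B n).2.1
  · intro x hx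
    obtain ⟨n, hn⟩ := Set.mem_iUnion.mp hx
    exact ⟨n, (B n).2.2.1 hn⟩
  · intro n x hx
    have h1 : (B n : Set V) ⊆ (⋃ m, (B m : Set V)) ∩ (K n : Set V) :=
      Set.subset_inter (Set.subset_iUnion (fun m => (B m : Set V)) n) (B n).2.2.1
    exact Submodule.span_mono h1 ((B n).2.2.2 hx)

lemma aux_backward (T : Module.End k V)
    (hsup : (⨆ a : k, T.maxGenEigenspace a) = ⊤) : Triangularizable T := by
  classical
  set K : k → ℕ → Submodule k V :=
    fun a n => LinearMap.ker ((T - a • (1 : Module.End k V)) ^ (n + 1)) with hKdef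
  choose S hli hSK hSspan using aux_adapted T
  -- span of S a is the generalized eigenspace
  have hspanS : ∀ a, Submodule.span k (S a) = T.maxGenEigenspace a := by
    intro a
    apply le_antisymm
    · rw [Submodule.span_le]
      intro x hx
      obtain ⟨n, hn⟩ := hSK a x hx
      exact (Module.End.mem_maxGenEigenspace T a x).mpr ⟨n + 1, hn⟩
    · rw [← Module.End.iSup_genEigenspace_eq]
      refine iSup_le fun n => ?_
      rw [Module.End.genEigenspace_nat]
      intro x hx
      have hx' : x ∈ K a n := (T - a • (1 : Module.End k V)).iterateKer.monotone (Nat.le_succ n) hx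
      exact Submodule.span_mono Set.inter_subset_left (hSspan a n hx')
  have hInd : iSupIndep T.maxGenEigenspace := T.independent_maxGenEigenspace
  have hInternal : DirectSum.IsInternal T.maxGenEigenspace :=
    DirectSum.isInternal_submodule_of_iSupIndep_of_iSup_eq_top hInd hsup
  -- bases of the generalized eigenspaces
  have hr : ∀ a, Submodule.span k (Set.range ((↑) : S a → V)) = T.maxGenEigenspace a := by
    intro a; rw [Subtype.range_coe]; exact hspanS a
  let bas : ∀ a : k, Module.Basis (S a) k (T.maxGenEigenspace a) :=
    fun a => (Module.Basis.span (hli a)).map (LinearEquiv.ofEq _ _ (hr a))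
  have hbasval : ∀ (a : k) (x : S a), ((bas a x : T.maxGenEigenspace a) : V) = (x : V) := by
    intro a x
    simp only [bas, Module.Basis.map_apply]
    rw [LinearEquiv.coe_ofEq_apply, Module.Basis.span_apply]
  let b0 : Module.Basis (Σ a : k, S a) k V := hInternal.collectedBasis bas
  have hb0 : ∀ p : Σ a : k, S a, b0 p = (p.2 : V) := by
    intro p
    rw [show b0 p = ((bas p.1 p.2 : T.maxGenEigenspace p.1) : V) from
      congrFun (hInternal.collectedBasis_coe bas) p, hbasval]
  -- levels
  have hlvl : ∀ (a : k) (x : S a), ∃ n : ℕ, (x : V) ∈ K a n := fun a x => hSK a x x.2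
  let lvl : ∀ a : k, S a → ℕ := fun a x => Nat.find (hlvl a x)
  -- the well-order
  let emb : (Σ a : k, S a) → k × ℕ × V := fun p => (p.1, lvl p.1 p.2, (p.2 : V))
  let rKNV : k × ℕ × V → k × ℕ × V → Prop :=
    Prod.Lex WellOrderingRel (Prod.Lex (· < ·) WellOrderingRel)
  haveI hwoKNV : IsWellOrder (k × ℕ × V) rKNV := by
    unfold rKNV; infer_instance
  have hinj : Function.Injective emb := by
    rintro ⟨a, x⟩ ⟨a', x'⟩ h
    simp only [emb, Prod.ext_iff] at h
    obtain ⟨h1, -, h3⟩ := h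
    subst h1
    rw [Subtype.ext h3]
  let r : (Σ a : k, S a) → (Σ a : k, S a) → Prop := fun p q => rKNV (emb p) (emb q)
  haveI hwo : IsWellOrder (Σ a : k, S a) r :=
    RelEmbedding.isWellOrder (⟨⟨emb, hinj⟩, Iff.rfl⟩ : r ↪r rKNV)
  -- triangularity with respect to b0 and r
  have claim : ∀ p : Σ a : k, S a,
      T (b0 p) ∈ Submodule.span k (⇑b0 '' {q | r q p ∨ q = p}) := by
    rintro ⟨a, x⟩
    have hx : (x : V) ∈ K a (lvl a x) := Nat.find_spec (hlvl a x)
    have hTx : T (x : V) = (T - a • (1 : Module.End k V)) (x : V) + a • (x : V) := by simp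
    have hNmem : (T - a • (1 : Module.End k V)) (x : V) ∈
        Submodule.span k (⇑b0 '' {q | r q ⟨a, x⟩}) := by
      rcases hn : lvl a x with - | m
      · -- level zero: (T - a) x = 0
        rw [hn] at hx
        have : ((T - a • (1 : Module.End k V)) ^ 1) (x : V) = 0 := hx
        rw [pow_one] at this
        rw [this]
        exact Submodule.zero_mem _
      · -- level m + 1
        rw [hn] at hx
        have h1 : (T - a • (1 : Module.End k V)) (x : V) ∈ K a m := by
          show ((T - a • (1 : Module.End k V)) ^ (m + 1))
            ((T - a • (1 : Module.End k V)) (x : V)) = 0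
          have : ((T - a • (1 : Module.End k V)) ^ (m + 1))
              ((T - a • (1 : Module.End k V)) (x : V))
              = ((T - a • (1 : Module.End k V)) ^ (m + 1 + 1)) (x : V) := by
            rw [pow_succ]; rfl
          rw [this]; exact hx
        have h2 := hSspan a m h1
        refine Submodule.span_le.mpr ?_ h2
        rintro y ⟨hyS, hyK⟩
        apply Submodule.subset_span
        refine ⟨⟨a, ⟨y, hyS⟩⟩, ?_, hb0 _⟩
        show rKNV (a, lvl a ⟨y, hyS⟩, y) (a, lvl a x, (x : V))
        refine Prod.Lex.right a (Prod.Lex.left _ _ ?_)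
        calc lvl a ⟨y, hyS⟩ ≤ m := Nat.find_min' _ hyK
        _ < m + 1 := Nat.lt_succ_self m
        _ = lvl a x := hn.symm
    have hself : b0 ⟨a, x⟩ ∈ ⇑b0 '' {q | r q ⟨a, x⟩ ∨ q = ⟨a, x⟩} :=
      ⟨⟨a, x⟩, Or.inr rfl, rfl⟩
    rw [hb0 ⟨a, x⟩, hTx]
    refine Submodule.add_mem _ ?_ ?_
    · refine Submodule.span_mono (Set.image_mono ?_) hNmem
      exact fun q hq => Or.inl hq
    · rw [← hb0 ⟨a, x⟩]
      exact Submodule.smul_mem _ a (Submodule.subset_span hself)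
  -- transport to an index type in `Type v`
  have hinj0 : Function.Injective ⇑b0 := b0.injective
  let e : (Σ a : k, S a) ≃ Set.range ⇑b0 := Equiv.ofInjective ⇑b0 hinj0
  let r2 : Set.range ⇑b0 → Set.range ⇑b0 → Prop := fun x y => r (e.symm x) (e.symm y)
  haveI hwo2 : IsWellOrder (Set.range ⇑b0) r2 :=
    RelEmbedding.isWellOrder (⟨⟨⇑e.symm, e.symm.injective⟩, Iff.rfl⟩ : r2 ↪r r)
  refine ⟨Set.range ⇑b0, r2, b0.reindex e, hwo2, ?_⟩
  intro i
  have hb : ∀ j, (b0.reindex e) j = b0 (e.symm j) := fun j => b0.reindex_apply e j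
  have himg : ⇑(b0.reindex e) '' {j | r2 j i ∨ j = i}
      = ⇑b0 '' {q | r q (e.symm i) ∨ q = e.symm i} := by
    have hset : {j | r2 j i ∨ j = i} = ⇑e '' {q | r q (e.symm i) ∨ q = e.symm i} := by
      ext j
      constructor
      · rintro (hj | rfl)
        · exact ⟨e.symm j, Or.inl hj, e.apply_symm_apply j⟩
        · exact ⟨e.symm j, Or.inr rfl, e.apply_symm_apply j⟩
      · rintro ⟨q, hq | rfl, rfl⟩
        · exact Or.inl (by simpa [r2] using hq)
        · exact Or.inr (e.apply_symm_apply i)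
    rw [hset, ← Set.image_comp]
    apply Set.image_congr
    intro q hq
    rw [Function.comp_apply, hb, e.symm_apply_apply]
  rw [hb, himg]
  exact claim (e.symm i)
end AuxTriang

/-- `T` is triangularizable iff `V` is the internal direct sum, over `a ∈ k`, of the
generalized eigenspaces `⋃_{i≥1} ker((T - aI)^i)`. -/
theorem triangularizable_iff_isInternal_generalizedEigenspaces
    {k : Type u} {V : Type v} [Field k] [AddCommGroup V] [Module k V]
    (T : Module.End k V) :
    Triangularizable T ↔
      (iSupIndep fun a : k =>
        ⨆ i : ℕ, LinearMap.ker ((T - a • (1 : Module.End k V)) ^ (i + 1))) ∧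
      (⨆ a : k, ⨆ i : ℕ, LinearMap.ker ((T - a • (1 : Module.End k V)) ^ (i + 1))) = ⊤ := by
  have hfun : (fun a : k =>
      ⨆ i : ℕ, LinearMap.ker ((T - a • (1 : Module.End k V)) ^ (i + 1)))
      = fun a : k => T.maxGenEigenspace a := funext fun a => genEig_sup_eq T a
  rw [hfun]
  constructor
  · intro h
    exact ⟨T.independent_maxGenEigenspace, aux_forward T h⟩
  · rintro ⟨-, h⟩
    exact aux_backward T h
end

section
/- Let k be a field, V a k-vector space, and T a linear transformation of V. Then T is triangularizable if and only if there exists a basis (b_i)_{i∈I} of V indexed by a partially ordered set I such that T is triangular with respect to (b_i)_{i∈I} and, for every i ∈ I, the set {j ∈ I : j ≤ i} is finite. -/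
universe u v

open Polynomial

/-- `T` is triangularizable iff there is a basis of `V` indexed by a partially ordered set,
with respect to which `T` is triangular, and in which every principal down-set is finite. -/
theorem triangularizable_iff_exists_partialOrder_basis_finite_downsets
    {k : Type u} {V : Type v} [Field k] [AddCommGroup V] [Module k V]
    (T : Module.End k V) :
    Triangularizable T ↔
      ∃ (ι : Type v) (po : PartialOrder ι) (b : Module.Basis ι k V),
        (∀ i, T (b i) ∈ Submodule.span k (⇑b '' {j | po.le j i})) ∧
          ∀ i, {j | po.le j i}.Finite := by
  constructor
  · rintro ⟨ι, r, b, hwo, htri⟩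
    -- the support of `T (b i)` in the basis
    set s : ι → Finset ι := fun i => (b.repr (T (b i))).support with hs
    have hsub : ∀ i, (↑(s i) : Set ι) ⊆ {j | r j i ∨ j = i} := fun i =>
      b.mem_span_image.mp (htri i)
    -- the "appears in the support" relation, off the diagonal
    let c : ι → ι → Prop := fun j i => j ∈ s i ∧ j ≠ i
    have hcr : ∀ {j i}, c j i → r j i := fun {j i} h => (hsub i h.1).resolve_right h.2
    have htrans : Transitive r := fun a b c hab hbc => by haveI := hwo; exact IsTrans.trans a b c hab hbc
    have htg : ∀ {j i}, Relation.TransGen c j i → r j i := fun {j i} h => by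
      have : Relation.TransGen r j i := Relation.TransGen.mono (fun _ _ => hcr) _ _ h
      haveI _hwo := hwo; rwa [Relation.transGen_eq_self (r := r)] at this
    let po : PartialOrder ι :=
      { le := Relation.ReflTransGen c
        lt := fun a b => Relation.ReflTransGen c a b ∧ ¬ Relation.ReflTransGen c b a
        le_refl := fun i => Relation.ReflTransGen.refl
        le_trans := fun a b c' hab hbc => Relation.ReflTransGen.trans hab hbc
        le_antisymm := fun a b hab hba => by
          by_contra hne
          have h1 : Relation.TransGen c a b :=
            (Relation.reflTransGen_iff_eq_or_transGen.mp hab).resolve_left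
              (fun h => hne h.symm)
          have h2 : Relation.TransGen c b a :=
            (Relation.reflTransGen_iff_eq_or_transGen.mp hba).resolve_left
              (fun h => hne h)
          exact hwo.toIsWellFounded.wf.isIrrefl.irrefl a (htg (h1.trans h2)) }
    have hcle : ∀ i, (↑(s i) : Set ι) ⊆ {j | po.le j i} := by
      intro i j hj
      by_cases hji : j = i
      · exact hji ▸ Relation.ReflTransGen.refl
      · exact Relation.ReflTransGen.single ⟨hj, hji⟩
    refine ⟨ι, po, b, ?_, ?_⟩
    · intro i
      exact Submodule.span_mono (Set.image_mono (hcle i))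
        (b.mem_span_repr_support (T (b i)))
    · intro i
      induction i using hwo.toIsWellFounded.wf.induction with
      | _ i ih =>
        have hsubset : {j | po.le j i} ⊆
            insert i (⋃ m ∈ {m | c m i}, {j | po.le j m}) := by
          intro j hj
          rcases Relation.ReflTransGen.cases_tail hj with h | ⟨m, hjm, hmi⟩
          · exact Or.inl h.symm
          · exact Or.inr (Set.mem_biUnion hmi hjm)
        refine Set.Finite.subset (Set.Finite.insert i (Set.Finite.biUnion ?_ ?_)) hsubset
        · exact (s i).finite_toSet.subset fun m hm => hm.1
        · intro m hm
          exact ih m (hcr hm)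
  · rintro ⟨ι, po, b, htri, hfin⟩
    letI := po
    let rank : ι → ℕ := fun i => (hfin i).toFinset.card
    have hrank : ∀ {j i}, po.lt j i → rank j < rank i := by
      intro j i hji
      apply Finset.card_lt_card
      rw [Set.Finite.toFinset_ssubset_toFinset]
      constructor
      · intro m hm
        exact le_trans hm (le_of_lt hji)
      · intro hcon
        have hij : i ≤ j := hcon (le_refl i)
        exact ((lt_iff_le_not_ge).mp hji).2 hij
    let r : ι → ι → Prop := fun j i =>
      Prod.Lex (· < · : ℕ → ℕ → Prop) (WellOrderingRel : ι → ι → Prop)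
        (rank j, j) (rank i, i)
    have hwo : IsWellOrder ι r := by
      let f : r ↪r Prod.Lex (· < · : ℕ → ℕ → Prop) (WellOrderingRel : ι → ι → Prop) :=
        { toFun := fun i => (rank i, i)
          inj' := fun a b h => congrArg Prod.snd h
          map_rel_iff' := Iff.rfl }
      exact f.isWellOrder
    refine ⟨ι, r, b, hwo, ?_⟩
    intro i
    refine Submodule.span_mono (Set.image_mono ?_) (htri i)
    intro j hj
    by_cases hji : j = i
    · exact Or.inr hji
    · exact Or.inl (Prod.Lex.left _ _ (hrank (lt_of_le_of_ne hj hji)))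
end

section
/- Let k be an algebraically closed field, V a k-vector space, and T a linear transformation of V. Then T is triangularizable if and only if every finite-dimensional subspace of V is contained in a finite-dimensional T-invariant subspace of V. -/
universe u v

open Polynomial

section Aux

variable {k : Type u} {V : Type v} [Field k] [AddCommGroup V] [Module k V]

/-- Invariance is preserved by sup. -/
theorem aux_sup_inv (T : Module.End k V) {p q : Submodule k V}
    (hp : ∀ v ∈ p, T v ∈ p) (hq : ∀ v ∈ q, T v ∈ q) : ∀ v ∈ p ⊔ q, T v ∈ p ⊔ q := by
  intro v hv
  rw [Submodule.mem_sup] at hv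
  obtain ⟨y, hy, z, hz, rfl⟩ := hv
  rw [map_add]
  exact add_mem (Submodule.mem_sup_left (hp y hy)) (Submodule.mem_sup_right (hq z hz))

/-- Key extension lemma: a proper invariant subspace can be extended by a vector `w` with
`T w ∈ U ⊔ span {w}`. -/
theorem aux_exists_extension [IsAlgClosed k] (T : Module.End k V)
    (hloc : ∀ W : Submodule k V, FiniteDimensional k W →
        ∃ U : Submodule k V, FiniteDimensional k U ∧ W ≤ U ∧ ∀ v ∈ U, T v ∈ U)
    (U : Submodule k V) (hU : ∀ v ∈ U, T v ∈ U) (hne : U ≠ ⊤) :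
    ∃ w, w ∉ U ∧ T w ∈ U ⊔ Submodule.span k {w} := by
  obtain ⟨v, hv⟩ : ∃ v, v ∉ U := by
    by_contra h
    push_neg at h
    exact hne (Submodule.eq_top_iff'.2 h)
  obtain ⟨F, hFfin, hvF, hFinv⟩ := hloc (Submodule.span k {v}) inferInstance
  have hvF' : v ∈ F := hvF (Submodule.mem_span_singleton_self v)
  set U' : Submodule k V := F ⊔ U with hU'def
  have hU'inv : ∀ x ∈ U', T x ∈ U' := aux_sup_inv T hFinv hU
  set p : Submodule k U' := U.comap U'.subtype with hpdef
  set T' : U' →ₗ[k] U' := T.restrict hU'inv with hT'def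
  have hT'coe : ∀ x : U', (T' x : V) = T x := fun x => rfl
  have hcomap : p ≤ p.comap T' := by
    intro x hx
    have : (x : V) ∈ U := hx
    show (T' x : V) ∈ U
    rw [hT'coe]
    exact hU _ this
  set q : (U' ⧸ p) →ₗ[k] (U' ⧸ p) := Submodule.mapQ p p T' hcomap with hqdef
  haveI : FiniteDimensional k (U' ⧸ p) := by
    have e := LinearMap.quotientInfEquivSupQuotient F U
    exact Module.Finite.equiv e
  haveI : Nontrivial (U' ⧸ p) := by
    refine nontrivial_of_ne (Submodule.Quotient.mk ⟨v, Submodule.mem_sup_left hvF'⟩) 0 ?_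
    rw [Ne, Submodule.Quotient.mk_eq_zero]
    exact hv
  obtain ⟨c, hc⟩ := Module.End.exists_eigenvalue (q : Module.End k (U' ⧸ p))
  obtain ⟨x, hx⟩ := hc.exists_hasEigenvector
  obtain ⟨w', rfl⟩ := Submodule.Quotient.mk_surjective p x
  refine ⟨(w' : V), ?_, ?_⟩
  · intro hw
    exact hx.2 ((Submodule.Quotient.mk_eq_zero p).2 hw)
  · have heig : q (Submodule.Quotient.mk w') = c • Submodule.Quotient.mk w' :=
      hx.apply_eq_smul
    have hmapq : q (Submodule.Quotient.mk w') = Submodule.Quotient.mk (T' w') :=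
      Submodule.mapQ_apply _ _ _ _
    have hmem : T' w' - c • w' ∈ p := by
      rw [← Submodule.Quotient.mk_eq_zero]
      rw [Submodule.Quotient.mk_sub, Submodule.Quotient.mk_smul, ← hmapq, heig, sub_self]
    have hmem' : T (w' : V) - c • (w' : V) ∈ U := by
      simpa [hpdef, Submodule.mem_comap, hT'coe] using hmem
    rw [← sub_add_cancel (T (w' : V)) (c • (w' : V))]
    exact add_mem (Submodule.mem_sup_left hmem')
      (Submodule.mem_sup_right (Submodule.smul_mem _ _ (Submodule.mem_span_singleton_self _)))

open Classical in
/-- The next vector to add: some `w ∉ U` with `T w ∈ U ⊔ span {w}`, if one exists. -/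
noncomputable def nextVec (T : Module.End k V) (U : Submodule k V) : V :=
  if h : ∃ w, w ∉ U ∧ T w ∈ U ⊔ Submodule.span k {w} then h.choose else 0

/-- A transfinite sequence of vectors built by repeatedly applying `nextVec` to the span of the
previously chosen vectors. -/
noncomputable def bseq (T : Module.End k V) : Ordinal.{v} → V :=
  Ordinal.lt_wf.fix fun α IH =>
    nextVec T (Submodule.span k {x | ∃ β : Ordinal.{v}, ∃ h : β < α, x = IH β h})

theorem bseq_def (T : Module.End k V) (α : Ordinal.{v}) :
    bseq T α = nextVec T (Submodule.span k (bseq T '' Set.Iio α)) := by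
  show Ordinal.lt_wf.fix _ α = _
  rw [WellFounded.fix_eq]
  congr 2
  ext x
  constructor
  · rintro ⟨β, hβ, rfl⟩
    exact ⟨β, hβ, rfl⟩
  · rintro ⟨β, hβ, rfl⟩
    exact ⟨β, hβ, rfl⟩

theorem bseq_mono (T : Module.End k V) {β γ : Ordinal.{v}} (h : β ≤ γ) :
    Submodule.span k (bseq T '' Set.Iio β) ≤ Submodule.span k (bseq T '' Set.Iio γ) :=
  Submodule.span_mono (Set.image_mono (Set.Iio_subset_Iio h))

theorem bseq_key [IsAlgClosed k] (T : Module.End k V)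
    (hloc : ∀ W : Submodule k V, FiniteDimensional k W →
        ∃ U : Submodule k V, FiniteDimensional k U ∧ W ≤ U ∧ ∀ v ∈ U, T v ∈ U)
    (α : Ordinal.{v}) :
    (∀ v ∈ Submodule.span k (bseq T '' Set.Iio α),
       T v ∈ Submodule.span k (bseq T '' Set.Iio α)) ∧
    (Submodule.span k (bseq T '' Set.Iio α) ≠ ⊤ →
      bseq T α ∉ Submodule.span k (bseq T '' Set.Iio α) ∧
      T (bseq T α) ∈ Submodule.span k (bseq T '' Set.Iio α) ⊔ Submodule.span k {bseq T α}) := by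
  induction α using Ordinal.induction with
  | h α IH =>
  have hinv : ∀ v ∈ Submodule.span k (bseq T '' Set.Iio α),
      T v ∈ Submodule.span k (bseq T '' Set.Iio α) := by
    by_cases htop : Submodule.span k (bseq T '' Set.Iio α) = ⊤
    · rw [htop]
      intro v _
      exact Submodule.mem_top
    · intro v hv
      induction hv using Submodule.span_induction with
      | mem x hx =>
        obtain ⟨β, hβ, rfl⟩ := hx
        have hβtop : Submodule.span k (bseq T '' Set.Iio β) ≠ ⊤ := by
          intro h
          exact htop (top_unique (h ▸ bseq_mono T hβ.le))
        obtain ⟨h1, h2⟩ := (IH β hβ).2 hβtop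
        refine (?_ : _ ≤ Submodule.span k (bseq T '' Set.Iio α)) h2
        refine sup_le (bseq_mono T hβ.le) ?_
        rw [Submodule.span_le, Set.singleton_subset_iff]
        exact Submodule.subset_span ⟨β, hβ, rfl⟩
      | zero => simp
      | add x y _ _ hx hy => simpa [map_add] using Submodule.add_mem _ hx hy
      | smul c x _ hx => simpa [map_smul] using Submodule.smul_mem _ c hx
  refine ⟨hinv, fun hne => ?_⟩
  have hex := aux_exists_extension T hloc _ hinv hne
  have hb : bseq T α = hex.choose := by
    rw [bseq_def]
    unfold nextVec
    rw [dif_pos hex]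
  rw [hb]
  exact hex.choose_spec

theorem bseq_exists_top [IsAlgClosed k] (T : Module.End k V)
    (hloc : ∀ W : Submodule k V, FiniteDimensional k W →
        ∃ U : Submodule k V, FiniteDimensional k U ∧ W ≤ U ∧ ∀ v ∈ U, T v ∈ U) :
    ∃ α : Ordinal.{v}, Submodule.span k (bseq T '' Set.Iio α) = ⊤ := by
  by_contra h
  push_neg at h
  have hinj : Function.Injective (bseq T) := by
    have key : ∀ β γ : Ordinal.{v}, β < γ → bseq T β ≠ bseq T γ := by
      intro β γ hβγ he
      have h1 := ((bseq_key T hloc γ).2 (h γ)).1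
      exact h1 (he ▸ Submodule.subset_span ⟨β, hβγ, rfl⟩)
    intro β γ he
    rcases lt_trichotomy β γ with hlt | heq | hlt
    · exact absurd he (key β γ hlt)
    · exact heq
    · exact absurd he.symm (key γ β hlt)
  exact not_small_ordinal.{v, v} (small_of_injective hinj)

end Aux

/-- Over an algebraically closed field, `T` is triangularizable iff every finite-dimensional
subspace of `V` is contained in a finite-dimensional `T`-invariant subspace of `V`. -/
theorem triangularizable_iff_forall_finiteDimensional_le_invariant
    {k : Type u} {V : Type v} [Field k] [IsAlgClosed k] [AddCommGroup V] [Module k V]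
    (T : Module.End k V) :
    Triangularizable T ↔
      ∀ W : Submodule k V, FiniteDimensional k W →
        ∃ U : Submodule k V, FiniteDimensional k U ∧ W ≤ U ∧ ∀ v ∈ U, T v ∈ U := by
  classical
  constructor
  · rintro ⟨ι, r, b, hwo, htri⟩ W hW
    haveI := hwo
    have key : ∀ i : ι, ∃ U : Submodule k V,
        FiniteDimensional k U ∧ b i ∈ U ∧ ∀ v ∈ U, T v ∈ U := by
      intro i
      induction i using IsWellFounded.induction (r := r) with
      | ind i IH =>
      choose u hufin humem huinv using IH
      set s : Finset ι := (b.repr (T (b i))).support with hsdef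
      have hs : ↑s ⊆ {j | r j i ∨ j = i} := b.mem_span_image.1 (htri i)
      set g : ι → Submodule k V := fun j => if h : r j i then u j h else ⊥ with hgdef
      haveI hgfin : ∀ j, FiniteDimensional k (g j) := by
        intro j
        by_cases h : r j i
        · rw [show g j = u j h from dif_pos h]
          exact hufin j h
        · rw [show g j = ⊥ from dif_neg h]
          infer_instance
      set U : Submodule k V := (Submodule.span k {b i}) ⊔ s.sup g with hUdef
      have hmemU : b i ∈ U := Submodule.mem_sup_left (Submodule.mem_span_singleton_self _)
      have hTbi : T (b i) ∈ U := by
        have h1 : T (b i) ∈ Submodule.span k (⇑b '' ↑s) := b.mem_span_image.2 subset_rfl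
        refine Submodule.span_le.2 ?_ h1
        rintro _ ⟨j, hj, rfl⟩
        rcases hs hj with hji | rfl
        · have hbj : b j ∈ g j := by
            rw [show g j = u j hji from dif_pos hji]
            exact humem j hji
          exact Submodule.mem_sup_right ((Finset.le_sup hj : g j ≤ s.sup g) hbj)
        · exact hmemU
      have hsupinv : ∀ v ∈ s.sup g, T v ∈ s.sup g := by
        refine Finset.sup_induction (p := fun q => ∀ v ∈ q, T v ∈ q) ?_ ?_ ?_
        · intro v hv
          rw [Submodule.mem_bot] at hv
          simp [hv]
        · intro p hp q hq
          exact aux_sup_inv T hp hq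
        · intro j hj
          by_cases h : r j i
          · rw [show g j = u j h from dif_pos h]
            exact huinv j h
          · rw [show g j = ⊥ from dif_neg h]
            intro v hv
            rw [Submodule.mem_bot] at hv
            simp [hv]
      have hinvU : ∀ v ∈ U, T v ∈ U := by
        intro v hv
        rw [hUdef, Submodule.mem_sup] at hv
        obtain ⟨y, hy, z, hz, rfl⟩ := hv
        rw [map_add]
        refine add_mem ?_ (Submodule.mem_sup_right (hsupinv z hz))
        obtain ⟨c, rfl⟩ := Submodule.mem_span_singleton.1 hy
        rw [map_smul]
        exact Submodule.smul_mem _ _ hTbi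
      exact ⟨U, inferInstance, hmemU, hinvU⟩
    choose u hufin humem huinv using key
    haveI : ∀ j, FiniteDimensional k (u j) := hufin
    obtain ⟨t, ht⟩ := (Submodule.fg_iff_finiteDimensional W).2 hW
    set J : Finset ι := t.sup (fun w => (b.repr w).support) with hJdef
    set U : Submodule k V := J.sup u with hUdef
    have hWU : W ≤ U := by
      rw [← ht, Submodule.span_le]
      intro w hw
      have h1 : w ∈ Submodule.span k (⇑b '' ↑((b.repr w).support)) :=
        b.mem_span_image.2 subset_rfl
      refine Submodule.span_le.2 ?_ h1
      rintro _ ⟨j, hj, rfl⟩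
      have hjJ : j ∈ J :=
        Finset.le_sup (f := fun w => (b.repr w).support) (Finset.mem_coe.1 hw) hj
      exact (Finset.le_sup hjJ : u j ≤ U) (humem j)
    have hinvU : ∀ v ∈ U, T v ∈ U := by
      rw [hUdef]
      refine Finset.sup_induction (p := fun q => ∀ v ∈ q, T v ∈ q) ?_ ?_ ?_
      · intro v hv
        rw [Submodule.mem_bot] at hv
        simp [hv]
      · intro p hp q hq
        exact aux_sup_inv T hp hq
      · intro j _
        exact huinv j
    exact ⟨U, inferInstance, hWU, hinvU⟩
  · intro hloc
    obtain ⟨α₁, hα₁⟩ := bseq_exists_top T hloc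
    have hS : {α : Ordinal.{v} | Submodule.span k (bseq T '' Set.Iio α) = ⊤}.Nonempty :=
      ⟨α₁, hα₁⟩
    set α₀ : Ordinal.{v} := sInf {α : Ordinal.{v} | Submodule.span k (bseq T '' Set.Iio α) = ⊤}
      with hα₀def
    have htop : Submodule.span k (bseq T '' Set.Iio α₀) = ⊤ := csInf_mem hS
    have hproper : ∀ β < α₀, Submodule.span k (bseq T '' Set.Iio β) ≠ ⊤ := by
      intro β hβ hcon
      exact absurd (csInf_le' (s := {α : Ordinal.{v} | Submodule.span k (bseq T '' Set.Iio α) = ⊤}) hcon) (not_le.2 hβ)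
    set s : Set Ordinal.{v} := Set.Iio α₀ with hsdef
    have keyne : ∀ β γ : Ordinal.{v}, β < γ → γ < α₀ → bseq T β ≠ bseq T γ := by
      intro β γ hβγ hγ he
      exact ((bseq_key T hloc γ).2 (hproper γ hγ)).1 (he ▸ Submodule.subset_span ⟨β, hβγ, rfl⟩)
    haveI hsmall : Small.{v} s := by
      refine small_of_injective (f := fun x : s => bseq T x) ?_
      intro x y he
      rcases lt_trichotomy (x : Ordinal) (y : Ordinal) with hlt | heq | hlt
      · exact absurd he (keyne _ _ hlt y.2)
      · exact Subtype.ext heq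
      · exact absurd he.symm (keyne _ _ hlt x.2)
    set e := equivShrink s with hedef
    set f : Shrink.{v} s → Ordinal.{v} := fun x => (e.symm x : Ordinal) with hfdef
    have hfinj : Function.Injective f := fun x y h => e.symm.injective (Subtype.ext h)
    have hflt : ∀ x, f x < α₀ := fun x => (e.symm x).2
    set r : Shrink.{v} s → Shrink.{v} s → Prop := fun x y => f x < f y with hrdef
    haveI : IsTrans (Shrink.{v} s) r := ⟨fun _ _ _ h1 h2 => lt_trans h1 h2⟩
    haveI : IsTrichotomous (Shrink.{v} s) r := by
      constructor
      intro a b h1 h2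
      rcases lt_trichotomy (f a) (f b) with h | h | h
      · exact absurd h h1
      · exact hfinj h
      · exact absurd h h2
    haveI : IsWellFounded (Shrink.{v} s) r := ⟨InvImage.wf f Ordinal.lt_wf⟩
    have hwo : IsWellOrder (Shrink.{v} s) r := ⟨⟩
    set bb : Shrink.{v} s → V := fun x => bseq T (f x) with hbbdef
    have hbval : ∀ (β : Ordinal.{v}) (hβ : β < α₀), bb (e ⟨β, hβ⟩) = bseq T β := by
      intro β hβ
      simp [hbbdef, hfdef]
    have hrval : ∀ (β : Ordinal.{v}) (hβ : β < α₀) (x : Shrink.{v} s),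
        r (e ⟨β, hβ⟩) x ↔ β < f x := by
      intro β hβ x
      simp only [hrdef, hfdef, hedef, Equiv.symm_apply_apply]
    have hspan : ⊤ ≤ Submodule.span k (Set.range bb) := by
      rw [show Set.range bb = bseq T '' Set.Iio α₀ from ?_, htop]
      ext x
      constructor
      · rintro ⟨y, rfl⟩
        exact ⟨f y, hflt y, rfl⟩
      · rintro ⟨β, hβ, rfl⟩
        exact ⟨e ⟨β, hβ⟩, hbval β hβ⟩
    have hli : LinearIndependent k bb := by
      rw [linearIndependent_iff]
      intro l hl
      by_contra hlne
      obtain ⟨i, hi, hmax⟩ := l.support.exists_max_image f (Finsupp.support_nonempty_iff.2 hlne)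
      have h0 : ∑ j ∈ l.support, l j • bb j = 0 := by
        rwa [Finsupp.linearCombination_apply, Finsupp.sum] at hl
      have hadd : l i • bb i + ∑ j ∈ l.support.erase i, l j • bb j = 0 := by
        rwa [← Finset.add_sum_erase _ _ hi] at h0
      have hmem : ∑ j ∈ l.support.erase i, l j • bb j ∈
          Submodule.span k (bseq T '' Set.Iio (f i)) := by
        refine Submodule.sum_mem _ ?_
        intro j hj
        have hji : f j < f i :=
          lt_of_le_of_ne (hmax j (Finset.mem_of_mem_erase hj))
            fun h => Finset.ne_of_mem_erase hj (hfinj h)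
        exact Submodule.smul_mem _ _ (Submodule.subset_span ⟨f j, hji, rfl⟩)
      have hbbmem : bb i ∈ Submodule.span k (bseq T '' Set.Iio (f i)) := by
        have hli0 : l i ≠ 0 := Finsupp.mem_support_iff.1 hi
        have h2 : l i • bb i ∈ Submodule.span k (bseq T '' Set.Iio (f i)) := by
          rw [eq_neg_of_add_eq_zero_left hadd]
          exact neg_mem hmem
        have h3 := Submodule.smul_mem _ (l i)⁻¹ h2
        rwa [inv_smul_smul₀ hli0] at h3
      exact ((bseq_key T hloc (f i)).2 (hproper _ (hflt i))).1 hbbmem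
    refine ⟨Shrink.{v} s, r, Module.Basis.mk hli hspan, hwo, ?_⟩
    intro x
    simp only [Module.Basis.coe_mk]
    obtain ⟨-, h2⟩ := (bseq_key T hloc (f x)).2 (hproper _ (hflt x))
    refine (?_ : _ ≤ Submodule.span k (bb '' {y | r y x ∨ y = x})) h2
    refine sup_le ?_ ?_
    · rw [Submodule.span_le]
      rintro _ ⟨β, hβ, rfl⟩
      have hβ0 : β < α₀ := lt_trans hβ (hflt x)
      refine Submodule.subset_span ⟨e ⟨β, hβ0⟩, Or.inl ?_, hbval β hβ0⟩
      rw [hrval β hβ0 x]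
      exact hβ
    · rw [Submodule.span_le, Set.singleton_subset_iff]
      exact Submodule.subset_span ⟨x, Or.inr rfl, rfl⟩
end

section
/- Let k be a field, V a k-vector space, and T a linear transformation of V that is triangular with respect to some well-ordered basis of V. Then every finite-dimensional subspace W of V is contained in a finite-dimensional T-invariant subspace of V. -/
universe u v

theorem aux_finiteDimensional_basis_invariant
    {k : Type u} {V : Type v} [Field k] [AddCommGroup V] [Module k V]
    {ι : Type*} (r : ι → ι → Prop) (hwo : IsWellOrder ι r) (b : Module.Basis ι k V)
    (T : Module.End k V)
    (hT : ∀ i, T (b i) ∈ Submodule.span k (⇑b '' {j | r j i ∨ j = i})) :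
    ∀ i, ∃ U : Submodule k V, FiniteDimensional k U ∧ b i ∈ U ∧ ∀ v ∈ U, T v ∈ U := by
  intro i
  induction i using hwo.wf.induction with
  | _ i IH =>
    classical
    set F := (b.repr (T (b i))).support with hFdef
    have hFsub : (F : Set ι) ⊆ {j | r j i ∨ j = i} := (b.mem_span_image).mp (hT i)
    choose u hu1 hu2 hu3 using IH
    let u' : ι → Submodule k V := fun j => if h : r j i then u j h else ⊥
    have hu'fd : ∀ j, FiniteDimensional k (u' j) := by
      intro j
      simp only [u']
      by_cases h : r j i
      · show FiniteDimensional k (u' j); rw [show u' j = u j h from dif_pos h]; exact hu1 j h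
      · show FiniteDimensional k (u' j); rw [show u' j = ⊥ from dif_neg h]; infer_instance
    haveI := hu'fd
    refine ⟨Submodule.span k {b i} ⊔ F.sup u', ?_, ?_, ?_⟩
    · have : FiniteDimensional k (Submodule.span k {b i}) := by
        apply FiniteDimensional.span_singleton -- may not exist
      infer_instance
    · exact Submodule.mem_sup_left (Submodule.mem_span_singleton_self (b i))
    · -- invariance
      have hgen : ∀ j ∈ F, b j ∈ Submodule.span k {b i} ⊔ F.sup u' := by
        intro j hj
        rcases hFsub hj with h | h
        · have : b j ∈ u' j := by simpa [u', dif_pos h] using hu2 j h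
          exact Submodule.mem_sup_right (Finset.le_sup (f := u') hj this)
        · subst h
          exact Submodule.mem_sup_left (Submodule.mem_span_singleton_self (b j))
      have hTbi : T (b i) ∈ Submodule.span k {b i} ⊔ F.sup u' := by
        have : T (b i) ∈ Submodule.span k (⇑b '' (F : Set ι)) :=
          (b.mem_span_image).mpr (by rw [← hFdef])
        refine Submodule.span_le.mpr ?_ this
        rintro _ ⟨j, hj, rfl⟩
        exact hgen j hj
      have hmap : Submodule.map T (Submodule.span k {b i} ⊔ F.sup u') ≤
          Submodule.span k {b i} ⊔ F.sup u' := by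
        rw [Submodule.map_sup]
        apply sup_le
        · rw [Submodule.map_span, Set.image_singleton]
          exact Submodule.span_le.mpr (Set.singleton_subset_iff.mpr hTbi)
        · rw [Finset.sup_eq_iSup, Submodule.map_iSup]
          apply iSup_le; intro j
          rw [Submodule.map_iSup]
          apply iSup_le; intro hj
          have : Submodule.map T (u' j) ≤ u' j := by
            by_cases h : r j i
            · simp only [u', dif_pos h]
              exact Submodule.map_le_iff_le_comap.mpr fun v hv => hu3 j h v hv
            · simp [u', dif_neg h]
          exact this.trans ((le_biSup u' hj).trans le_sup_right)
      intro v hv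
      exact hmap ⟨v, hv, rfl⟩

/-- If `T` is triangular with respect to a well-ordered basis of `V`, then every
finite-dimensional subspace of `V` is contained in a finite-dimensional `T`-invariant
subspace of `V`. -/
theorem finiteDimensional_le_invariant_of_triangular
    {k : Type u} {V : Type v} [Field k] [AddCommGroup V] [Module k V]
    {ι : Type*} (r : ι → ι → Prop) (hwo : IsWellOrder ι r) (b : Module.Basis ι k V)
    (T : Module.End k V)
    (hT : ∀ i, T (b i) ∈ Submodule.span k (⇑b '' {j | r j i ∨ j = i})) :
    ∀ W : Submodule k V, FiniteDimensional k W →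
      ∃ U : Submodule k V, FiniteDimensional k U ∧ W ≤ U ∧ ∀ v ∈ U, T v ∈ U := by
  classical
  intro W hW
  choose u hu1 hu2 hu3 using aux_finiteDimensional_basis_invariant r hwo b T hT
  obtain ⟨s, hs⟩ : W.FG := (Submodule.fg_iff_finiteDimensional W).mpr hW
  let G : Finset ι := s.sup fun x => (b.repr x).support
  haveI := hu1
  refine ⟨G.sup u, inferInstance, ?_, ?_⟩
  · rw [← hs, Submodule.span_le]
    intro x hx
    have hx' : x ∈ Submodule.span k (⇑b '' ((b.repr x).support : Set ι)) :=
      (b.mem_span_image).mpr le_rfl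
    refine Submodule.span_le.mpr ?_ hx'
    rintro _ ⟨j, hj, rfl⟩
    have hjG : j ∈ G := Finset.le_sup (f := fun x => (b.repr x).support) hx hj
    exact Finset.le_sup (f := u) hjG (hu2 j)
  · intro v hv
    have hmap : Submodule.map T (G.sup u) ≤ G.sup u := by
      rw [Finset.sup_eq_iSup, Submodule.map_iSup]
      apply iSup_le; intro j
      rw [Submodule.map_iSup]
      apply iSup_le; intro hj
      exact le_trans (Submodule.map_le_iff_le_comap.mpr fun w hw => hu3 j w hw)
        (le_biSup u hj)
    exact hmap ⟨v, hv, rfl⟩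
end

section
/- Let k be a field, V a k-vector space, and T a linear transformation of V. If V = ⋃_{i=1}^∞ ker(T^i), then T is strictly triangularizable, i.e., there is a basis (b_i)_{i∈I} of V indexed by a well-ordered set I such that T(b_i) lies in the span of {b_j : j < i} for every i ∈ I. -/
universe u v

/-- Chain of bases adapted to an increasing chain of submodules. -/
private noncomputable def chainAux {k : Type u} {V : Type v} [Field k] [AddCommGroup V]
    [Module k V] (W : ℕ → Submodule k V) (hW0 : W 0 = ⊥) (hWm : ∀ n, W n ≤ W (n + 1)) :
    (n : ℕ) → {s : Set V // LinearIndependent k ((↑) : s → V) ∧ s ⊆ (W n : Set V) ∧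
      (W n : Set V) ⊆ (Submodule.span k s : Set V)}
  | 0 => ⟨∅, linearIndependent_empty k V, Set.empty_subset _, by
      rw [hW0]; intro x hx; simp_all⟩
  | n + 1 =>
    let prev := chainAux W hW0 hWm n
    ⟨(show LinearIndepOn k id prev.1 from prev.2.1).extend (prev.2.2.1.trans (hWm n)),
      (show LinearIndepOn k id prev.1 from prev.2.1).linearIndepOn_extend _,
      (show LinearIndepOn k id prev.1 from prev.2.1).extend_subset _,
      (show LinearIndepOn k id prev.1 from prev.2.1).subset_span_extend _⟩

private theorem chainAux_mono {k : Type u} {V : Type v} [Field k] [AddCommGroup V]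
    [Module k V] (W : ℕ → Submodule k V) (hW0 : W 0 = ⊥) (hWm : ∀ n, W n ≤ W (n + 1))
    (n : ℕ) : (chainAux W hW0 hWm n).1 ⊆ (chainAux W hW0 hWm (n + 1)).1 := by
  simp only [chainAux]
  exact (show LinearIndepOn k id (chainAux W hW0 hWm n).1 from (chainAux W hW0 hWm n).2.1).subset_extend _

/-- If `V = ⋃_{i≥1} ker(T^i)`, then `T` is strictly triangularizable: there is a basis of `V`
indexed by a well-ordered set such that `T (b i)` lies in the span of `{b j : j < i}`. -/
theorem strictlyTriangularizable_of_locally_nilpotent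
    {k : Type u} {V : Type v} [Field k] [AddCommGroup V] [Module k V]
    (T : Module.End k V) (h : ∀ v : V, ∃ i : ℕ, 1 ≤ i ∧ (T ^ i) v = 0) :
    ∃ (ι : Type v) (r : ι → ι → Prop) (b : Module.Basis ι k V),
      IsWellOrder ι r ∧ ∀ i, T (b i) ∈ Submodule.span k (⇑b '' {j | r j i}) := by
  classical
  set W : ℕ → Submodule k V := fun n => LinearMap.ker (T ^ n) with hWdef
  have hW0 : W 0 = ⊥ := by simp [hWdef, pow_zero, Module.End.one_eq_id]
  have hWm : ∀ n, W n ≤ W (n + 1) := by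
    intro n x hx
    have hx' : (T ^ n) x = 0 := hx
    show (T ^ (n + 1)) x = 0
    rw [pow_succ']
    show T ((T ^ n) x) = 0
    rw [hx', map_zero]
  set B : ℕ → Set V := fun n => (chainAux W hW0 hWm n).1 with hBdef
  have hBmono : Monotone B := monotone_nat_of_le_succ (fun n => chainAux_mono W hW0 hWm n)
  set S : Set V := ⋃ n, B n with hSdef
  have hmemS : ∀ n, B n ⊆ S := fun n => Set.subset_iUnion B n
  have hli : LinearIndependent k ((↑) : S → V) :=
    linearIndepOn_iUnion_of_directed (v := id) hBmono.directed_le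
      (fun n => (chainAux W hW0 hWm n).2.1)
  have hspan : ⊤ ≤ Submodule.span k S := by
    intro v _
    obtain ⟨i, -, hiv⟩ := h v
    have hv : v ∈ W i := hiv
    have := (chainAux W hW0 hWm i).2.2.2 hv
    exact Submodule.span_mono (hmemS i) this
  let b : Module.Basis S k V := Module.Basis.mk hli (by rwa [Subtype.range_coe])
  have hb : ⇑b = ((↑) : S → V) := by
    funext x
    exact Module.Basis.mk_apply hli _ x
  -- the degree function
  have hex : ∀ x : S, ∃ n, (x : V) ∈ B n := fun x => Set.mem_iUnion.mp x.2
  let d : S → ℕ := fun x => Nat.find (hex x)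
  have hd : ∀ x : S, (x : V) ∈ B (d x) := fun x => Nat.find_spec (hex x)
  have hd1 : ∀ x : S, 1 ≤ d x := by
    intro x
    by_contra hc
    have h0 : d x = 0 := by omega
    have hmem := hd x
    rw [h0] at hmem
    have hB0 : B 0 = (∅ : Set V) := by simp only [hBdef, chainAux]
    simp [hB0] at hmem
  let r : S → S → Prop := fun x y => Prod.Lex (· < ·) WellOrderingRel (d x, x) (d y, y)
  have hinj : Function.Injective (fun x : S => (d x, x)) := by
    intro a b hab
    exact congrArg Prod.snd hab
  let emb : r ↪r Prod.Lex ((· < ·) : ℕ → ℕ → Prop) (WellOrderingRel (α := S)) :=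
    ⟨⟨fun x => (d x, x), hinj⟩, Iff.rfl⟩
  have hwo : IsWellOrder S r := emb.isWellOrder
  refine ⟨S, r, b, hwo, ?_⟩
  intro i
  rw [hb]
  have hiW : (i : V) ∈ W (d i) := (chainAux W hW0 hWm (d i)).2.2.1 (hd i)
  have hTi : T (i : V) ∈ W (d i - 1) := by
    show (T ^ (d i - 1)) (T (i : V)) = 0
    have : (T ^ (d i - 1)) (T (i : V)) = (T ^ (d i)) (i : V) := by
      conv_rhs => rw [show d i = (d i - 1) + 1 from (Nat.succ_pred_eq_of_pos (hd1 i)).symm]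
      rw [pow_succ]
      rfl
    rw [this]
    exact hiW
  have hsub : B (d i - 1) ⊆ ((↑) : S → V) '' {j | r j i} := by
    intro y hy
    have hyS : y ∈ S := hmemS _ hy
    refine ⟨⟨y, hyS⟩, ?_, rfl⟩
    have hdy : d ⟨y, hyS⟩ ≤ d i - 1 := Nat.find_min' (hex _) hy
    have : d ⟨y, hyS⟩ < d i := by have := hd1 i; omega
    exact Prod.Lex.left _ _ this
  exact Submodule.span_mono hsub ((chainAux W hW0 hWm (d i - 1)).2.2.2 hTi)
end

section
/- Let k be a field, V a k-vector space, T a triangularizable linear transformation of V, and W a T-invariant subspace of V. Then the restriction T|_W, viewed as a linear transformation of the vector space W, is triangularizable. -/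
universe u v

open Polynomial

/-- The restriction of a triangularizable transformation to an invariant subspace is
triangularizable. -/
theorem triangularizable_restrict
    {k : Type u} {V : Type v} [Field k] [AddCommGroup V] [Module k V]
    (T : Module.End k V) (hT : Triangularizable T)
    (W : Submodule k V) (hW : ∀ v ∈ W, T v ∈ W) :
    Triangularizable (T.restrict hW) := by
  classical
  obtain ⟨ι, r, b, hwo, htri⟩ := hT
  haveI := hwo
  letI : LinearOrder ι := hwo.linearOrder r
  have hlt : ∀ i j : ι, i < j ↔ r i j := fun _ _ => Iff.rfl
  have hle : ∀ i j : ι, i ≤ j ↔ (r i j ∨ i = j) := by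
    intro i j
    rw [le_iff_lt_or_eq, hlt]
  -- the sets appearing in triangularity are lower sets
  have hset : ∀ i : ι, {j | r j i ∨ j = i} = Set.Iic i := by
    intro i; ext j; simp [Set.mem_Iic, hle]
  -- the flag of submodules
  set P : ι → Submodule k V := fun m => Submodule.span k (⇑b '' Set.Iic m) with hP
  have hPmono : ∀ {m m' : ι}, m ≤ m' → P m ≤ P m' := by
    intro m m' h
    exact Submodule.span_mono (Set.image_mono (fun j hj => le_trans hj h))
  -- coordinates above m vanish on P m
  have hcoord : ∀ (m : ι), ∀ x ∈ P m, ∀ j, m < j → b.repr x j = 0 := by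
    intro m x hx
    induction hx using Submodule.span_induction with
    | mem x hx =>
      obtain ⟨j', hj', rfl⟩ := hx
      intro j hj
      have : j' ≠ j := fun h => absurd (h ▸ hj') (not_le.mpr hj)
      simp [Finsupp.single_apply, this, Module.Basis.repr_self]
    | zero => simp
    | add x y _ _ hx hy => intro j hj; simp [hx j hj, hy j hj]
    | smul c x _ hx => intro j hj; simp [hx j hj]
  -- if coordinates above m vanish then x ∈ P m
  have hmem : ∀ (x : V) (m : ι), (∀ j, m < j → b.repr x j = 0) → x ∈ P m := by
    intro x m hx
    rw [← b.linearCombination_repr x, Finsupp.linearCombination_apply, Finsupp.sum]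
    refine Submodule.sum_mem _ (fun j hj => ?_)
    refine Submodule.smul_mem _ _ (Submodule.subset_span ⟨j, ?_, rfl⟩)
    by_contra h
    exact (Finsupp.mem_support_iff.mp hj) (hx j (lt_of_not_ge h))
  -- T preserves P m
  have hTP : ∀ (m : ι), ∀ x ∈ P m, T x ∈ P m := by
    intro m
    have : P m ≤ (P m).comap T := by
      rw [hP, Submodule.span_le]
      rintro _ ⟨j, hj, rfl⟩
      have := htri j
      rw [hset j] at this
      exact hPmono hj this
    exact fun x hx => this hx
  -- the set of leading indices of elements of W
  set S : Set ι :=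
    {i | ∃ w, w ∈ W ∧ b.repr w i = 1 ∧ ∀ j, i < j → b.repr w j = 0} with hS
  have hEx : ∀ i : S, ∃ w, w ∈ W ∧ b.repr w (i : ι) = 1 ∧
      ∀ j, (i : ι) < j → b.repr w j = 0 := fun i => i.2
  choose u huW hu1 hu0 using hEx
  -- spanning lemma
  have hspan : ∀ m : ι, ∀ w ∈ W, (∀ j, m < j → b.repr w j = 0) →
      w ∈ Submodule.span k (u '' {i : S | (i : ι) ≤ m}) := by
    intro m
    induction m using WellFounded.induction hwo.wf with
    | _ m IH =>
      intro w hwW hw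
      by_cases h0 : w = 0
      · simp [h0]
      have hne : (b.repr w).support.Nonempty := by
        rw [Finsupp.support_nonempty_iff]; simpa using h0
      set m₀ := (b.repr w).support.max' hne with hm₀
      have hmem₀ : m₀ ∈ (b.repr w).support := Finset.max'_mem _ _
      have hc₀ : b.repr w m₀ ≠ 0 := Finsupp.mem_support_iff.mp hmem₀
      have hm₀m : m₀ ≤ m := by
        by_contra h; exact hc₀ (hw _ (lt_of_not_ge h))
      have hmax : ∀ j, m₀ < j → b.repr w j = 0 := by
        intro j hj
        by_contra hne'
        exact absurd (Finset.le_max' _ _ (Finsupp.mem_support_iff.mpr hne')) (not_le.mpr hj)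
      have hm₀S : m₀ ∈ S := by
        refine ⟨(b.repr w m₀)⁻¹ • w, W.smul_mem _ hwW, ?_, ?_⟩
        · simp [inv_mul_cancel₀ hc₀]
        · intro j hj; simp [hmax j hj]
      set i₀ : S := ⟨m₀, hm₀S⟩ with hi₀
      set w' := w - (b.repr w m₀) • u i₀ with hw'
      have hw'W : w' ∈ W := W.sub_mem hwW (W.smul_mem _ (huW i₀))
      have hw'0 : ∀ j, m₀ ≤ j → b.repr w' j = 0 := by
        intro j hj
        rcases eq_or_lt_of_le hj with rfl | hj'
        · have h1 : b.repr (u i₀) m₀ = 1 := hu1 i₀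
          simp [hw', h1]
        · have h2 : b.repr (u i₀) j = 0 := hu0 i₀ j hj'
          simp [hw', hmax j hj', h2]
      have hui : u i₀ ∈ Submodule.span k (u '' {i : S | (i : ι) ≤ m}) :=
        Submodule.subset_span ⟨i₀, hm₀m, rfl⟩
      have hwsum : w = w' + (b.repr w m₀) • u i₀ := by rw [hw']; abel
      by_cases h0' : w' = 0
      · rw [hwsum, h0', zero_add]
        exact Submodule.smul_mem _ _ hui
      have hne' : (b.repr w').support.Nonempty := by
        rw [Finsupp.support_nonempty_iff]; simpa using h0'
      set m₁ := (b.repr w').support.max' hne' with hm₁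
      have hm₁0 : m₁ < m₀ := by
        rcases lt_or_ge m₁ m₀ with h | h
        · exact h
        · exact absurd (hw'0 m₁ h) (Finsupp.mem_support_iff.mp (Finset.max'_mem _ _))
      have hmax' : ∀ j, m₁ < j → b.repr w' j = 0 := by
        intro j hj
        by_contra hne''
        exact absurd (Finset.le_max' _ _ (Finsupp.mem_support_iff.mpr hne'')) (not_le.mpr hj)
      have hIH := IH m₁ ((hlt m₁ m).mp (lt_of_lt_of_le hm₁0 hm₀m)) w' hw'W hmax'
      have hsub : w' ∈ Submodule.span k (u '' {i : S | (i : ι) ≤ m}) := by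
        refine Submodule.span_mono (Set.image_mono ?_) hIH
        intro i hi
        exact le_trans hi (le_of_lt (lt_of_lt_of_le hm₁0 hm₀m))
      rw [hwsum]
      exact Submodule.add_mem _ hsub (Submodule.smul_mem _ _ hui)
  -- linear independence
  have hindep : LinearIndependent k u := by
    rw [linearIndependent_iff]
    intro l hl
    by_contra hl0
    have hs : l.support.Nonempty := Finsupp.support_nonempty_iff.mpr hl0
    set i₀ := l.support.max' hs with hi₀
    have hmem₀ : i₀ ∈ l.support := Finset.max'_mem _ _
    have : b.repr (Finsupp.linearCombination k u l) (i₀ : ι) = l i₀ := by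
      rw [Finsupp.linearCombination_apply, Finsupp.sum, map_sum, Finsupp.finset_sum_apply]
      rw [Finset.sum_eq_single i₀]
      · simp [hu1 i₀]
      · intro i hi hne
        have hlt' : (i : ι) < (i₀ : ι) := by
          rcases lt_or_eq_of_le (Finset.le_max' _ _ hi) with h | h
          · exact Subtype.coe_lt_coe.mpr h
          · exact absurd h hne
        simp [hu0 i _ hlt']
      · intro h; exact absurd hmem₀ h
    rw [hl] at this
    simp at this
    exact (Finsupp.mem_support_iff.mp hmem₀) this.symm
  -- basis of W
  set v : S → W := fun i => ⟨u i, huW i⟩ with hv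
  have hvindep : LinearIndependent k v :=
    LinearIndependent.of_comp W.subtype hindep
  have hvspan : ⊤ ≤ Submodule.span k (Set.range v) := by
    rintro ⟨x, hx⟩ -
    have hxspan : x ∈ Submodule.span k (Set.range u) := by
      by_cases h0 : x = 0
      · simp [h0]
      have hne : (b.repr x).support.Nonempty := by
        rw [Finsupp.support_nonempty_iff]; simpa using h0
      set m := (b.repr x).support.max' hne with hm
      have hmax : ∀ j, m < j → b.repr x j = 0 := by
        intro j hj
        by_contra hne'
        exact absurd (Finset.le_max' _ _ (Finsupp.mem_support_iff.mpr hne')) (not_le.mpr hj)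
      exact Submodule.span_mono (Set.image_subset_range _ _) (hspan m x hx hmax)
    have : Set.range u = ⇑W.subtype '' Set.range v := by
      rw [← Set.range_comp]; rfl
    rw [this] at hxspan
    exact (Submodule.apply_mem_span_image_iff_mem_span W.injective_subtype).mp hxspan
  set B : Module.Basis S k W := Module.Basis.mk hvindep hvspan with hB
  refine ⟨S, Subrel r S, B, (inferInstanceAs (IsWellOrder _ (Subrel r (· ∈ S)))), ?_⟩
  intro i
  have hBv : ⇑B = v := Module.Basis.coe_mk _ _
  rw [hBv]
  -- reduce to a statement in V
  have hsetS : {j : S | Subrel r S j i ∨ j = i} = {j : S | (j : ι) ≤ (i : ι)} := by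
    ext j
    simp only [Set.mem_setOf_eq, hle]
    constructor
    · rintro (h | rfl)
      · exact Or.inl h
      · exact Or.inr rfl
    · rintro (h | h)
      · exact Or.inl h
      · exact Or.inr (Subtype.ext h)
  rw [hsetS]
  rw [← Submodule.apply_mem_span_image_iff_mem_span W.injective_subtype]
  have himg : ⇑W.subtype '' (v '' {j : S | (j : ι) ≤ (i : ι)}) =
      u '' {j : S | (j : ι) ≤ (i : ι)} := by
    rw [← Set.image_comp]; rfl
  rw [himg]
  have hTu : W.subtype ((T.restrict hW) (v i)) = T (u i) := rfl
  rw [hTu]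
  -- T (u i) lies in W and its coordinates vanish above i
  have h1 : u i ∈ P (i : ι) := hmem _ _ (hu0 i)
  have h2 : T (u i) ∈ P (i : ι) := hTP _ _ h1
  have h3 : ∀ j, (i : ι) < j → b.repr (T (u i)) j = 0 := hcoord _ _ h2
  exact hspan (i : ι) (T (u i)) (hW _ (huW i)) h3
end

section
/- Let k be a field, V a k-vector space, T a triangularizable linear transformation of V, and W a T-invariant subspace of V. Then the induced linear transformation T̄ of the quotient space V/W, defined by T̄(v + W) = T(v) + W, is triangularizable. -/
universe u v

open Polynomial

/-- Over a well-ordered index set, a family each of whose members avoids the span of its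
predecessors is linearly independent. -/
theorem li_of_not_mem_span_lt {k : Type u} {V : Type v} [Field k] [AddCommGroup V] [Module k V]
    {ι : Type*} [LinearOrder ι] (v : ι → V)
    (h : ∀ i, v i ∉ Submodule.span k (v '' {j | j < i})) : LinearIndependent k v := by
  rw [linearIndependent_iff']
  intro s g hsum i hi
  by_contra hne
  classical
  set t := s.filter (fun j => g j ≠ 0) with ht
  have hti : i ∈ t := Finset.mem_filter.2 ⟨hi, hne⟩
  have htne : t.Nonempty := ⟨i, hti⟩
  set m := t.max' htne with hm
  have hmt : m ∈ t := t.max'_mem htne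
  have hgm : g m ≠ 0 := (Finset.mem_filter.1 hmt).2
  have hsum' : ∑ j ∈ t, g j • v j = 0 := by
    have heq : ∑ j ∈ t, g j • v j = ∑ j ∈ s, g j • v j := by
      refine Finset.sum_subset (Finset.filter_subset _ _) ?_
      intro x hx hx'
      have : g x = 0 := by
        by_contra hgx
        exact hx' (Finset.mem_filter.2 ⟨hx, hgx⟩)
      simp [this]
    exact heq.trans hsum
  have hsplit : g m • v m + ∑ j ∈ t.erase m, g j • v j = 0 := by
    exact (Finset.add_sum_erase t (fun j => g j • v j) hmt).trans hsum'
  have hvm : v m = ∑ j ∈ t.erase m, (-(g m)⁻¹ * g j) • v j := by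
    have : g m • v m = -∑ j ∈ t.erase m, g j • v j := eq_neg_of_add_eq_zero_left hsplit
    calc v m = (g m)⁻¹ • (g m • v m) := by rw [smul_smul, inv_mul_cancel₀ hgm, one_smul]
    _ = (g m)⁻¹ • (-∑ j ∈ t.erase m, g j • v j) := by rw [this]
    _ = ∑ j ∈ t.erase m, (-(g m)⁻¹ * g j) • v j := by
        rw [smul_neg, Finset.smul_sum]
        rw [← Finset.sum_neg_distrib]
        refine Finset.sum_congr rfl fun j _ => ?_
        rw [smul_smul, neg_mul, neg_smul]
  apply h m
  rw [hvm]
  refine Submodule.sum_mem _ fun j hj => Submodule.smul_mem _ _ (Submodule.subset_span ?_)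
  refine ⟨j, ?_, rfl⟩
  have hjle : j ≤ m := t.le_max' j (Finset.mem_of_mem_erase hj)
  exact lt_of_le_of_ne hjle (Finset.ne_of_mem_erase hj)

/-- The transformation induced on the quotient by an invariant subspace of a triangularizable
transformation is triangularizable. -/
theorem triangularizable_mapQ
    {k : Type u} {V : Type v} [Field k] [AddCommGroup V] [Module k V]
    (T : Module.End k V) (hT : Triangularizable T)
    (W : Submodule k V) (hW : W ≤ W.comap T) :
    Triangularizable (W.mapQ W T hW) := by
  obtain ⟨ι, r, b, hwo, htri⟩ := hT
  haveI : IsWellOrder ι r := hwo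
  letI : LinearOrder ι := IsWellOrder.linearOrder r
  have hlt : ∀ a c : ι, a < c ↔ r a c := fun a c => Iff.rfl
  set c : ι → V ⧸ W := fun i => W.mkQ (b i) with hc
  set J : Set ι := {i | c i ∉ Submodule.span k (c '' {j | j < i})} with hJ
  have key : ∀ i, c i ∈ Submodule.span k (c '' {j | j ∈ J ∧ j ≤ i}) := by
    intro i
    refine (IsWellFounded.wf (r := r)).induction
      (C := fun i => c i ∈ Submodule.span k (c '' {j | j ∈ J ∧ j ≤ i})) i ?_
    intro i ih
    by_cases hiJ : i ∈ J
    · exact Submodule.subset_span ⟨i, ⟨hiJ, le_refl i⟩, rfl⟩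
    · have hi' : c i ∈ Submodule.span k (c '' {j | j < i}) := not_not.mp hiJ
      refine Submodule.span_le.2 ?_ hi'
      rintro x ⟨j, hj, rfl⟩
      have hj' : r j i := (hlt j i).mp hj
      refine Submodule.span_mono ?_ (ih j hj')
      rintro y ⟨m, ⟨hmJ, hml⟩, rfl⟩
      exact ⟨m, ⟨hmJ, hml.trans (le_of_lt hj)⟩, rfl⟩
  have li : LinearIndependent k (fun j : J => c j) := by
    apply li_of_not_mem_span_lt
    intro i hmem
    apply i.2
    refine Submodule.span_mono ?_ hmem
    rintro x ⟨j, hj, rfl⟩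
    refine ⟨j.val, ?_, rfl⟩
    exact Subtype.coe_lt_coe.2 (Set.mem_setOf_eq ▸ hj)
  have hrange : ∀ i, c i ∈ Submodule.span k (Set.range fun j : J => c j) := by
    intro i
    refine Submodule.span_mono ?_ (key i)
    rintro x ⟨m, ⟨hmJ, -⟩, rfl⟩
    exact ⟨⟨m, hmJ⟩, rfl⟩
  have hsp : ⊤ ≤ Submodule.span k (Set.range fun j : J => c j) := by
    intro x _
    obtain ⟨v, rfl⟩ := Submodule.mkQ_surjective W x
    have hv : v ∈ Submodule.span k (Set.range ⇑b) := by rw [b.span_eq]; trivial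
    have hx : W.mkQ v ∈ Submodule.map W.mkQ (Submodule.span k (Set.range ⇑b)) := ⟨v, hv, rfl⟩
    rw [Submodule.map_span] at hx
    refine Submodule.span_le.2 ?_ hx
    rintro y ⟨_, ⟨i, rfl⟩, rfl⟩
    exact hrange i
  refine ⟨J, fun a b' => r a.val b'.val, Module.Basis.mk li hsp,
    (Subtype.relEmbedding r J).isWellOrder, ?_⟩
  intro i
  rw [Module.Basis.coe_mk]
  have h1 : (W.mapQ W T hW) (c i.val) = W.mkQ (T (b i.val)) := by
    simp only [hc]
    simp [Submodule.mapQ_apply, Submodule.mkQ_apply]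
  rw [h1]
  have h2 : W.mkQ (T (b i.val)) ∈
      Submodule.map W.mkQ (Submodule.span k (⇑b '' {j | r j i.val ∨ j = i.val})) :=
    ⟨T (b i.val), htri i.val, rfl⟩
  rw [Submodule.map_span] at h2
  refine Submodule.span_le.2 ?_ h2
  rintro x ⟨_, ⟨j, hj, rfl⟩, rfl⟩
  have hji : j ≤ i.val := by
    rcases hj with hj | rfl
    · exact le_of_lt ((hlt j i.val).2 hj)
    · exact le_refl _
  refine Submodule.span_le.2 ?_ (key j)
  rintro y ⟨m, ⟨hmJ, hml⟩, rfl⟩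
  refine Submodule.subset_span ⟨⟨m, hmJ⟩, ?_, rfl⟩
  have hmi : m ≤ i.val := hml.trans hji
  rcases lt_or_eq_of_le hmi with hlt' | heq
  · exact Or.inl ((hlt m i.val).1 hlt')
  · exact Or.inr (Subtype.ext heq)
end

section
/- Let k be a field, V a nonzero k-vector space, and T a triangularizable linear transformation of V. Then there exists a ∈ k such that W = ker(T − aI) is nonzero (where I is the identity transformation); moreover, for any a ∈ k, the subspace ker(T − aI) is invariant under every linear transformation S of V that commutes with T (i.e., S(ker(T − aI)) ⊆ ker(T − aI) whenever ST = TS). -/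
universe u v

open Polynomial

/-- If `V ≠ 0` and `T` is triangularizable, then some eigenspace `ker(T - aI)` is nonzero;
moreover every eigenspace of `T` is invariant under any transformation commuting with `T`. -/
theorem exists_nonzero_eigenspace_and_centralizer_invariant
    {k : Type u} {V : Type v} [Field k] [AddCommGroup V] [Module k V] [Nontrivial V]
    (T : Module.End k V) (hT : Triangularizable T) :
    (∃ a : k, LinearMap.ker (T - a • (1 : Module.End k V)) ≠ ⊥) ∧
      ∀ (a : k) (S : Module.End k V), S * T = T * S →
        ∀ v ∈ LinearMap.ker (T - a • (1 : Module.End k V)),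
          S v ∈ LinearMap.ker (T - a • (1 : Module.End k V)) := by
  constructor
  · obtain ⟨ι, r, b, hwo, htri⟩ := hT
    haveI : Nonempty ι := by
      by_contra h
      rw [not_nonempty_iff] at h
      have : Subsingleton V := b.repr.toEquiv.subsingleton
      exact not_subsingleton V this
    have wf : WellFounded r := hwo.wf
    obtain ⟨i₀, -, hmin⟩ := wf.has_min Set.univ ⟨Classical.arbitrary ι, trivial⟩
    have hset : {j | r j i₀ ∨ j = i₀} = {i₀} := by
      ext j
      simp only [Set.mem_setOf_eq, Set.mem_singleton_iff]
      constructor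
      · rintro (h | h)
        · exact absurd h (hmin j trivial)
        · exact h
      · intro h; exact Or.inr h
    have hmem := htri i₀
    rw [hset, Set.image_singleton, Submodule.mem_span_singleton] at hmem
    obtain ⟨a, ha⟩ := hmem
    refine ⟨a, fun hker => ?_⟩
    have hb : b i₀ ∈ LinearMap.ker (T - a • (1 : Module.End k V)) := by
      simp [LinearMap.mem_ker, sub_eq_zero, ha]
    rw [hker, Submodule.mem_bot] at hb
    exact b.ne_zero i₀ hb
  · intro a S hcomm v hv
    rw [LinearMap.mem_ker] at hv ⊢
    have : (T - a • (1 : Module.End k V)) * S = S * (T - a • (1 : Module.End k V)) := by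
      simp only [sub_mul, mul_sub, hcomm, Algebra.smul_mul_assoc, Algebra.mul_smul_comm,
        one_mul, mul_one]
    calc (T - a • (1 : Module.End k V)) (S v)
        = ((T - a • (1 : Module.End k V)) * S) v := rfl
      _ = (S * (T - a • (1 : Module.End k V))) v := by rw [this]
      _ = S ((T - a • (1 : Module.End k V)) v) := rfl
      _ = 0 := by rw [hv, map_zero]
end

section
/- Let k be a field, V a nonzero k-vector space, and X a finite set of pairwise commuting linear transformations of V, each of which is triangularizable. Then there exists a one-dimensional subspace W of V such that S(W) ⊆ W for every S ∈ X. -/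
universe u v

open Polynomial

lemma exists_rmax {ι : Type*} (r : ι → ι → Prop) [IsTrichotomous ι r] [IsTrans ι r]
    (s : Finset ι) (hs : s.Nonempty) : ∃ i ∈ s, ∀ j ∈ s, r j i ∨ j = i := by
  classical
  induction s using Finset.induction_on with
  | empty => exact absurd hs (by simp)
  | @insert a s ha ih =>
    rcases s.eq_empty_or_nonempty with rfl | hs'
    · exact ⟨a, by simp⟩
    · obtain ⟨i, hi, hmax⟩ := ih hs'
      rcases trichotomous_of r a i with h | h | h
      · refine ⟨i, Finset.mem_insert_of_mem hi, ?_⟩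
        intro j hj
        rcases Finset.mem_insert.1 hj with rfl | hj
        · exact Or.inl h
        · exact hmax j hj
      · refine ⟨i, Finset.mem_insert_of_mem hi, ?_⟩
        intro j hj
        rcases Finset.mem_insert.1 hj with rfl | hj
        · exact Or.inr h
        · exact hmax j hj
      · refine ⟨a, Finset.mem_insert_self a s, ?_⟩
        intro j hj
        rcases Finset.mem_insert.1 hj with rfl | hj
        · exact Or.inr rfl
        · rcases hmax j hj with h' | rfl
          · exact Or.inl (_root_.trans h' h)
          · exact Or.inl h

lemma exists_eigenvec {k : Type u} {V : Type v} [Field k] [AddCommGroup V] [Module k V]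
    (T : Module.End k V) (hT : Triangularizable T) (W : Submodule k V) (hW : W ≠ ⊥)
    (hinv : ∀ v ∈ W, T v ∈ W) :
    ∃ c : k, ∃ v ∈ W, v ≠ 0 ∧ T v = c • v := by
  classical
  obtain ⟨ι, r, b, hwo, htr⟩ := hT
  haveI := hwo
  set S : Set ι := {i | ∃ v ∈ W, v ≠ 0 ∧ i ∈ (b.repr v).support ∧
      ∀ j ∈ (b.repr v).support, r j i ∨ j = i} with hS
  have hSne : S.Nonempty := by
    obtain ⟨v, hvW, hv0⟩ := Submodule.exists_mem_ne_zero_of_ne_bot hW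
    have hsupp : (b.repr v).support.Nonempty := by
      rw [Finsupp.support_nonempty_iff]
      simpa using hv0
    obtain ⟨i, hi, hmax⟩ := exists_rmax r _ hsupp
    exact ⟨i, v, hvW, hv0, hi, hmax⟩
  set i := hwo.wf.min S hSne with hidef
  obtain ⟨v, hvW, hv0, hisupp, hmax⟩ := hwo.wf.min_mem S hSne
  set D : ι → Set ι := fun i => {j | r j i ∨ j = i} with hD
  have hvU : v ∈ Submodule.span k (⇑b '' D i) := by
    rw [Module.Basis.mem_span_image]
    intro j hj
    exact hmax j (by simpa using hj)
  have hTU : ∀ x ∈ Submodule.span k (⇑b '' D i), T x ∈ Submodule.span k (⇑b '' D i) := by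
    intro x hx
    have hle : Submodule.map T (Submodule.span k (⇑b '' D i)) ≤ Submodule.span k (⇑b '' D i) := by
      rw [Submodule.map_span, Submodule.span_le]
      rintro _ ⟨_, ⟨j, hj, rfl⟩, rfl⟩
      refine Submodule.span_mono ?_ (htr j)
      apply Set.image_mono
      intro l hl
      rcases hl with hl | rfl
      · rcases hj with hj | rfl
        · exact Or.inl (_root_.trans hl hj)
        · exact Or.inl hl
      · exact hj
    exact hle ⟨x, hx, rfl⟩
  have hTvU : T v ∈ Submodule.span k (⇑b '' D i) := hTU v hvU
  have hTvsupp : ∀ j ∈ (b.repr (T v)).support, r j i ∨ j = i := by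
    intro j hj
    exact (Module.Basis.mem_span_image b).1 hTvU (by simpa using hj)
  set α := b.repr v i with hα
  have hα0 : α ≠ 0 := by simpa [Finsupp.mem_support_iff] using hisupp
  set c := b.repr (T v) i * α⁻¹ with hc
  refine ⟨c, v, hvW, hv0, ?_⟩
  set u := T v - c • v with hu
  have huW : u ∈ W := W.sub_mem (hinv v hvW) (W.smul_mem c hvW)
  have hui : b.repr u i = 0 := by
    simp only [hu, map_sub, map_smul, Finsupp.sub_apply, Finsupp.smul_apply, smul_eq_mul]
    rw [hc, ← hα]
    field_simp
    simp
  have husupp : ∀ j ∈ (b.repr u).support, r j i := by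
    intro j hj
    have h1 : b.repr u j ≠ 0 := by simpa [Finsupp.mem_support_iff] using hj
    have hji : r j i ∨ j = i := by
      have h2 : b.repr u j = b.repr (T v) j - c * b.repr v j := by
        simp [hu, smul_eq_mul]
      by_cases hjT : j ∈ (b.repr (T v)).support
      · exact hTvsupp j hjT
      · have h3 : b.repr (T v) j = 0 := by simpa [Finsupp.mem_support_iff] using hjT
        have hvj : b.repr v j ≠ 0 := by
          intro h
          apply h1
          rw [h2, h3, h, mul_zero, sub_zero]
        exact hmax j (Finsupp.mem_support_iff.2 hvj)
    rcases hji with h | rfl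
    · exact h
    · exact absurd hui h1
  have hu0 : u = 0 := by
    by_contra hu0
    have hsupp : (b.repr u).support.Nonempty := by
      rw [Finsupp.support_nonempty_iff]
      simpa using hu0
    obtain ⟨i', hi', hmax'⟩ := exists_rmax r _ hsupp
    exact hwo.wf.not_lt_min S ⟨u, huW, hu0, hi', hmax'⟩ (husupp i' hi')
  have := sub_eq_zero.mp hu0
  exact this

lemma aux_common {k : Type u} {V : Type v} [Field k] [AddCommGroup V] [Module k V]
    (X : Set (Module.End k V)) (hfin : X.Finite) :
    ∀ (W : Submodule k V), W ≠ ⊥ →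
    (∀ S ∈ X, ∀ v ∈ W, S v ∈ W) →
    (∀ S ∈ X, ∀ T ∈ X, S * T = T * S) →
    (∀ S ∈ X, Triangularizable S) →
    ∃ W' : Submodule k V, W' ≤ W ∧ W' ≠ ⊥ ∧ ∀ S ∈ X, ∃ c : k, ∀ v ∈ W', S v = c • v := by
  induction X, hfin using Set.Finite.induction_on with
  | empty =>
    intro W hW _ _ _
    exact ⟨W, le_rfl, hW, by simp⟩
  | @insert T X hT hfin ih =>
    intro W hW hinv hcomm htri
    obtain ⟨c, v, hvW, hv0, hTv⟩ := exists_eigenvec T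
      (htri T (Set.mem_insert _ _)) W hW (hinv T (Set.mem_insert _ _))
    set W₁ : Submodule k V := W ⊓ (Module.End.eigenspace T c) with hW₁
    have hvW₁ : v ∈ W₁ := ⟨hvW, Module.End.mem_eigenspace_iff.mpr hTv⟩
    have hW₁ne : W₁ ≠ ⊥ := by
      intro h
      rw [h] at hvW₁
      exact hv0 (by simpa using hvW₁)
    have hinv₁ : ∀ S ∈ X, ∀ w ∈ W₁, S w ∈ W₁ := by
      intro S hS w hw
      refine ⟨hinv S (Set.mem_insert_of_mem _ hS) w hw.1, Module.End.mem_eigenspace_iff.mpr ?_⟩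
      have hTw : T w = c • w := Module.End.mem_eigenspace_iff.mp hw.2
      have hcST : T * S = S * T := (hcomm S (Set.mem_insert_of_mem _ hS) T (Set.mem_insert _ _)).symm
      calc T (S w) = (T * S) w := rfl
        _ = (S * T) w := by rw [hcST]
        _ = S (T w) := rfl
        _ = S (c • w) := by rw [hTw]
        _ = c • S w := map_smul S c w
    obtain ⟨W', hW'le, hW'ne, hW'eig⟩ := ih W₁ hW₁ne hinv₁
      (fun S hS T' hT' => hcomm S (Set.mem_insert_of_mem _ hS) T' (Set.mem_insert_of_mem _ hT'))
      (fun S hS => htri S (Set.mem_insert_of_mem _ hS))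
    refine ⟨W', hW'le.trans inf_le_left, hW'ne, ?_⟩
    intro S hS
    rcases Set.mem_insert_iff.1 hS with rfl | hS
    · exact ⟨c, fun w hw => Module.End.mem_eigenspace_iff.mp ((hW'le hw).2)⟩
    · exact hW'eig S hS

/-- If `V ≠ 0` and `X` is a finite set of pairwise commuting triangularizable transformations
of `V`, then some one-dimensional subspace of `V` is invariant under every element of `X`. -/
theorem exists_one_dimensional_invariant_subspace
    {k : Type u} {V : Type v} [Field k] [AddCommGroup V] [Module k V] [Nontrivial V]
    (X : Set (Module.End k V)) (hfin : X.Finite)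
    (hcomm : ∀ S ∈ X, ∀ T ∈ X, S * T = T * S)
    (htri : ∀ S ∈ X, Triangularizable S) :
    ∃ W : Submodule k V, Module.finrank k W = 1 ∧ ∀ S ∈ X, ∀ v ∈ W, S v ∈ W := by
  obtain ⟨W', hle, hW'ne, heig⟩ := aux_common X hfin ⊤ (by
      intro h
      exact top_ne_bot h) (by intro S _ v _; exact Submodule.mem_top) hcomm htri
  obtain ⟨v, hvW', hv0⟩ := Submodule.exists_mem_ne_zero_of_ne_bot hW'ne
  refine ⟨Submodule.span k {v}, finrank_span_singleton hv0, ?_⟩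
  intro S hS w hw
  obtain ⟨c, hc⟩ := heig S hS
  obtain ⟨a, rfl⟩ := Submodule.mem_span_singleton.1 hw
  rw [map_smul, hc v hvW']
  exact Submodule.smul_mem _ _ (Submodule.smul_mem _ _ (Submodule.mem_span_singleton_self v))
end

section
/- Let k be a field, V a k-vector space, and X a finite set of pairwise commuting linear transformations of V. If every element of X is triangularizable, then there exists a basis (b_i)_{i∈I} of V indexed by a well-ordered set I such that every element of X is triangular with respect to (b_i)_{i∈I}. -/
universe u v

open Polynomial

section SimTriAux

lemma sigma_lex_wf' {ι : Type*} {π : ι → Type*} {rι : ι → ι → Prop} {rπ : ∀ i, π i → π i → Prop}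
    (hι : WellFounded rι) (hπ : ∀ i, WellFounded (rπ i)) : WellFounded (Sigma.Lex rι rπ) := by
  have key : ∀ i, ∀ a : π i, Acc (Sigma.Lex rι rπ) ⟨i, a⟩ := by
    intro i
    induction i using hι.induction with
    | _ i ihι =>
      intro a
      induction a using (hπ i).induction with
      | _ a ihπ =>
        constructor
        rintro ⟨j, b⟩ h
        cases h with
        | left _ _ h => exact ihι j h b
        | right _ _ h => exact ihπ _ h
  exact ⟨fun ⟨i, a⟩ => key i a⟩

lemma isWellOrder_invImage' {α : Type*} {β : Type*} (s : β → β → Prop) [IsWellOrder β s]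
    (f : α → β) (hf : Function.Injective f) : IsWellOrder α (InvImage s f) where
  trichotomous a b := by
    intro h1 h2
    exact hf (Std.Trichotomous.trichotomous (r := s) (f a) (f b) h1 h2)
  wf := InvImage.wf f IsWellFounded.wf

variable {k : Type u} {V : Type v} [Field k] [AddCommGroup V] [Module k V]

lemma locSplit_span' (T : Module.End k V) (s : Set V)
    (h : ∀ x ∈ s, ∃ p : k[X], p ≠ 0 ∧ p.Splits ∧ Polynomial.aeval T p x = 0)
    {v : V} (hv : v ∈ Submodule.span k s) :
    ∃ p : k[X], p ≠ 0 ∧ p.Splits ∧ Polynomial.aeval T p v = 0 := by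
  classical
  obtain ⟨t, hts, hvt⟩ := Submodule.mem_span_finite_of_mem_span hv
  choose p hp0 hps hpk using h
  refine ⟨∏ x ∈ t.attach, p x (hts x.2), ?_, ?_, ?_⟩
  · exact Finset.prod_ne_zero_iff.mpr fun x _ => hp0 _ _
  · exact Polynomial.Splits.prod fun x _ => hps _ _
  · have : Submodule.span k (t : Set V) ≤
        LinearMap.ker (Polynomial.aeval T (∏ x ∈ t.attach, p x (hts x.2))) := by
      rw [Submodule.span_le]
      intro x hx
      have hxt : x ∈ t := hx
      rw [SetLike.mem_coe, LinearMap.mem_ker,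
        ← Finset.prod_erase_mul t.attach _ (Finset.mem_attach t ⟨x, hxt⟩), map_mul,
        Module.End.mul_apply, hpk x (hts hxt), map_zero]
    exact this hvt

lemma Triangularizable.locSplit {T : Module.End k V} (h : Triangularizable T) :
    ∀ v : V, ∃ p : k[X], p ≠ 0 ∧ p.Splits ∧ Polynomial.aeval T p v = 0 := by
  obtain ⟨ι, r, b, hwo, htri⟩ := h
  haveI := hwo
  have key : ∀ i, ∃ p : k[X], p ≠ 0 ∧ p.Splits ∧
      Polynomial.aeval T p (b i) = 0 := by
    intro i
    induction i using (IsWellFounded.wf (r := r)).induction with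
    | _ i IH =>
      set μ := b.repr (T (b i)) i with hμ
      have hw : T (b i) - μ • b i ∈ Submodule.span k (⇑b '' {j | r j i}) := by
        rw [Module.Basis.mem_span_image]
        intro j hj
        simp only [Finset.mem_coe, Finsupp.mem_support_iff, map_sub, map_smul,
          Module.Basis.repr_self, Finsupp.coe_sub, Pi.sub_apply] at hj
        have hji : j ≠ i := by
          rintro rfl
          simp [hμ] at hj
        have hsupp : j ∈ (b.repr (T (b i))).support := by
          rw [Finsupp.mem_support_iff]
          intro h0
          apply hj
          rw [h0, Finsupp.smul_single, smul_eq_mul, mul_one,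
            Finsupp.single_eq_of_ne hji, zero_sub, neg_eq_zero]
        have := (Module.Basis.mem_span_image b).mp (htri i) hsupp
        rcases this with h' | h'
        · exact h'
        · exact absurd h' hji
      obtain ⟨q, hq0, hqs, hqk⟩ := locSplit_span' T _
        (fun x hx => by obtain ⟨j, hj, rfl⟩ := hx; exact IH j hj) hw
      refine ⟨q * (X - C μ), mul_ne_zero hq0 (X_sub_C_ne_zero μ),
        (hqs.mul (Splits.X_sub_C _)), ?_⟩
      rw [map_mul, Module.End.mul_apply]
      have : (Polynomial.aeval T (X - C μ)) (b i) = T (b i) - μ • b i := by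
        simp [Module.algebraMap_end_apply]
      rw [this, hqk]
  intro v
  exact locSplit_span' T (Set.range ⇑b) (fun x hx => by obtain ⟨j, rfl⟩ := hx; exact key j)
    (by rw [b.span_eq]; trivial)

lemma comap_iSup_maxGen' (T : Module.End k V) (μ : k) {v : V}
    (h : (T - algebraMap k (Module.End k V) μ) v ∈ ⨆ ν, T.maxGenEigenspace ν) :
    v ∈ ⨆ ν, T.maxGenEigenspace ν := by
  classical
  rw [Submodule.mem_iSup_iff_exists_finsupp] at h
  obtain ⟨w, hw, hsum⟩ := h
  have key : ∀ ν ∈ w.support.erase μ, ∃ x ∈ T.maxGenEigenspace ν,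
      (T - algebraMap k (Module.End k V) μ) x = w ν := by
    intro ν hν
    have hνμ : ν ≠ μ := Finset.ne_of_mem_erase hν
    obtain ⟨m, hm⟩ := (Module.End.mem_maxGenEigenspace T ν (w ν)).mp (hw ν)
    obtain ⟨a, b, hab⟩ : IsCoprime (X - C μ) ((X - C ν) ^ m) :=
      (Polynomial.isCoprime_X_sub_C_of_isUnit_sub
        (sub_ne_zero_of_ne hνμ.symm).isUnit).pow_right
    have hXμ : (Polynomial.aeval T (X - C μ)) = T - algebraMap k (Module.End k V) μ := by simp
    have hTa : Commute T (Polynomial.aeval T a) := by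
      have := (Commute.all (X : k[X]) a).map (Polynomial.aeval T)
      rwa [Polynomial.aeval_X] at this
    refine ⟨Polynomial.aeval T a (w ν), ?_, ?_⟩
    · exact Module.End.mapsTo_maxGenEigenspace_of_comm hTa ν (hw ν)
    · have h1 : Polynomial.aeval T (a * (X - C μ) + b * (X - C ν) ^ m) (w ν) = w ν := by
        rw [hab]; simp
      have h2 : Polynomial.aeval T (b * (X - C ν) ^ m) (w ν) = 0 := by
        rw [map_mul, Module.End.mul_apply, map_pow]
        have h3 : (Polynomial.aeval T (X - C ν)) ^ m = (T - ν • 1) ^ m := by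
          simp [Algebra.algebraMap_eq_smul_one]
        rw [h3, hm, map_zero]
      rw [map_add, LinearMap.add_apply, h2, add_zero, map_mul, Module.End.mul_apply] at h1
      calc (T - algebraMap k (Module.End k V) μ) ((Polynomial.aeval T a) (w ν))
          = ((Polynomial.aeval T (X - C μ)) * (Polynomial.aeval T a)) (w ν) := by
            rw [hXμ]; rfl
        _ = (Polynomial.aeval T ((X - C μ) * a)) (w ν) := by rw [map_mul]
        _ = (Polynomial.aeval T (a * (X - C μ))) (w ν) := by rw [mul_comm]
        _ = (Polynomial.aeval T a) ((Polynomial.aeval T (X - C μ)) (w ν)) := by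
            rw [map_mul]; rfl
        _ = w ν := h1
  choose x hx1 hx2 using key
  set u := v - ∑ ν ∈ (w.support.erase μ).attach, x ν ν.2 with hu
  have hTu : (T - algebraMap k (Module.End k V) μ) u ∈ T.maxGenEigenspace μ := by
    have heq : (T - algebraMap k (Module.End k V) μ) u
        = (T - algebraMap k (Module.End k V) μ) v - ∑ ν ∈ (w.support.erase μ).attach, w ν := by
      rw [hu, map_sub, map_sum]
      congr 1
      exact Finset.sum_congr rfl fun ν _ => hx2 ν ν.2
    rw [heq, ← hsum, Finsupp.sum,
      Finset.sum_attach (w.support.erase μ) (fun ν => w ν)]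
    by_cases hμs : μ ∈ w.support
    · rw [← Finset.add_sum_erase _ w hμs, add_sub_cancel_right]
      exact hw μ
    · rw [Finset.erase_eq_of_notMem hμs, sub_self]
      exact (T.maxGenEigenspace μ).zero_mem
  have humem : u ∈ T.maxGenEigenspace μ := by
    rw [Module.End.mem_maxGenEigenspace] at hTu ⊢
    obtain ⟨m, hm⟩ := hTu
    refine ⟨m + 1, ?_⟩
    have halg : algebraMap k (Module.End k V) μ = μ • 1 := Algebra.algebraMap_eq_smul_one μ
    rw [halg] at hm
    rw [pow_succ, Module.End.mul_apply]
    exact hm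
  have hv : v = u + ∑ ν ∈ (w.support.erase μ).attach, x ν ν.2 := by rw [hu]; abel
  rw [hv]
  refine Submodule.add_mem _ (Submodule.mem_iSup_of_mem μ humem) ?_
  exact Submodule.sum_mem _ fun ν _ => Submodule.mem_iSup_of_mem ν (hx1 ν ν.2)

lemma mem_iSup_maxGen_of_split' (T : Module.End k V) :
    ∀ (n : ℕ) (p : k[X]), p.natDegree ≤ n → p ≠ 0 → p.Splits →
      ∀ v : V, Polynomial.aeval T p v = 0 → v ∈ ⨆ ν, T.maxGenEigenspace ν := by
  intro n
  induction n with
  | zero =>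
    intro p hdeg hp0 _ v hv
    have hpC : p = C (p.coeff 0) := Polynomial.eq_C_of_natDegree_le_zero hdeg
    rw [hpC, Polynomial.aeval_C, Module.algebraMap_end_apply] at hv
    have hc : p.coeff 0 ≠ 0 := by
      intro h0; apply hp0; rw [hpC, h0, map_zero]
    have hv0 : v = 0 := by
      have := smul_eq_zero.mp hv
      tauto
    rw [hv0]
    exact Submodule.zero_mem _
  | succ n IH =>
    intro p hdeg hp0 hsp v hv
    by_cases hd0 : p.natDegree ≤ n
    · exact IH p hd0 hp0 hsp v hv
    · have hdpos : p.degree ≠ 0 := by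
        intro h0
        have := Polynomial.natDegree_eq_zero_iff_degree_le_zero.mpr (le_of_eq h0)
        omega
      obtain ⟨μ, hμ⟩ := hsp.exists_eval_eq_zero hdpos
      have hdvd : (X - C μ) ∣ p := Polynomial.dvd_iff_isRoot.mpr (by simpa using hμ)
      obtain ⟨q, hq⟩ := hdvd
      have hq0 : q ≠ 0 := by rintro rfl; rw [mul_zero] at hq; exact hp0 hq
      have hqdeg : q.natDegree ≤ n := by
        have := Polynomial.natDegree_mul (Polynomial.X_sub_C_ne_zero μ) hq0
        rw [← hq, Polynomial.natDegree_X_sub_C] at this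
        omega
      have hqsp : q.Splits :=
        hsp.of_dvd hp0 ⟨X - C μ, by rw [hq]; ring⟩
      have hkey : Polynomial.aeval T q ((T - algebraMap k (Module.End k V) μ) v) = 0 := by
        have hXμ : (Polynomial.aeval T (X - C μ)) = T - algebraMap k (Module.End k V) μ := by
          simp
        rw [← hXμ, ← Module.End.mul_apply, ← map_mul, mul_comm, ← hq]
        exact hv
      exact comap_iSup_maxGen' T μ (IH q hqdeg hq0 hqsp _ hkey)

lemma iSup_maxGen_eq_top_of_locSplit' {W : Type v} [AddCommGroup W] [Module k W]
    {T : Module.End k W}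
    (h : ∀ v : W, ∃ p : k[X], p ≠ 0 ∧ p.Splits ∧ Polynomial.aeval T p v = 0) :
    ⨆ ν, T.maxGenEigenspace ν = ⊤ := by
  rw [eq_top_iff]
  intro v _
  obtain ⟨p, hp0, hps, hpk⟩ := h v
  exact mem_iSup_maxGen_of_split' T p.natDegree p le_rfl hp0 hps v hpk

lemma aeval_restrict_apply' (T : Module.End k V) {W : Submodule k V}
    (h : ∀ x ∈ W, T x ∈ W) (p : k[X]) (v : W) :
    ((Polynomial.aeval (T.restrict h) p v : W) : V) = Polynomial.aeval T p (v : V) := by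
  induction p using Polynomial.induction_on' with
  | add p q hp hq => simp only [map_add, LinearMap.add_apply, Submodule.coe_add, hp, hq]
  | monomial n c =>
    simp only [Polynomial.aeval_monomial, Module.End.mul_apply, Module.algebraMap_end_apply]
    rw [Module.End.pow_restrict]
    simp [LinearMap.restrict_apply]

lemma iSup_iInf_maxGen_eq_top' {ι : Type*} [Fintype ι] (f : ι → Module.End k V)
    (hcomm : ∀ i j, Commute (f i) (f j))
    (hsplit : ∀ i (v : V), ∃ p : k[X], p ≠ 0 ∧ p.Splits ∧
      Polynomial.aeval (f i) p v = 0) :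
    ⨆ χ : ι → k, ⨅ i, (f i).maxGenEigenspace (χ i) = ⊤ := by
  classical
  suffices H : ∀ s : Finset ι, ⨆ χ : ι → k, ⨅ i ∈ s, (f i).maxGenEigenspace (χ i) = ⊤ by
    have := H Finset.univ
    simpa using this
  intro s
  induction s using Finset.induction_on with
  | empty =>
    rw [eq_top_iff]
    intro v _
    exact Submodule.mem_iSup_of_mem (fun _ => 0) (by simp)
  | @insert a s ha IH =>
    rw [eq_top_iff, ← IH]
    refine iSup_le fun χ => ?_
    set D := ⨅ i ∈ s, (f i).maxGenEigenspace (χ i) with hD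
    have hinv : ∀ x ∈ D, f a x ∈ D := by
      intro x hx
      simp only [hD, Submodule.mem_iInf] at hx ⊢
      intro i hi
      exact Module.End.mapsTo_maxGenEigenspace_of_comm (hcomm i a) (χ i) (hx i hi)
    set g : Module.End k ↥D := (f a).restrict hinv with hg
    have hsplit' : ∀ v : D, ∃ p : k[X], p ≠ 0 ∧ p.Splits ∧
        Polynomial.aeval g p v = 0 := by
      intro v
      obtain ⟨p, hp0, hps, hpk⟩ := hsplit a (v : V)
      refine ⟨p, hp0, hps, ?_⟩
      have := aeval_restrict_apply' (f a) hinv p v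
      exact Subtype.ext (by rw [this, hpk]; rfl)
    have htop : ⨆ ν, g.maxGenEigenspace ν = ⊤ := iSup_maxGen_eq_top_of_locSplit' hsplit'
    have hDdecomp : D = ⨆ μ : k, (D ⊓ (f a).maxGenEigenspace μ) := by
      have h2 : Submodule.map D.subtype ⊤ = ⨆ μ : k, (D ⊓ (f a).maxGenEigenspace μ) := by
        rw [← htop, Submodule.map_iSup]
        exact iSup_congr fun μ => (Submodule.inf_genEigenspace (f a) D hinv).symm
      rw [← h2, Submodule.map_top, Submodule.range_subtype]
    rw [hDdecomp]
    refine iSup_le fun μ => ?_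
    refine le_trans ?_ (le_iSup _ (Function.update χ a μ))
    rw [Finset.iInf_insert]
    refine le_inf ?_ ?_
    · rw [Function.update_self]
      exact inf_le_right
    · refine le_trans inf_le_left ?_
      rw [hD]
      refine le_iInf fun i => le_iInf fun hi => ?_
      have hupd : Function.update χ a μ i = χ i :=
        Function.update_of_ne (by rintro rfl; exact ha hi) _ _
      rw [hupd]
      exact iInf_le_of_le i (iInf_le _ hi)

lemma exists_chain_sets' (F : ℕ → Submodule k V) (hmono : ∀ m, F m ≤ F (m + 1)) :
    ∃ s : ℕ → Set V, (∀ m, s m ⊆ s (m + 1)) ∧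
      (∀ m, LinearIndependent k ((↑) : s m → V)) ∧
      ∀ m, Submodule.span k (s m) = F m := by
  classical
  have step : ∀ m (t : Set V), LinearIndependent k ((↑) : t → V) → Submodule.span k t = F m →
      ∃ t' : Set V, t ⊆ t' ∧ LinearIndependent k ((↑) : t' → V) ∧
        Submodule.span k t' = F (m + 1) := by
    intro m t hli hsp
    have hsub : t ⊆ (F (m + 1) : Set V) := fun x hx =>
      hmono m (hsp ▸ Submodule.subset_span hx)
    obtain ⟨b, hbt, htb, hspan, hbli⟩ := exists_linearIndepOn_id_extension hli hsub
    refine ⟨b, htb, hbli, le_antisymm (by rw [Submodule.span_le]; exact hbt) ?_⟩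
    rw [← Submodule.span_eq (F (m + 1))]
    exact Submodule.span_le.mpr hspan
  obtain ⟨b0, hb0sub, hb0span, hb0li⟩ := exists_linearIndependent k ((F 0 : Set V))
  rw [Submodule.span_eq] at hb0span
  let C : ℕ → Type _ := fun m =>
    {t : Set V // LinearIndependent k ((↑) : t → V) ∧ Submodule.span k t = F m}
  let c : ∀ m, C m := fun m => Nat.rec (⟨b0, hb0li, hb0span⟩ : C 0)
    (fun m cm => ⟨(step m cm.1 cm.2.1 cm.2.2).choose,
      (step m cm.1 cm.2.1 cm.2.2).choose_spec.2.1,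
      (step m cm.1 cm.2.1 cm.2.2).choose_spec.2.2⟩) m
  exact ⟨fun m => (c m).1, fun m => (step m (c m).1 (c m).2.1 (c m).2.2).choose_spec.1,
    fun m => (c m).2.1, fun m => (c m).2.2⟩

lemma block_triangularization' (W : Submodule k V) {ι' : Type*} [Fintype ι']
    (N : ι' → Module.End k V)
    (hcomm : ∀ i j, Commute (N i) (N j))
    (hmaps : ∀ i, ∀ x ∈ W, N i x ∈ W)
    (hnil : ∀ i, ∀ v ∈ W, ∃ m : ℕ, ((N i) ^ m) v = 0) :
    ∃ (ι : Type v) (r : ι → ι → Prop) (b : ι → V),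
      IsWellOrder ι r ∧ LinearIndependent k b ∧ Submodule.span k (Set.range b) = W ∧
      ∀ i j, N i (b j) ∈ Submodule.span k (b '' {j' | r j' j}) := by
  classical
  let F : ℕ → Submodule k V := fun m =>
    Nat.rec ⊥ (fun _ Fm => W ⊓ ⨅ i, Submodule.comap (N i) Fm) m
  have hF0 : F 0 = ⊥ := rfl
  have hFsucc : ∀ m, F (m + 1) = W ⊓ ⨅ i, Submodule.comap (N i) (F m) := fun _ => rfl
  have hFW : ∀ m, F m ≤ W := by
    intro m
    cases m with
    | zero => exact bot_le
    | succ m => rw [hFsucc]; exact inf_le_left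
  have hmono : ∀ m, F m ≤ F (m + 1) := by
    intro m
    induction m with
    | zero => exact bot_le
    | succ m IH =>
      show W ⊓ _ ≤ W ⊓ _
      exact inf_le_inf le_rfl (iInf_mono fun i => Submodule.comap_mono IH)
  have hexh : ∀ v ∈ W, ∃ m, v ∈ F m := by
    have claim : ∀ n (v : V), v ∈ W → ∀ m : ι' → ℕ, (∑ i, m i) = n →
        (∀ i, ((N i) ^ (m i)) v = 0) → v ∈ F (n + 1) := by
      intro n
      induction n with
      | zero =>
        intro v hvW m hsum hspec
        rcases isEmpty_or_nonempty ι' with hE | hNE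
        · exact Submodule.mem_inf.mpr ⟨hvW, (Submodule.mem_iInf _).mpr fun i => isEmptyElim i⟩
        · obtain ⟨i0⟩ := hNE
          have hm0 : m i0 = 0 :=
            (Finset.sum_eq_zero_iff.mp hsum) i0 (Finset.mem_univ _)
          have hv0 : v = 0 := by
            have := hspec i0
            rwa [hm0, pow_zero, Module.End.one_apply] at this
          rw [hv0]
          exact Submodule.zero_mem _
      | succ n IH =>
        intro v hvW m hsum hspec
        refine Submodule.mem_inf.mpr ⟨hvW, (Submodule.mem_iInf _).mpr fun i => ?_⟩
        rw [Submodule.mem_comap]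
        rcases Nat.eq_zero_or_pos (m i) with h0 | hpos
        · have hv0 : v = 0 := by
            have := hspec i
            rwa [h0, pow_zero, Module.End.one_apply] at this
          rw [hv0, map_zero]
          exact Submodule.zero_mem _
        · obtain ⟨l, hl⟩ : ∃ l, m i = l + 1 := ⟨m i - 1, by omega⟩
          have hsum' : (∑ j, Function.update m i l j) = n := by
            rw [Finset.sum_update_of_mem (Finset.mem_univ i)]
            rw [← Finset.add_sum_erase _ m (Finset.mem_univ i), Finset.erase_eq] at hsum
            omega
          have hspec' : ∀ j, ((N j) ^ (Function.update m i l j)) (N i v) = 0 := by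
            intro j
            rcases eq_or_ne j i with rfl | hne
            · rw [Function.update_self, ← Module.End.mul_apply, ← pow_succ, ← hl]
              exact hspec j
            · rw [Function.update_of_ne hne]
              have hc : Commute ((N j) ^ (m j)) (N i) := (hcomm j i).pow_left _
              rw [← Module.End.mul_apply, hc.eq, Module.End.mul_apply, hspec j, map_zero]
          exact IH (N i v) (hmaps i v hvW) _ hsum' hspec'
    intro v hv
    exact ⟨(∑ i, (hnil i v hv).choose) + 1,
      claim _ v hv _ rfl fun i => (hnil i v hv).choose_spec⟩
  obtain ⟨s, hss, hli, hsp⟩ := exists_chain_sets' F hmono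
  set S : Set V := ⋃ m, s m with hS
  have hmonoS : Monotone s := monotone_nat_of_le_succ hss
  have hSli : LinearIndependent k ((↑) : S → V) :=
    linearIndepOn_iUnion_of_directed (v := id) hmonoS.directed_le hli
  have hSspan : Submodule.span k S = W := by
    rw [hS, Submodule.span_iUnion]
    refine le_antisymm (iSup_le fun m => (hsp m) ▸ hFW m) fun v hv => ?_
    obtain ⟨m, hm⟩ := hexh v hv
    exact Submodule.mem_iSup_of_mem m ((hsp m) ▸ hm)
  have hex : ∀ x : ↥S, ∃ m, (x : V) ∈ F m := by
    intro x
    obtain ⟨m, hm⟩ := Set.mem_iUnion.mp x.2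
    exact ⟨m, (hsp m) ▸ Submodule.subset_span hm⟩
  set lvl : ↥S → ℕ := fun x => Nat.find (hex x) with hlvl
  have hlvl_mem : ∀ x, (x : V) ∈ F (lvl x) := fun x => Nat.find_spec (hex x)
  have hlvl_le : ∀ (x : ↥S) (m : ℕ), (x : V) ∈ F m → lvl x ≤ m :=
    fun x m h => Nat.find_min' (hex x) h
  have hlvl_pos : ∀ x, lvl x ≠ 0 := by
    intro x h0
    have hmem := hlvl_mem x
    rw [h0, hF0, Submodule.mem_bot] at hmem
    exact hSli.ne_zero x hmem
  set r : ↥S → ↥S → Prop :=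
    InvImage (Prod.Lex ((· < ·) : ℕ → ℕ → Prop) WellOrderingRel) (fun y => (lvl y, y)) with hr
  have hwo : IsWellOrder ↥S r :=
    isWellOrder_invImage' _ _ (fun a b h => congrArg Prod.snd h)
  have hFle : ∀ m, F m ≤ Submodule.span k (Subtype.val '' {y : ↥S | lvl y ≤ m}) := by
    intro m
    rw [← hsp m]
    refine Submodule.span_le.mpr fun x hx => ?_
    have hxS : x ∈ S := Set.mem_iUnion.mpr ⟨m, hx⟩
    have hle : lvl ⟨x, hxS⟩ ≤ m := hlvl_le _ m ((hsp m) ▸ Submodule.subset_span hx)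
    exact Submodule.subset_span ⟨⟨x, hxS⟩, hle, rfl⟩
  refine ⟨↥S, r, Subtype.val, hwo, hSli, by rwa [Subtype.range_coe], ?_⟩
  intro i x
  obtain ⟨l, hl⟩ : ∃ l, lvl x = l + 1 := ⟨lvl x - 1, by have := hlvl_pos x; omega⟩
  have hx : (x : V) ∈ F (l + 1) := hl ▸ hlvl_mem x
  replace hx : (x : V) ∈ W ⊓ ⨅ i, Submodule.comap (N i) (F l) := hx
  have hNx : N i (x : V) ∈ F l :=
    Submodule.mem_comap.mp ((Submodule.mem_iInf _).mp (Submodule.mem_inf.mp hx).2 i)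
  refine Submodule.span_mono ?_ (hFle l hNx)
  rintro _ ⟨y, hy, rfl⟩
  refine ⟨y, ?_, rfl⟩
  show r y x
  rw [hr]
  exact Prod.Lex.left _ _ (by simp only [Set.mem_setOf_eq] at hy; omega)

end SimTriAux

/-- Any finite set of pairwise commuting triangularizable transformations of `V` is
simultaneously triangularizable: there is a basis of `V` indexed by a well-ordered set with
respect to which every element of `X` is triangular. -/
theorem simultaneous_triangularization
    {k : Type u} {V : Type v} [Field k] [AddCommGroup V] [Module k V]
    (X : Set (Module.End k V)) (hfin : X.Finite)
    (hcomm : ∀ S ∈ X, ∀ T ∈ X, S * T = T * S)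
    (htri : ∀ S ∈ X, Triangularizable S) :
    ∃ (ι : Type v) (r : ι → ι → Prop) (b : Module.Basis ι k V),
      IsWellOrder ι r ∧
        ∀ S ∈ X, ∀ i, S (b i) ∈ Submodule.span k (⇑b '' {j | r j i ∨ j = i}) := by
  classical
  haveI : Fintype ↥X := hfin.fintype
  set f : ↥X → Module.End k V := fun i => (i : Module.End k V) with hf
  have hcomm' : ∀ i j : ↥X, Commute (f i) (f j) := fun i j => hcomm _ i.2 _ j.2
  have hsplit : ∀ (i : ↥X) (v : V), ∃ p : k[X], p ≠ 0 ∧ p.Splits ∧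
      Polynomial.aeval (f i) p v = 0 := fun i => (htri _ i.2).locSplit
  set Wfam : (↥X → k) → Submodule k V :=
    fun χ => ⨅ i, (f i).maxGenEigenspace (χ i) with hWfam
  have hsup : ⨆ χ : ↥X → k, Wfam χ = ⊤ := iSup_iInf_maxGen_eq_top' f hcomm' hsplit
  have hind : iSupIndep Wfam :=
    Module.End.independent_iInf_maxGenEigenspace_of_forall_mapsTo f
      (fun i j φ => Module.End.mapsTo_maxGenEigenspace_of_comm (hcomm' j i) φ)
  have hinternal : DirectSum.IsInternal Wfam :=
    DirectSum.isInternal_submodule_of_iSupIndep_of_iSup_eq_top hind hsup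
  -- invariance of blocks
  have hWinv : ∀ (χ : ↥X → k) (i : ↥X), ∀ x ∈ Wfam χ, f i x ∈ Wfam χ := by
    intro χ i x hx
    simp only [hWfam, Submodule.mem_iInf] at hx ⊢
    intro j
    exact Module.End.mapsTo_maxGenEigenspace_of_comm (hcomm' j i) (χ j) (hx j)
  -- per-block triangularization
  have hblock : ∀ χ : ↥X → k, ∃ (ι : Type v) (r : ι → ι → Prop) (b : ι → V),
      IsWellOrder ι r ∧ LinearIndependent k b ∧ Submodule.span k (Set.range b) = Wfam χ ∧
      ∀ (i : ↥X) j, (f i - algebraMap k (Module.End k V) (χ i)) (b j)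
        ∈ Submodule.span k (b '' {j' | r j' j}) := by
    intro χ
    apply block_triangularization' (Wfam χ)
      (fun i : ↥X => f i - algebraMap k (Module.End k V) (χ i))
    · intro i j
      exact ((hcomm' i j).sub_left (Algebra.commute_algebraMap_left _ _)).sub_right
        (Algebra.commute_algebraMap_right _ _)
    · intro i x hx
      have h1 := hWinv χ i x hx
      rw [LinearMap.sub_apply, Module.algebraMap_end_apply]
      exact Submodule.sub_mem _ h1 (Submodule.smul_mem _ _ hx)
    · intro i v hv
      have hmem : v ∈ (f i).maxGenEigenspace (χ i) := by
        have := (Submodule.mem_iInf _).mp hv i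
        exact this
      obtain ⟨m, hm⟩ := (Module.End.mem_maxGenEigenspace _ _ _).mp hmem
      refine ⟨m, ?_⟩
      have halg : algebraMap k (Module.End k V) (χ i) = χ i • 1 :=
        Algebra.algebraMap_eq_smul_one (χ i)
      rw [halg]
      exact hm
  choose ιf rf bf hwo hli hspan htri' using hblock
  -- build per-block bases of the submodules
  have hmem : ∀ χ j, bf χ j ∈ Wfam χ := fun χ j =>
    (hspan χ) ▸ Submodule.subset_span (Set.mem_range_self j)
  let bf' : ∀ χ, ιf χ → ↥(Wfam χ) := fun χ j => ⟨bf χ j, hmem χ j⟩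
  have hli' : ∀ χ, LinearIndependent k (bf' χ) := by
    intro χ
    apply LinearIndependent.of_comp (Wfam χ).subtype
    exact hli χ
  have hsp' : ∀ χ, ⊤ ≤ Submodule.span k (Set.range (bf' χ)) := by
    intro χ
    have hmap : Submodule.map (Wfam χ).subtype (Submodule.span k (Set.range (bf' χ)))
        = Submodule.map (Wfam χ).subtype ⊤ := by
      rw [Submodule.map_span, Submodule.map_top, Submodule.range_subtype, ← Set.range_comp]
      exact hspan χ
    rw [Submodule.map_injective_of_injective (Wfam χ).injective_subtype hmap]
  let Bf : ∀ χ, Module.Basis (ιf χ) k ↥(Wfam χ) := fun χ => Module.Basis.mk (hli' χ) (hsp' χ)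
  let B : Module.Basis (Σ χ : ↥X → k, ιf χ) k V := hinternal.collectedBasis Bf
  have hBcoe : ∀ a : Σ χ : ↥X → k, ιf χ, (B a : V) = bf a.1 a.2 := by
    intro a
    rw [hinternal.collectedBasis_coe]
    simp only [Bf, Module.Basis.coe_mk]
    rfl
  -- the global order
  haveI hT1 : ∀ χ, IsTrans (ιf χ) (rf χ) := fun χ => by haveI := hwo χ; infer_instance
  haveI hT2 : ∀ χ, IsTrichotomous (ιf χ) (rf χ) := fun χ => (hwo χ).toTrichotomous
  set R : (Σ χ : ↥X → k, ιf χ) → (Σ χ : ↥X → k, ιf χ) → Prop :=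
    Sigma.Lex WellOrderingRel (fun χ => rf χ) with hR
  haveI hRwo : IsWellOrder (Σ χ : ↥X → k, ιf χ) R :=
    { toTrichotomous := inferInstance
      toIsWellFounded := ⟨sigma_lex_wf' IsWellFounded.wf fun χ => (hwo χ).toIsWellFounded.wf⟩ }
  -- triangularity at the level of the big index type
  have hbig : ∀ S ∈ X, ∀ a : Σ χ : ↥X → k, ιf χ,
      S (B a) ∈ Submodule.span k (⇑B '' {a' | R a' a ∨ a' = a}) := by
    rintro T hT ⟨χ, j⟩
    set i : ↥X := ⟨T, hT⟩ with hi
    have hTB : T (B ⟨χ, j⟩) = χ i • (B ⟨χ, j⟩)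
        + (f i - algebraMap k (Module.End k V) (χ i)) (B ⟨χ, j⟩) := by
      rw [LinearMap.sub_apply, Module.algebraMap_end_apply]
      have : f i = T := rfl
      rw [this]
      abel
    rw [hTB]
    refine Submodule.add_mem _ ?_ ?_
    · exact Submodule.smul_mem _ _
        (Submodule.subset_span ⟨⟨χ, j⟩, Or.inr rfl, rfl⟩)
    · have h1 := htri' χ i j
      have hBeq : (B ⟨χ, j⟩ : V) = bf χ j := hBcoe ⟨χ, j⟩
      rw [hBeq]
      refine Submodule.span_mono ?_ h1
      rintro _ ⟨j', hj', rfl⟩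
      exact ⟨⟨χ, j'⟩, Or.inl (Sigma.Lex.right _ _ hj'), hBcoe ⟨χ, j'⟩⟩
  -- re-index over a `Type v` index type
  let e : (Σ χ : ↥X → k, ιf χ) ≃ Set.range ⇑B := Equiv.ofInjective ⇑B B.injective
  refine ⟨↥(Set.range ⇑B), InvImage R e.symm, B.reindex e,
    isWellOrder_invImage' R e.symm e.symm.injective, ?_⟩
  intro T hT x
  have hx : (B.reindex e) x = B (e.symm x) := B.reindex_apply e x
  rw [hx]
  refine Submodule.span_mono ?_ (hbig T hT (e.symm x))
  rintro _ ⟨a, ha, rfl⟩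
  refine ⟨e a, ?_, ?_⟩
  · rcases ha with ha | ha
    · left
      show R (e.symm (e a)) (e.symm x)
      rwa [e.symm_apply_apply]
    · right
      rw [ha]
      exact e.apply_symm_apply x
  · rw [B.reindex_apply, e.symm_apply_apply]
end

section
/- Let k be a field, V a k-vector space, and give End_k(V) the function topology. Let 𝒯 ⊆ End_k(V) be the set of triangularizable transformations of V. Then for any T ∈ End_k(V), T lies in the closure of 𝒯 if and only if for every finite-dimensional T-invariant subspace W of V, the restriction T|_W is a triangularizable transformation of W. -/
universe u v

open Polynomial

/-- The function (finite) topology on `End_k(V)`: the topology induced from the product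
topology on `V → V`, where `V` carries the discrete topology. -/
def endFunctionTopology (k : Type u) (V : Type v) [Field k] [AddCommGroup V] [Module k V] :
    TopologicalSpace (Module.End k V) :=
  TopologicalSpace.induced (fun f => (f : V → V))
    (@Pi.topologicalSpace V (fun _ => V) (fun _ => ⊥))


section TriangularizationProof

open Submodule Set

variable {k : Type u} {V : Type v} [Field k] [AddCommGroup V] [Module k V]

lemma span_coe_image {W : Submodule k V} {α : Type*} (g : α → ↥W) (s : Set α) :
    Submodule.map W.subtype (span k (g '' s)) = span k ((fun a => (g a : V)) '' s) := by
  rw [Submodule.map_span, Set.image_image]; rfl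

lemma mem_span_coe_of {W : Submodule k V} {α : Type*} {g : α → ↥W} {s : Set α} {x : ↥W}
    (h : (x : V) ∈ span k ((fun a => (g a : V)) '' s)) : x ∈ span k (g '' s) := by
  rw [← span_coe_image] at h
  obtain ⟨y, hy, hxy⟩ := h
  rwa [show y = x from Subtype.ext hxy] at hy

lemma coe_mem_span_of {W : Submodule k V} {α : Type*} {g : α → ↥W} {s : Set α} {x : ↥W}
    (h : x ∈ span k (g '' s)) : (x : V) ∈ span k ((fun a => (g a : V)) '' s) := by
  rw [← span_coe_image]; exact Submodule.mem_map_of_mem h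

lemma exists_compl_of_disjoint (P Q : Submodule k V) (h : P ⊓ Q = ⊥) :
    ∃ Z : Submodule k V, IsCompl Q Z ∧ P ≤ Z := by
  obtain ⟨C, hC⟩ := Submodule.exists_isCompl (P ⊔ Q)
  refine ⟨P ⊔ C, ⟨Submodule.disjoint_def.2 fun x hxQ hxPC => ?_, ?_⟩, le_sup_left⟩
  · obtain ⟨p, hp, c, hc, rfl⟩ := Submodule.mem_sup.1 hxPC
    have hcmem : c ∈ (P ⊔ Q) ⊓ C := by
      refine ⟨?_, hc⟩
      have : c = (p + c) - p := by abel
      rw [this]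
      exact Submodule.sub_mem _ (le_sup_right (α := Submodule k V) hxQ) (le_sup_left (α := Submodule k V) hp)
    have hc0 : c = 0 := by
      have := hC.disjoint
      rw [Submodule.disjoint_def] at this
      exact this c hcmem.1 hcmem.2
    subst hc0
    have : p + 0 ∈ P ⊓ Q := ⟨by simpa using hp, hxQ⟩
    rw [h] at this
    simpa using this
  · rw [codisjoint_iff, ← sup_assoc, sup_comm Q P, codisjoint_iff.1 hC.codisjoint]

lemma exists_relcompl (U P Q : Submodule k V) (hP : P ≤ U) (hQ : Q ≤ U) (h : P ⊓ Q = ⊥) :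
    ∃ Y : Submodule k V, P ≤ Y ∧ Y ≤ U ∧ Y ⊓ Q = ⊥ ∧ Y ⊔ Q = U := by
  set P' := P.comap U.subtype with hP'
  set Q' := Q.comap U.subtype with hQ'
  have h' : P' ⊓ Q' = ⊥ := by
    rw [eq_bot_iff]
    rintro x ⟨hx1, hx2⟩
    have : (x : V) ∈ P ⊓ Q := ⟨hx1, hx2⟩
    rw [h] at this
    simpa using Subtype.ext (by simpa using this : (x : V) = 0)
  obtain ⟨Z', hZ', hPZ'⟩ := exists_compl_of_disjoint P' Q' h'
  refine ⟨Z'.map U.subtype, ?_, Submodule.map_subtype_le _ _, ?_, ?_⟩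
  · intro x hx
    exact ⟨⟨x, hP hx⟩, hPZ' hx, rfl⟩
  · rw [eq_bot_iff]
    rintro x ⟨hx1, hx2⟩
    obtain ⟨z, hz, rfl⟩ := hx1
    have : z ∈ Q' ⊓ Z' := ⟨hx2, hz⟩
    have hbot : Q' ⊓ Z' = ⊥ := by
      rw [← disjoint_iff]; exact hZ'.disjoint
    rw [hbot, Submodule.mem_bot] at this
    simp [this]
  · apply le_antisymm
    · exact sup_le (Submodule.map_subtype_le _ _) hQ
    · intro x hx
      have : (⟨x, hx⟩ : ↥U) ∈ Q' ⊔ Z' := by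
        rw [codisjoint_iff.1 hZ'.codisjoint]; trivial
      obtain ⟨q, hq, z, hz, hqz⟩ := Submodule.mem_sup.1 this
      have : x = (z : V) + (q : V) := by
        have := congrArg (U.subtype) hqz
        simpa [add_comm] using this.symm
      rw [this]
      exact Submodule.add_mem _ (le_sup_left (α := Submodule k V) ⟨z, hz, rfl⟩)
        (le_sup_right (α := Submodule k V) hq)

lemma finTriChain_of_triangularizable {W : Submodule k V} (hfd : FiniteDimensional k ↥W)
    (g : V →ₗ[k] V) (hW : ∀ x ∈ W, g x ∈ W) (h : Triangularizable (g.restrict hW)) :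
    ∃ (m : ℕ) (c : Fin m → V), LinearIndependent k c ∧ span k (range c) = W ∧
      ∀ i : Fin m, g (c i) ∈ span k (c '' {j | j ≤ i}) := by
  obtain ⟨ι, r, b, hwo, htri⟩ := h
  haveI := hwo
  haveI : Fintype ι := FiniteDimensional.fintypeBasisIndex b
  letI : LinearOrder ι := IsWellOrder.linearOrder r
  let e : Fin (Fintype.card ι) ≃o ι := monoEquivOfFin ι rfl
  have hlt : ∀ a c : ι, r a c ↔ a < c := fun a c => Iff.rfl
  refine ⟨Fintype.card ι, fun i => ((b (e i)) : V), ?_, ?_, ?_⟩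
  · have hind : LinearIndependent k (fun i : ι => ((b i : V))) :=
      b.linearIndependent.map' W.subtype (Submodule.ker_subtype W)
    exact hind.comp e e.injective
  · have h1 : (fun i => ((b (e i)) : V)) = (W.subtype ∘ ⇑b) ∘ ⇑e := rfl
    rw [h1, Set.range_comp ((W.subtype ∘ ⇑b)) ⇑e, e.surjective.range_eq, Set.image_univ,
      Set.range_comp, ← Submodule.map_span, b.span_eq, Submodule.map_top, Submodule.range_subtype]
  · intro i
    have h1 := htri (e i)
    have h2 : ((g.restrict hW) (b (e i)) : V) = g ((b (e i) : V)) := rfl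
    have h3 := coe_mem_span_of h1
    rw [h2] at h3
    have h4 : (fun a => ((b a) : V)) '' {j | r j (e i) ∨ j = e i}
        = (fun i => ((b (e i)) : V)) '' {j | j ≤ i} := by
      rw [show {j | r j (e i) ∨ j = e i} = ⇑e '' {j | j ≤ i} by
        ext a
        simp only [Set.mem_setOf_eq, Set.mem_image]
        constructor
        · rintro (hr | rfl)
          · exact ⟨e.symm a, by rw [e.symm_apply_le]; exact le_of_lt ((hlt a (e i)).1 hr), by simp⟩
          · exact ⟨i, le_refl i, rfl⟩
        · rintro ⟨j, hj, rfl⟩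
          rcases lt_or_eq_of_le hj with hj' | rfl
          · exact Or.inl ((hlt _ _).2 (by simpa using hj'))
          · exact Or.inr rfl]
      rw [Set.image_image]
    rw [h4] at h3
    exact h3

lemma lemmaL (n : ℕ) : ∀ (U U' : Submodule k V) (f : V →ₗ[k] V),
    FiniteDimensional k ↥U → Module.finrank k ↥U ≤ n → U' ≤ U → (∀ x ∈ U', f x ∈ U) →
    (∀ W : Submodule k V, W ≤ U' → ∀ hW : ∀ w ∈ W, f w ∈ W, Triangularizable (f.restrict hW)) →
    ∃ (m : ℕ) (c : Fin m → V) (A : V →ₗ[k] V),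
      LinearIndependent k c ∧ span k (range c) = U ∧
      (∀ x ∈ U', A x = f x) ∧ (∀ i, A (c i) ∈ span k (c '' {j | j ≤ i})) := by
  induction n with
  | zero =>
    intro U U' f hfd hrk hle hfU' _
    have hU : U = ⊥ := by
      haveI := hfd
      have : Module.finrank k ↥U = 0 := Nat.le_zero.1 hrk
      exact Submodule.finrank_eq_zero.1 this
    subst hU
    have hU' : U' = ⊥ := le_bot_iff.1 hle
    subst hU'
    refine ⟨0, fun i => i.elim0, 0, linearIndependent_empty_type, ?_, ?_, fun i => i.elim0⟩
    · simp [Set.range_eq_empty]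
    · intro x hx
      rw [Submodule.mem_bot] at hx
      subst hx
      simp
  | succ n ih =>
    intro U U' f hfd hrk hle hfU' hyp
    haveI := hfd
    by_cases hU'U : U' = U
    · subst hU'U
      have hWinv : ∀ w ∈ U', f w ∈ U' := hfU'
      have htr := hyp U' le_rfl hWinv
      obtain ⟨m, c, hind, hspan, htri⟩ := finTriChain_of_triangularizable hfd f hWinv htr
      exact ⟨m, c, f, hind, hspan, fun x _ => rfl, htri⟩
    · have hlt : U' < U := lt_of_le_of_ne hle hU'U
      haveI : FiniteDimensional k ↥U' := Submodule.finiteDimensional_of_le hle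
      have hrk' : Module.finrank k ↥U' ≤ n := by
        have := Submodule.finrank_lt_finrank_of_lt hlt
        omega
      set U'' := U' ⊓ Submodule.comap f U' with hU''
      obtain ⟨m, c, A', hind, hspan, hAf, hAtri⟩ :=
        ih U' U'' f inferInstance hrk' inf_le_left (fun x hx => hx.2)
          (fun W hW hWinv => hyp W (hW.trans inf_le_left) hWinv)
      have hcU' : ∀ i, c i ∈ U' := fun i => hspan ▸ subset_span (mem_range_self i)
      have hA'U' : ∀ x ∈ U', A' x ∈ U' := by
        have hsle : span k (range c) ≤ Submodule.comap A' U' := by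
          rw [span_le]
          rintro y ⟨i, rfl⟩
          have h2 : span k (c '' {j | j ≤ i}) ≤ U' := by
            rw [← hspan]; exact span_mono (image_subset_range _ _)
          exact h2 (hAtri i)
        intro x hx
        exact hsle (by rw [hspan]; exact hx)
      set d : Fin m → V := fun i => f (c i) - A' (c i) with hd
      have hdU : ∀ i, d i ∈ U := fun i =>
        Submodule.sub_mem _ (hfU' _ (hcU' i)) (hle (hA'U' _ (hcU' i)))
      set D := span k (range d) with hD
      have hDU : D ≤ U := span_le.2 (by rintro y ⟨i, rfl⟩; exact hdU i)
      have hDdisj : D ⊓ U' = ⊥ := by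
        rw [eq_bot_iff]
        rintro x ⟨hx1, hx2⟩
        obtain ⟨g, hg⟩ := mem_span_range_iff_exists_fun k |>.1 hx1
        set u := ∑ i, g i • c i with hu
        have huU' : u ∈ U' := Submodule.sum_mem _ fun i _ => Submodule.smul_mem _ _ (hcU' i)
        have hx : x = f u - A' u := by
          rw [← hg, hu, map_sum, map_sum]
          rw [← Finset.sum_sub_distrib]
          congr 1
          funext i
          simp [hd, smul_sub]
        have hfu : f u ∈ U' := by
          have : f u = x + A' u := by rw [hx]; abel
          rw [this]
          exact Submodule.add_mem _ hx2 (hA'U' _ huU')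
        have huU'' : u ∈ U'' := ⟨huU', hfu⟩
        rw [Submodule.mem_bot]
        rw [hx, hAf u huU'']
        abel
      obtain ⟨Y, hDY, hYU, hYdisj, hYsup⟩ := exists_relcompl U D U' hDU hle hDdisj
      haveI : FiniteDimensional k ↥Y := Submodule.finiteDimensional_of_le hYU
      set q := Module.finrank k ↥Y with hq
      set bY := Module.finBasis k ↥Y with hbY
      set y : Fin q → V := fun j => ((bY j : V)) with hy
      have hindy : LinearIndependent k y := bY.linearIndependent.map' Y.subtype (Submodule.ker_subtype _)
      have hspany : span k (range y) = Y := by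
        have h1 : y = Y.subtype ∘ ⇑bY := rfl
        rw [h1, Set.range_comp, ← Submodule.map_span, bY.span_eq, Submodule.map_top,
          Submodule.range_subtype]
      have happ : Fin.append y c = (Sum.elim y c) ∘ ⇑finSumFinEquiv.symm := by
        funext x
        refine Fin.addCases (fun j => ?_) (fun j => ?_) x <;>
          simp [Fin.append_left, Fin.append_right]
      have hindsum : LinearIndependent k (Sum.elim y c) := by
        refine hindy.sum_type hind ?_
        rw [hspany, hspan, disjoint_iff, hYdisj]
      have hind' : LinearIndependent k (Fin.append y c) := by
        rw [happ]
        exact hindsum.comp _ finSumFinEquiv.symm.injective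
      have hspan' : span k (range (Fin.append y c)) = U := by
        rw [happ, Set.range_comp, finSumFinEquiv.symm.surjective.range_eq, Set.image_univ,
          Set.Sum.elim_range, Submodule.span_union, hspany, hspan, hYsup]
      obtain ⟨Z, hZcompl, hYZ⟩ := exists_compl_of_disjoint Y U' hYdisj
      set π := Submodule.linearProjOfIsCompl U' Z hZcompl with hπ
      set A : V →ₗ[k] V := f ∘ₗ U'.subtype ∘ₗ π with hA
      have hA1 : ∀ x ∈ U', A x = f x := by
        intro x hx
        have : π x = ⟨x, hx⟩ := Submodule.linearProjOfIsCompl_apply_left hZcompl ⟨x, hx⟩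
        simp [hA, this]
      refine ⟨q + m, Fin.append y c, A, hind', hspan', hA1, ?_⟩
      intro i
      refine Fin.addCases (fun j => ?_) (fun j => ?_) i
      · rw [Fin.append_left]
        have hyZ : y j ∈ Z := hYZ (hspany ▸ subset_span (mem_range_self j))
        have : π (y j) = 0 := Submodule.linearProjOfIsCompl_apply_right hZcompl ⟨y j, hyZ⟩
        rw [hA]
        simp [this]
      · rw [Fin.append_right]
        have h1 : A (c j) = f (c j) := hA1 _ (hcU' j)
        have h2 : f (c j) = d j + A' (c j) := by simp only [hd]; exact (sub_add_cancel _ _).symm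
        rw [h1, h2]
        refine Submodule.add_mem _ ?_ ?_
        · have hsub : Y ≤ span k (Fin.append y c '' {j' | j' ≤ Fin.natAdd q j}) := by
            rw [← hspany, span_le]
            rintro z ⟨j2, rfl⟩
            refine subset_span ⟨Fin.castAdd m j2, ?_, Fin.append_left y c j2⟩
            simp only [Set.mem_setOf_eq, Fin.le_def, Fin.coe_castAdd, Fin.coe_natAdd]
            omega
          exact hsub (hDY (subset_span (mem_range_self j)))
        · have hsub : span k (c '' {j' | j' ≤ j}) ≤
              span k (Fin.append y c '' {j' | j' ≤ Fin.natAdd q j}) := by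
            refine span_mono ?_
            rintro z ⟨j2, hj2, rfl⟩
            refine ⟨Fin.natAdd q j2, ?_, Fin.append_right y c j2⟩
            simp only [Set.mem_setOf_eq, Fin.le_def, Fin.coe_natAdd]
            exact Nat.add_le_add_left hj2 q
          exact hsub (hAtri j)

lemma triangularizable_restrict_s16 {S : Module.End k V} (hS : Triangularizable S)
    {W : Submodule k V} (hW : ∀ x ∈ W, S x ∈ W) : Triangularizable (S.restrict hW) := by
  classical
  obtain ⟨ι, r, b, hwo, htri⟩ := hS
  haveI := hwo
  letI : LinearOrder ι := IsWellOrder.linearOrder r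
  haveI : WellFoundedLT ι := ⟨hwo.wf⟩
  have hIic : ∀ i : ι, {j | r j i ∨ j = i} = Set.Iic i := by
    intro i; ext j
    simp only [Set.mem_setOf_eq, Set.mem_Iic]
    rw [le_iff_lt_or_eq]
    exact Iff.rfl
  have htri' : ∀ i, S (b i) ∈ span k (⇑b '' Set.Iic i) := fun i => (hIic i) ▸ htri i
  -- S preserves span of b over lower sets
  have hSIic : ∀ (i : ι), ∀ x ∈ span k (⇑b '' Set.Iic i), S x ∈ span k (⇑b '' Set.Iic i) := by
    intro i x hx
    refine Submodule.span_induction ?_ ?_ ?_ ?_ hx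
    · rintro y ⟨j, hj, rfl⟩
      exact span_mono (Set.image_mono (Set.Iic_subset_Iic.2 hj)) (htri' j)
    · simp
    · intro a c _ _ ha hc
      rw [map_add]; exact Submodule.add_mem _ ha hc
    · intro t a _ ha
      rw [map_smul]; exact Submodule.smul_mem _ _ ha
  set M : Set ι :=
    {i | ∃ v, v ∈ W ∧ v ≠ 0 ∧ ↑(b.repr v).support ⊆ Set.Iic i ∧ i ∈ (b.repr v).support}
    with hM
  have wspec : ∀ m : M, ∃ v, v ∈ W ∧ v ≠ 0 ∧ ↑(b.repr v).support ⊆ Set.Iic (m : ι) ∧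
      (m : ι) ∈ (b.repr v).support := fun m => m.2
  choose w hwW hwne hwsupp hwtop using wspec
  -- spanning claim
  have claimC : ∀ i : ι, ∀ v ∈ W, ↑(b.repr v).support ⊆ Set.Iic i →
      v ∈ span k (w '' {m : M | (m : ι) ≤ i}) := by
    intro i
    induction i using WellFoundedLT.induction with
    | ind i IH =>
      intro v hvW hsupp
      by_cases hv0 : v = 0
      · subst hv0; exact Submodule.zero_mem _
      · have hne : (b.repr v).support.Nonempty := by
          rw [Finsupp.support_nonempty_iff]
          exact fun h => hv0 (b.repr.map_eq_zero_iff.1 h)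
        set t := (b.repr v).support.max' hne with ht
        have htmem : t ∈ (b.repr v).support := Finset.max'_mem _ _
        have htle : t ≤ i := hsupp htmem
        have hsuppt : ↑(b.repr v).support ⊆ Set.Iic t := fun j hj =>
          Finset.le_max' _ j hj
        rcases lt_or_eq_of_le htle with hlt | rfl
        · exact span_mono (Set.image_mono fun m hm => le_of_lt (lt_of_le_of_lt hm hlt))
            (IH t hlt v hvW hsuppt)
        · -- t = i case: i is the top of v
          have hiM : t ∈ M := ⟨v, hvW, hv0, hsupp, htmem⟩
          set mi : M := ⟨t, hiM⟩ with hmi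
          have hwtopne : (b.repr (w mi)) t ≠ 0 := by
            have := hwtop mi
            rwa [Finsupp.mem_support_iff] at this
          set lam := (b.repr v) t / (b.repr (w mi)) t with hlam
          set v' := v - lam • w mi with hv'
          have hv'W : v' ∈ W := Submodule.sub_mem _ hvW (Submodule.smul_mem _ _ (hwW mi))
          have hreprv' : b.repr v' = b.repr v - lam • b.repr (w mi) := by
            rw [hv', map_sub, map_smul]
          have hv'top : (b.repr v') t = 0 := by
            rw [hreprv']
            simp only [Finsupp.sub_apply, Finsupp.smul_apply, smul_eq_mul]
            rw [hlam, div_mul_cancel₀ _ hwtopne]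
            ring
          have hsupp' : ↑(b.repr v').support ⊆ Set.Iic t := by
            intro j hj
            rw [hreprv'] at hj
            have hj' := Finsupp.support_sub (f := b.repr v) (g := lam • b.repr (w mi)) hj
            rcases Finset.mem_union.1 hj' with h | h
            · exact hsuppt h
            · have := Finsupp.support_smul (b := lam) (g := b.repr (w mi)) h
              exact hwsupp mi this
          have hmile : mi ∈ {m : M | (m : ι) ≤ t} := le_refl t
          by_cases hv'0 : v' = 0
          · have hveq : v = lam • w mi := by
              rw [hv'] at hv'0
              exact sub_eq_zero.1 hv'0
            rw [hveq]
            exact Submodule.smul_mem _ _ (subset_span (Set.mem_image_of_mem _ hmile))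
          · have hne' : (b.repr v').support.Nonempty := by
              rw [Finsupp.support_nonempty_iff]
              exact fun h => hv'0 (b.repr.map_eq_zero_iff.1 h)
            set t' := (b.repr v').support.max' hne' with ht'
            have ht'mem : t' ∈ (b.repr v').support := Finset.max'_mem _ _
            have ht'le : t' ≤ t := hsupp' ht'mem
            have ht'ne : t' ≠ t := by
              intro h
              rw [h, Finsupp.mem_support_iff] at ht'mem
              exact ht'mem hv'top
            have ht'lt : t' < t := lt_of_le_of_ne ht'le ht'ne
            have hsuppt' : ↑(b.repr v').support ⊆ Set.Iic t' := fun j hj =>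
              Finset.le_max' _ j hj
            have hv'mem := IH t' ht'lt v' hv'W hsuppt'
            have hv'mem' : v' ∈ span k (w '' {m : M | (m : ι) ≤ t}) :=
              span_mono (Set.image_mono fun m hm => le_of_lt (lt_of_le_of_lt hm ht'lt)) hv'mem
            have : v = v' + lam • w mi := by rw [hv']; abel
            rw [this]
            exact Submodule.add_mem _ hv'mem'
              (Submodule.smul_mem _ _ (subset_span (Set.mem_image_of_mem _ hmile)))
  -- linear independence of w
  have hindw : LinearIndependent k w := by
    rw [linearIndependent_iff']
    intro s g hsum i0 hi0
    by_contra hg0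
    set s' := s.filter (fun m => g m ≠ 0) with hs'
    have hs'ne : s'.Nonempty := ⟨i0, Finset.mem_filter.2 ⟨hi0, hg0⟩⟩
    have hsim : (s'.image (fun m : M => (m : ι))).Nonempty := hs'ne.image _
    set t := (s'.image (fun m : M => (m : ι))).max' hsim with ht
    obtain ⟨m0, hm0s', hm0t⟩ := Finset.mem_image.1 ((s'.image (fun m : M => (m : ι))).max'_mem hsim)
    have hm0s : m0 ∈ s := (Finset.mem_filter.1 hm0s').1
    have hgm0 : g m0 ≠ 0 := (Finset.mem_filter.1 hm0s').2
    have heval : ∑ j ∈ s, g j * (b.repr (w j)) t = 0 := by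
      have := congrArg (fun z => (b.repr z) t) hsum
      simpa [map_sum, map_smul] using this
    have heval' : ∑ j ∈ s', g j * (b.repr (w j)) t = 0 := by
      rw [← heval]
      apply Finset.sum_subset (Finset.filter_subset _ _)
      intro j hj hjs'
      have : g j = 0 := by
        by_contra h
        exact hjs' (Finset.mem_filter.2 ⟨hj, h⟩)
      simp [this]
    have heval'' : g m0 * (b.repr (w m0)) t = 0 := by
      rw [← heval']
      symm
      apply Finset.sum_eq_single m0
      · intro j hj hjne
        have hjle : (j : ι) ≤ t := Finset.le_max' _ _ (Finset.mem_image_of_mem _ hj)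
        have hjlt : (j : ι) < t := lt_of_le_of_ne hjle (fun h => hjne (Subtype.ext (h.trans hm0t.symm)))
        have : t ∉ (b.repr (w j)).support := by
          intro hmem
          have := hwsupp j hmem
          rw [Set.mem_Iic] at this
          exact absurd this (not_le.2 hjlt)
        rw [Finsupp.notMem_support_iff] at this
        simp [this]
      · intro h
        exact absurd hm0s' h
    have hwm0t : (b.repr (w m0)) t ≠ 0 := by
      have := hwtop m0
      rw [hm0t] at this
      rwa [Finsupp.mem_support_iff] at this
    exact hgm0 (by
      rcases mul_eq_zero.1 heval'' with h | h
      · exact h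
      · exact absurd h hwm0t)
  -- build the basis of W
  set w2 : M → ↥W := fun m => ⟨w m, hwW m⟩ with hw2
  have hindw2 : LinearIndependent k w2 :=
    LinearIndependent.of_comp W.subtype (by exact hindw)
  have hspanw2 : ⊤ ≤ span k (Set.range w2) := by
    intro x _
    rw [← Set.image_univ]
    apply mem_span_coe_of
    by_cases hx0 : (x : V) = 0
    · rw [hx0]; exact Submodule.zero_mem _
    · have hne : (b.repr (x : V)).support.Nonempty := by
        rw [Finsupp.support_nonempty_iff]
        exact fun h => hx0 (b.repr.map_eq_zero_iff.1 h)
      set t := (b.repr (x : V)).support.max' hne with ht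
      have hsupp : ↑(b.repr (x : V)).support ⊆ Set.Iic t := fun j hj => Finset.le_max' _ j hj
      have := claimC t (x : V) x.2 hsupp
      exact span_mono (Set.image_mono (Set.subset_univ _)) this
  set bW : Module.Basis ↥M k ↥W := Module.Basis.mk hindw2 hspanw2 with hbW
  refine ⟨↥M, Subrel r (· ∈ M), bW, inferInstance, ?_⟩
  intro m
  rw [show ⇑bW = w2 from Module.Basis.coe_mk hindw2 hspanw2]
  apply mem_span_coe_of
  have hcoe : ((S.restrict hW) (w2 m) : V) = S (w m) := rfl
  rw [hcoe]
  have hmem : S (w m) ∈ span k (⇑b '' Set.Iic (m : ι)) := by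
    apply hSIic
    rw [Module.Basis.mem_span_image]
    exact hwsupp m
  have hsupp : ↑(b.repr (S (w m))).support ⊆ Set.Iic (m : ι) := by
    rwa [← Module.Basis.mem_span_image]
  have hSW : S (w m) ∈ W := hW _ (hwW m)
  have := claimC (m : ι) (S (w m)) hSW hsupp
  have hseteq : {j : M | (j : ι) ≤ (m : ι)} = {j : M | Subrel r (· ∈ M) j m ∨ j = m} := by
    ext j
    simp only [Set.mem_setOf_eq]
    rw [le_iff_lt_or_eq]
    constructor
    · rintro (h | h)
      · exact Or.inl h
      · exact Or.inr (Subtype.ext h)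
    · rintro (h | h)
      · exact Or.inl h
      · exact Or.inr (congrArg _ h)
  rw [hseteq] at this
  have : S (w m) ∈ span k ((fun a => ((w2 a : V))) '' {j : M | Subrel r (· ∈ M) j m ∨ j = m}) := this
  exact this

lemma exists_triangularizable_agree (T : Module.End k V)
    (hyp : ∀ (W : Submodule k V) (hW : ∀ v ∈ W, T v ∈ W), FiniteDimensional k W →
      Triangularizable (T.restrict hW))
    (U : Submodule k V) (hfd : FiniteDimensional k ↥U) :
    ∃ S : Module.End k V, Triangularizable S ∧ ∀ x ∈ U, S x = T x := by
  classical
  set U'' := U ⊓ Submodule.comap T U with hU''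
  obtain ⟨m, c, A', hind, hspan, hAf, hAtri⟩ :=
    lemmaL (Module.finrank k ↥U) U U'' T hfd le_rfl inf_le_left (fun x hx => hx.2)
      (fun W hW hWinv => by
        haveI : FiniteDimensional k ↥W :=
          Submodule.finiteDimensional_of_le (hW.trans inf_le_left)
        exact hyp W hWinv inferInstance)
  have hcU : ∀ i, c i ∈ U := fun i => hspan ▸ subset_span (mem_range_self i)
  have hA'U : ∀ x ∈ U, A' x ∈ U := by
    have hsle : span k (range c) ≤ Submodule.comap A' U := by
      rw [span_le]
      rintro y ⟨i, rfl⟩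
      have h2 : span k (c '' {j | j ≤ i}) ≤ U := by
        rw [← hspan]; exact span_mono (image_subset_range _ _)
      exact h2 (hAtri i)
    intro x hx
    exact hsle (by rw [hspan]; exact hx)
  set d : Fin m → V := fun i => T (c i) - A' (c i) with hd
  set D := span k (range d) with hD
  have hDdisj : D ⊓ U = ⊥ := by
    rw [eq_bot_iff]
    rintro x ⟨hx1, hx2⟩
    obtain ⟨g, hg⟩ := mem_span_range_iff_exists_fun k |>.1 hx1
    set u := ∑ i, g i • c i with hu
    have huU : u ∈ U := Submodule.sum_mem _ fun i _ => Submodule.smul_mem _ _ (hcU i)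
    have hx : x = T u - A' u := by
      rw [← hg, hu, map_sum, map_sum, ← Finset.sum_sub_distrib]
      congr 1
      funext i
      simp [hd, smul_sub]
    have hTu : T u ∈ U := by
      have : T u = x + A' u := by rw [hx]; abel
      rw [this]
      exact Submodule.add_mem _ hx2 (hA'U _ huU)
    have huU'' : u ∈ U'' := ⟨huU, hTu⟩
    rw [Submodule.mem_bot, hx, hAf u huU'']
    abel
  obtain ⟨Z, hZcompl, hDZ⟩ := exists_compl_of_disjoint D U hDdisj
  set bZ := Module.Basis.ofVectorSpace k ↥Z with hbZ
  set y : ↥(Module.Basis.ofVectorSpaceIndex k ↥Z) → V := fun j => ((bZ j : V)) with hy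
  have hindy : LinearIndependent k y :=
    bZ.linearIndependent.map' Z.subtype (Submodule.ker_subtype _)
  have hspany : span k (range y) = Z := by
    have h1 : y = Z.subtype ∘ ⇑bZ := rfl
    rw [h1, Set.range_comp, ← Submodule.map_span, bZ.span_eq, Submodule.map_top,
      Submodule.range_subtype]
  set c2 : ULift.{v} (Fin m) → V := fun i => c i.down with hc2
  have hindc2 : LinearIndependent k c2 :=
    hind.comp ULift.down (fun a b h => ULift.ext _ _ h)
  have hrangec2 : range c2 = range c := by
    ext x
    constructor
    · rintro ⟨i, rfl⟩; exact ⟨i.down, rfl⟩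
    · rintro ⟨i, rfl⟩; exact ⟨ULift.up i, rfl⟩
  set vfun : (↥(Module.Basis.ofVectorSpaceIndex k ↥Z)) ⊕ (ULift.{v} (Fin m)) → V :=
    Sum.elim y c2 with hvfun
  have hindv : LinearIndependent k vfun := by
    refine hindy.sum_type hindc2 ?_
    rw [hspany, hrangec2, hspan]
    exact hZcompl.disjoint.symm
  have hspanv : ⊤ ≤ span k (range vfun) := by
    rw [hvfun, Set.Sum.elim_range, Submodule.span_union, hspany, hrangec2, hspan]
    rw [sup_comm]
    exact le_of_eq (codisjoint_iff.1 hZcompl.codisjoint).symm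
  set bV : Module.Basis _ k V := Module.Basis.mk hindv hspanv with hbV
  have hbVapp : ⇑bV = vfun := Module.Basis.coe_mk hindv hspanv
  set S : Module.End k V :=
    bV.constr k (Sum.elim (fun _ => (0 : V)) (fun i => T (c i.down))) with hS
  have hSc : ∀ i : Fin m, S (c i) = T (c i) := by
    intro i
    have h1 : c i = bV (Sum.inr (ULift.up i)) := by rw [hbVapp]; rfl
    conv_lhs => rw [h1]
    rw [hS, Module.Basis.constr_basis]
    rfl
  have hSU : ∀ x ∈ U, S x = T x := by
    intro x hx
    rw [← hspan] at hx
    refine Submodule.span_induction ?_ ?_ ?_ ?_ hx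
    · rintro z ⟨i, rfl⟩; exact hSc i
    · simp
    · intro a b _ _ ha hb; rw [map_add, map_add, ha, hb]
    · intro t a _ ha; rw [map_smul, map_smul, ha]
  refine ⟨S, ?_, hSU⟩
  -- triangularizability of S
  set r2 : ULift.{v} (Fin m) → ULift.{v} (Fin m) → Prop := fun a b => a.down < b.down with hr2
  haveI h1 : IsTrichotomous _ r2 := ⟨fun a b hab hba => by
    rcases lt_trichotomy a.down b.down with h | h | h
    · exact absurd h hab
    · exact ULift.ext _ _ h
    · exact absurd h hba⟩
  haveI h2 : IsTrans _ r2 := ⟨fun a b c hab hbc => lt_trans hab hbc⟩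
  haveI h3 : IsWellFounded _ r2 := ⟨InvImage.wf ULift.down (wellFounded_lt)⟩
  haveI hwo2 : IsWellOrder _ r2 := ⟨⟩
  refine ⟨_, Sum.Lex (WellOrderingRel) r2, bV, inferInstance, ?_⟩
  rintro (z | j)
  · have hval : S (bV (Sum.inl z)) = 0 := by
      rw [hS, Module.Basis.constr_basis]
      rfl
    rw [hval]
    exact Submodule.zero_mem _
  · have hZle : Z ≤ span k (⇑bV '' {j' | Sum.Lex WellOrderingRel r2 j' (Sum.inr j) ∨ j' = Sum.inr j}) := by
      refine le_trans (le_of_eq hspany.symm) ?_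
      rw [span_le]
      rintro x ⟨z, rfl⟩
      refine subset_span ⟨Sum.inl z, Or.inl (Sum.Lex.sep _ _), ?_⟩
      rw [hbVapp]; rfl
    have hcle : span k (c '' {j' | j' ≤ j.down}) ≤
        span k (⇑bV '' {j' | Sum.Lex WellOrderingRel r2 j' (Sum.inr j) ∨ j' = Sum.inr j}) := by
      refine span_mono ?_
      rintro x ⟨j2, hj2, rfl⟩
      refine ⟨Sum.inr (ULift.up j2), ?_, by rw [hbVapp]; rfl⟩
      have hj2' : j2 ≤ j.down := hj2
      rcases lt_or_eq_of_le hj2' with h | h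
      · exact Or.inl (Sum.Lex.inr h)
      · exact Or.inr (by rw [h])
    have hval : S (bV (Sum.inr j)) = T (c j.down) := by
      rw [hS, Module.Basis.constr_basis]
      rfl
    rw [hval, show T (c j.down) = d j.down + A' (c j.down) by
      simp only [hd]; exact (sub_add_cancel _ _).symm]
    refine Submodule.add_mem _ ?_ ?_
    · exact hZle (hDZ (subset_span (mem_range_self j.down)))
    · exact hcle (hAtri j.down)

end TriangularizationProof

/-- `T` lies in the closure (in the function topology) of the set of triangularizable
transformations iff the restriction of `T` to every finite-dimensional `T`-invariant subspace
is triangularizable. -/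
theorem mem_closure_triangularizable_iff
    {k : Type u} {V : Type v} [Field k] [AddCommGroup V] [Module k V]
    (T : Module.End k V) :
    T ∈ @closure _ (endFunctionTopology k V) {S : Module.End k V | Triangularizable S} ↔
      ∀ (W : Submodule k V) (hW : ∀ v ∈ W, T v ∈ W), FiniteDimensional k W →
        Triangularizable (T.restrict hW) := by
  classical
  letI tV : TopologicalSpace V := ⊥
  haveI hdV : DiscreteTopology V := ⟨rfl⟩
  letI tE : TopologicalSpace (Module.End k V) := endFunctionTopology k V
  constructor
  · intro h W hW hfd
    obtain ⟨s, hsfin, hsspan⟩ := Submodule.fg_def.1 ((Submodule.fg_iff_finiteDimensional W).2 hfd)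
    set O : Set (Module.End k V) := {S | ∀ v ∈ s, S v = T v} with hO
    have hOopen : IsOpen O := by
      have : O = (fun f : Module.End k V => (f : V → V)) ⁻¹'
          (⋂ v ∈ s, (fun g : V → V => g v) ⁻¹' {T v}) := by
        ext S
        simp [hO]
      rw [this]
      apply IsOpen.preimage ?_ ?_
      · exact continuous_induced_dom
      · exact hsfin.isOpen_biInter fun v _ =>
          (continuous_apply v).isOpen_preimage _ (isOpen_discrete _)
    have hTO : T ∈ O := fun v _ => rfl
    obtain ⟨S, hSO, hStri⟩ := mem_closure_iff.1 h O hOopen hTO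
    have hST : ∀ x ∈ W, S x = T x := by
      intro x hx
      rw [← hsspan] at hx
      refine Submodule.span_induction ?_ ?_ ?_ ?_ hx
      · intro v hv; exact hSO v hv
      · simp
      · intro a b _ _ ha hb; rw [map_add, map_add, ha, hb]
      · intro t a _ ha; rw [map_smul, map_smul, ha]
    have hSW : ∀ x ∈ W, S x ∈ W := fun x hx => (hST x hx) ▸ hW x hx
    have hres := triangularizable_restrict_s16 hStri hSW
    have heq : S.restrict hSW = T.restrict hW := by
      apply LinearMap.ext
      intro x
      apply Subtype.ext
      simp only [LinearMap.restrict_apply]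
      exact hST x x.2
    rwa [heq] at hres
  · intro hyp
    rw [mem_closure_iff]
    intro O hOopen hTO
    obtain ⟨O', hO'open, hO'eq⟩ := isOpen_induced_iff.1 hOopen
    rw [← hO'eq] at hTO
    have hO'nhds : O' ∈ nhds (fun v => T v : V → V) := hO'open.mem_nhds hTO
    rw [nhds_pi] at hO'nhds
    obtain ⟨I, hIfin, t, htv, hsub⟩ := Filter.mem_pi.1 hO'nhds
    have htv' : ∀ v, T v ∈ t v := by
      intro v
      have := htv v
      rw [nhds_discrete] at this
      exact this
    haveI hUfd : FiniteDimensional k ↥(Submodule.span k I) := FiniteDimensional.span_of_finite k hIfin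
    obtain ⟨S, hStri, hSU⟩ := exists_triangularizable_agree T hyp (Submodule.span k I) hUfd
    refine ⟨S, ?_, hStri⟩
    rw [← hO'eq]
    apply hsub
    rw [Set.mem_pi]
    intro v hv
    show S v ∈ t v
    rw [hSU v (Submodule.subset_span hv)]
    exact htv' v
end

section
/- Let k be an algebraically closed field and V a k-vector space, and give End_k(V) the function topology. Then the set of triangularizable transformations of V is dense in End_k(V), i.e., its closure is all of End_k(V). -/
universe u v

open Polynomial

set_option maxHeartbeats 1000000 in
/-- Every endomorphism of a finite-dimensional space over an algebraically closed field
has a triangular basis indexed by `Fin n`. -/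
lemma exists_fin_triangular_basis {k : Type u} [Field k] [IsAlgClosed k] :
    ∀ (n : ℕ) {V : Type v} [AddCommGroup V] [Module k V] [FiniteDimensional k V],
      Module.finrank k V = n → ∀ f : Module.End k V,
      ∃ b : Module.Basis (Fin n) k V, ∀ i, f (b i) ∈ Submodule.span k (⇑b '' {j | j ≤ i}) := by
  intro n
  induction n with
  | zero =>
    intro V _ _ _ h f
    have : Subsingleton V := (Module.finrank_zero_iff (R := k)).mp h
    exact ⟨Module.Basis.empty V, fun i => i.elim0⟩
  | succ n ih =>
    intro V _ _ _ h f
    have : Nontrivial V := Module.finrank_pos_iff.mp (by rw [h]; exact n.succ_pos)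
    obtain ⟨μ, hμ⟩ := Module.End.exists_eigenvalue f
    obtain ⟨v, hv⟩ := hμ.exists_hasEigenvector
    have hv0 : v ≠ 0 := hv.right
    have hfv : f v = μ • v := hv.apply_eq_smul
    set L : Submodule k V := k ∙ v with hL
    have hfL : ∀ x ∈ L, f x ∈ L := by
      intro x hx
      obtain ⟨a, rfl⟩ := Submodule.mem_span_singleton.mp hx
      rw [map_smul, hfv]
      exact Submodule.smul_mem _ _ (Submodule.smul_mem _ _ (Submodule.mem_span_singleton_self v))
    obtain ⟨C, hC⟩ := Submodule.exists_isCompl L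
    have hQrank : Module.finrank k (V ⧸ L) = n := by
      have h1 := Submodule.finrank_quotient_add_finrank L
      have h2 : Module.finrank k L = 1 := finrank_span_singleton hv0
      omega
    set g : Module.End k (V ⧸ L) := Submodule.mapQ L L f hfL with hg
    obtain ⟨cQ, hcQ⟩ := ih hQrank g
    set e := Submodule.quotientEquivOfIsCompl L C hC with he
    set bC : Module.Basis (Fin n) k C := cQ.map e with hbC
    have hmk : ∀ j, Submodule.mkQ L ((bC j : V)) = cQ j := by
      intro j
      have : (Submodule.mkQ L) ((e (cQ j) : V)) = cQ j :=
        Submodule.mk_quotientEquivOfIsCompl_apply hC (cQ j)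
      simpa [hbC, Module.Basis.map_apply] using this
    have hli : ∀ (c : k), ∀ x ∈ C, c • v + x = 0 → c = 0 := by
      intro c x hx hcx
      have h1 : c • v = -x := by rw [eq_neg_iff_add_eq_zero]; exact hcx
      have h2 : c • v ∈ L ⊓ C := ⟨Submodule.smul_mem _ _ (Submodule.mem_span_singleton_self v),
        h1 ▸ neg_mem hx⟩
      rw [hC.inf_eq_bot, Submodule.mem_bot, smul_eq_zero] at h2
      exact h2.resolve_right hv0
    have hsp : ∀ z : V, ∃ c : k, z + c • v ∈ C := by
      intro z
      have hz : z ∈ L ⊔ C := by rw [hC.sup_eq_top]; trivial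
      obtain ⟨l, hl, c', hc', rfl⟩ := Submodule.mem_sup.mp hz
      obtain ⟨a, rfl⟩ := Submodule.mem_span_singleton.mp hl
      exact ⟨-a, by simpa using hc'⟩
    obtain ⟨b, hb⟩ : ∃ b : Module.Basis (Fin (n + 1)) k V, ⇑b = Fin.cons v ((↑) ∘ bC) :=
      ⟨Module.Basis.mkFinCons v bC hli hsp, Module.Basis.coe_mkFinCons v bC hli hsp⟩
    have hb0 : b 0 = v := by rw [hb]; rfl
    have hbsucc : ∀ j : Fin n, b j.succ = ↑(bC j) := by
      intro j; rw [hb]; simp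
    refine ⟨b, ?_⟩
    intro i
    refine Fin.cases ?_ ?_ i
    · rw [hb0, hfv]
      exact Submodule.smul_mem _ _ (Submodule.subset_span ⟨0, Set.mem_setOf.mpr le_rfl, hb0⟩)
    · intro j
      set P := Submodule.span k (⇑b '' {i' | i' ≤ j.succ}) with hP
      have hvP : v ∈ P := Submodule.subset_span ⟨0, Set.mem_setOf.mpr (Fin.zero_le _), hb0⟩
      have hLP : L ≤ P := by
        rw [hL]
        exact Submodule.span_le.mpr (Set.singleton_subset_iff.mpr hvP)
      have hmem : Submodule.mkQ L (f (b j.succ)) ∈ Submodule.map (Submodule.mkQ L) P := by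
        have e1 : Submodule.mkQ L (f (b j.succ)) = g (cQ j) := by
          rw [hbsucc j, ← hmk j, hg]
          simp only [Submodule.mkQ_apply, Submodule.mapQ_apply]
        rw [e1]
        refine Submodule.span_le.mpr ?_ (hcQ j)
        rintro x ⟨j', hj', rfl⟩
        have : cQ j' = Submodule.mkQ L (b j'.succ) := by rw [hbsucc j', hmk j']
        rw [this]
        exact Submodule.mem_map_of_mem
          (Submodule.subset_span ⟨j'.succ, Fin.succ_le_succ_iff.mpr hj', rfl⟩)
      obtain ⟨y, hyP, hy⟩ := hmem
      have hdiff : f (b j.succ) - y ∈ L := by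
        rw [Submodule.mkQ_apply, Submodule.mkQ_apply] at hy
        exact (Submodule.Quotient.eq L).mp hy.symm
      have := add_mem (hLP hdiff) hyP
      simpa using this

/-- An endomorphism whose range lies in a finite-dimensional submodule is triangularizable. -/
lemma triangularizable_of_range_le {k : Type u} {V : Type v} [Field k] [IsAlgClosed k]
    [AddCommGroup V] [Module k V] {T : Module.End k V} (U : Submodule k V)
    [FiniteDimensional k U] (hr : LinearMap.range T ≤ U) : Triangularizable T := by
  classical
  have hTU : ∀ x ∈ U, T x ∈ U := fun x _ => hr (LinearMap.mem_range_self T x)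
  set g : Module.End k U := LinearMap.restrict T hTU with hg
  obtain ⟨n, b, hb⟩ : ∃ (n : ℕ) (b : Module.Basis (Fin n) k ↥U),
      ∀ i, g (b i) ∈ Submodule.span k (⇑b '' {j | j ≤ i}) :=
    ⟨Module.finrank k ↥U, exists_fin_triangular_basis (k := k) (Module.finrank k ↥U) rfl g⟩
  set v : Fin n → V := fun i => ((b i : U) : V) with hv
  have hvinj : Function.Injective v := by
    intro i j hij
    exact b.injective (Subtype.ext hij)
  have hli0 : LinearIndependent k v :=
    b.linearIndependent.map' U.subtype (Submodule.ker_subtype U)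
  set s : Set V := Set.range v with hs
  have hlis : LinearIndepOn k id s := (linearIndepOn_id_range_iff hvinj).mpr hli0
  set t : Set V := hlis.extend (Set.subset_univ s) with ht
  have hst : s ⊆ t := hlis.subset_extend _
  set bT : Module.Basis t k V := Module.Basis.extend hlis with hbT
  have hbTcoe : ⇑bT = ((↑) : t → V) := Module.Basis.coe_extend hlis
  set e1 : Fin n ≃ s := Equiv.ofInjective v hvinj with he1
  set φ : (Fin n ⊕ ↥(t \ s)) ≃ t :=
    (Equiv.sumCongr e1 (Equiv.refl ↥(t \ s))).trans (Equiv.Set.sumDiffSubset hst) with hφ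
  set c : Module.Basis (Fin n ⊕ ↥(t \ s)) k V := bT.reindex φ.symm with hc
  have hccoe : ∀ x, c x = ((φ x : V)) := by
    intro x
    rw [hc, Module.Basis.reindex_apply, Equiv.symm_symm, hbTcoe]
  have hcinl : ∀ i : Fin n, c (Sum.inl i) = v i := by
    intro i
    rw [hccoe]
    rfl
  have hcinr : ∀ x : ↥(t \ s), c (Sum.inr x) = (x : V) := by
    intro x
    rw [hccoe]
    rfl
  set r : (Fin n ⊕ ↥(t \ s)) → (Fin n ⊕ ↥(t \ s)) → Prop :=
    Sum.Lex (· < ·) WellOrderingRel with hr2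
  have hwo : IsWellOrder _ r := by
    rw [hr2]; infer_instance
  refine ⟨Fin n ⊕ ↥(t \ s), r, c, hwo, ?_⟩
  have hUspan : U = Submodule.span k (Set.range v) := by
    have : Submodule.map U.subtype (Submodule.span k (Set.range ⇑b)) =
        Submodule.span k (Set.range v) := by
      rw [Submodule.map_span]
      congr 1
      rw [← Set.range_comp]
      rfl
    rw [b.span_eq, Submodule.map_subtype_top] at this
    exact this.symm ▸ rfl
  rintro (j | x)
  · -- triangular part
    have h1 : T (c (Sum.inl j)) = ((g (b j) : U) : V) := by
      rw [hcinl j, hv]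
      exact (LinearMap.restrict_coe_apply T hTU (b j)).symm
    rw [h1]
    have h2 := hb j
    have h3 : ((g (b j) : U) : V) ∈
        Submodule.map U.subtype (Submodule.span k (⇑b '' {j' | j' ≤ j})) :=
      Submodule.mem_map_of_mem h2
    rw [Submodule.map_span] at h3
    refine Submodule.span_le.mpr ?_ h3
    rintro y ⟨_, ⟨j', hj', rfl⟩, rfl⟩
    refine Submodule.subset_span ⟨Sum.inl j', ?_, hcinl j'⟩
    rcases lt_or_eq_of_le (Set.mem_setOf.mp hj') with hlt | heq
    · exact Or.inl (Sum.Lex.inl hlt)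
    · exact Or.inr (by rw [heq])
  · -- extension part
    have h1 : T (c (Sum.inr x)) ∈ U := hr (LinearMap.mem_range_self T _)
    rw [hUspan] at h1
    refine Submodule.span_le.mpr ?_ h1
    rintro y ⟨j', rfl⟩
    exact Submodule.subset_span ⟨Sum.inl j', Or.inl (Sum.Lex.sep _ _), hcinl j'⟩

/-- Over an algebraically closed field, the set of triangularizable transformations is dense
in `End_k(V)` with the function topology. -/
theorem closure_triangularizable_eq_univ
    {k : Type u} {V : Type v} [Field k] [IsAlgClosed k] [AddCommGroup V] [Module k V] :
    @closure _ (endFunctionTopology k V) {S : Module.End k V | Triangularizable S} =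
      Set.univ := by
  classical
  letI : TopologicalSpace V := ⊥
  letI : TopologicalSpace (Module.End k V) := endFunctionTopology k V
  rw [Set.eq_univ_iff_forall]
  intro T
  rw [mem_closure_iff]
  intro o ho hTo
  obtain ⟨O, hO, rfl⟩ := isOpen_induced_iff.mp ho
  obtain ⟨F, u, hu, hsub⟩ := isOpen_pi_iff.mp hO (⇑T) hTo
  set W : Submodule k V := Submodule.span k (F : Set V) with hW
  obtain ⟨C, hC⟩ := Submodule.exists_isCompl W
  set π := W.projectionOnto C hC with hπ
  set S : Module.End k V := T ∘ₗ W.subtype ∘ₗ π with hS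
  set U : Submodule k V := W ⊔ Submodule.map T W with hU
  haveI : FiniteDimensional k U := by
    haveI : FiniteDimensional k W :=
      inferInstanceAs (FiniteDimensional k (Submodule.span k ((F : Set V))))
    haveI : FiniteDimensional k (Submodule.map T W) := Module.Finite.map W T
    infer_instance
  have hrange : LinearMap.range S ≤ U := by
    rintro _ ⟨x, rfl⟩
    have : S x = T ((π x : W) : V) := rfl
    rw [this]
    exact le_sup_right (α := Submodule k V) (Submodule.mem_map_of_mem (π x).2)
  have hStri : Triangularizable S := triangularizable_of_range_le U hrange
  have hagree : ∀ x ∈ F, S x = T x := by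
    intro x hx
    have hxW : x ∈ W := Submodule.subset_span hx
    have : S x = T ((π x : W) : V) := rfl
    rw [this, Submodule.projectionOnto_apply_left hC ⟨x, hxW⟩]
  refine ⟨S, hsub ?_, hStri⟩
  rw [Set.mem_pi]
  intro x hx
  show S x ∈ u x
  rw [hagree x hx]
  exact (hu x hx).2
end
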